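/- arXiv:0805.2306 — 7 statements merged into one kernel-verified Lean document; each statement's English description precedes it below -/
import Mathlib

section
/- Let K be a field, n ≥ 2, let v_1,…,v_m be monomials in K[x_2,…,x_n] (i.e. monomials of S = K[x_1,…,x_n] not involving x_1), and let a be a positive integer. Then the monomial ideals I = (x_1^a v_1, v_2, …, v_m) and I' = (x_1^{a+1} v_1, v_2, …, v_m) of S satisfy sdepth(I) = sdepth(I'). -/
open MvPolynomial

/-- The Stanley space `u K[Z]`: the `K`-span of all monomials `x^(u+τ)` with
`supp τ ⊆ Z`. -/
noncomputable def StanleySpace (K : Type*) [Field K] {n : ℕ} (u : Fin n →₀ ℕ) (Z : Finset (Fin n)) :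
    Submodule K (MvPolynomial (Fin n) K) :=
  Submodule.span K {p | ∃ τ : Fin n →₀ ℕ, (τ.support : Set (Fin n)) ⊆ Z ∧
    p = monomial (u + τ) (1 : K)}

/-- A Stanley decomposition of a monomial ideal `I`: a finite family of Stanley spaces
`u_i K[Z_i]` with `u_i` a monomial of `I`, whose internal direct sum is `I`
(as a `K`-vector space). -/
structure StanleyDecomposition (K : Type*) [Field K] {n : ℕ}
    (I : Ideal (MvPolynomial (Fin n) K)) where
  r : ℕ
  rpos : 0 < r
  u : Fin r → (Fin n →₀ ℕ)
  Z : Fin r → Finset (Fin n)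
  mem : ∀ i, monomial (u i) (1 : K) ∈ I
  isSup : Submodule.restrictScalars K I = ⨆ i, StanleySpace K (u i) (Z i)
  indep : iSupIndep fun i => StanleySpace K (u i) (Z i)

/-- `sdepth 𝒟 = min_i |Z_i|`. -/
def StanleyDecomposition.sdepth {K : Type*} [Field K] {n : ℕ}
    {I : Ideal (MvPolynomial (Fin n) K)} (D : StanleyDecomposition K I) : ℕ :=
  Finset.univ.inf' ⟨⟨0, D.rpos⟩, Finset.mem_univ _⟩ fun i => (D.Z i).card

/-- The Stanley depth of a monomial ideal: the maximum of `sdepth 𝒟` over all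
Stanley decompositions `𝒟` of `I`. -/
noncomputable def Ideal.sdepth (K : Type*) [Field K] {n : ℕ}
    (I : Ideal (MvPolynomial (Fin n) K)) : ℕ :=
  sSup (Set.range fun D : StanleyDecomposition K I => D.sdepth)

namespace SdepthAux

variable {K : Type*} [Field K] {n : ℕ}

/-- Exponent set of a Stanley space, pointwise form. -/
def expSet (u : Fin n →₀ ℕ) (Z : Finset (Fin n)) : Set (Fin n →₀ ℕ) :=
  {c | ∀ j, u j ≤ c j ∧ (j ∉ Z → c j = u j)}

lemma self_mem_expSet (u : Fin n →₀ ℕ) (Z : Finset (Fin n)) : u ∈ expSet u Z :=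
  fun _ => ⟨le_rfl, fun _ => rfl⟩

lemma stanleySet_eq (u : Fin n →₀ ℕ) (Z : Finset (Fin n)) :
    {p : MvPolynomial (Fin n) K | ∃ τ : Fin n →₀ ℕ, (τ.support : Set (Fin n)) ⊆ Z ∧
      p = monomial (u + τ) (1 : K)} = (fun c => monomial c (1:K)) '' expSet u Z := by
  ext p
  constructor
  · rintro ⟨τ, hτ, rfl⟩
    refine ⟨u + τ, fun j => ⟨by simp, fun hj => ?_⟩, rfl⟩
    have : τ j = 0 := Finsupp.notMem_support_iff.mp (fun hs => hj (hτ hs))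
    simp [Finsupp.add_apply, this]
  · rintro ⟨c, hc, rfl⟩
    refine ⟨c - u, ?_, ?_⟩
    · intro j hj
      rw [Finset.mem_coe, Finsupp.mem_support_iff, Finsupp.tsub_apply] at hj
      by_contra hjZ
      rw [(hc j).2 hjZ] at hj
      omega
    · congr 1
      ext j
      have := (hc j).1
      simp only [Finsupp.add_apply, Finsupp.tsub_apply]
      omega

/-- The submodule of polynomials supported in a set of exponents. -/
def suppModule (K : Type*) [Field K] {n : ℕ} (E : Set (Fin n →₀ ℕ)) :
    Submodule K (MvPolynomial (Fin n) K) where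
  carrier := {p | ∀ c ∈ p.support, c ∈ E}
  add_mem' := fun {p q} hp hq c hc => by
    rcases Finset.mem_union.mp (MvPolynomial.support_add hc) with h | h
    exacts [hp c h, hq c h]
  zero_mem' := fun c hc => absurd hc (by simp)
  smul_mem' := fun r p hp c hc => hp c (MvPolynomial.support_smul hc)

lemma mem_suppModule {E : Set (Fin n →₀ ℕ)} {p : MvPolynomial (Fin n) K} :
    p ∈ suppModule K E ↔ ∀ c ∈ p.support, c ∈ E := Iff.rfl

lemma monomial_mem_suppModule {E : Set (Fin n →₀ ℕ)} {c : Fin n →₀ ℕ} :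
    monomial c (1:K) ∈ suppModule K E ↔ c ∈ E := by
  classical
  rw [mem_suppModule]
  constructor
  · intro h
    exact h c (by rw [MvPolynomial.support_monomial, if_neg one_ne_zero]; simp)
  · intro h d hd
    rw [MvPolynomial.support_monomial, if_neg one_ne_zero, Finset.mem_singleton] at hd
    rwa [hd]

lemma span_image_eq_suppModule (E : Set (Fin n →₀ ℕ)) :
    Submodule.span K ((fun c => monomial c (1:K)) '' E) = suppModule K E := by
  classical
  apply le_antisymm
  · rw [Submodule.span_le]
    rintro p ⟨c, hc, rfl⟩
    intro d hd
    rw [MvPolynomial.support_monomial, if_neg one_ne_zero, Finset.mem_singleton] at hd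
    rwa [hd]
  · intro p hp
    rw [← p.support_sum_monomial_coeff]
    apply Submodule.sum_mem
    intro c hc
    have h1 : monomial c (coeff c p) = (coeff c p) • monomial c (1:K) := by
      rw [MvPolynomial.smul_monomial, smul_eq_mul, mul_one]
    rw [h1]
    exact Submodule.smul_mem _ _ (Submodule.subset_span ⟨c, hp c hc, rfl⟩)

lemma stanleySpace_eq (u : Fin n →₀ ℕ) (Z : Finset (Fin n)) :
    StanleySpace K u Z = suppModule K (expSet u Z) := by
  rw [StanleySpace, stanleySet_eq, span_image_eq_suppModule]

lemma suppModule_inj {E F : Set (Fin n →₀ ℕ)} (h : suppModule K E = suppModule K F) :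
    E = F := by
  ext c
  constructor <;> intro hc
  · exact monomial_mem_suppModule.mp (h ▸ monomial_mem_suppModule.mpr hc)
  · exact monomial_mem_suppModule.mp (h ▸ monomial_mem_suppModule.mpr hc)

lemma iSup_suppModule {ι : Sort*} (E : ι → Set (Fin n →₀ ℕ)) :
    (⨆ i, suppModule K (E i)) = suppModule K (⋃ i, E i) := by
  simp_rw [← span_image_eq_suppModule, Set.image_iUnion, Submodule.span_iUnion]

lemma disjoint_suppModule {E F : Set (Fin n →₀ ℕ)}
    (h : ∀ c, c ∈ E → c ∈ F → False) :
    Disjoint (suppModule K E) (suppModule K F) := by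
  rw [Submodule.disjoint_def]
  intro p hpE hpF
  rw [← MvPolynomial.support_eq_empty, Finset.eq_empty_iff_forall_notMem]
  intro c hc
  exact h c (hpE c hc) (hpF c hc)

lemma indep_of_pairwise {ι : Type*} (E : ι → Set (Fin n →₀ ℕ))
    (h : ∀ i j, i ≠ j → ∀ c, c ∈ E i → c ∈ E j → False) :
    iSupIndep fun i => suppModule K (E i) := by
  rw [iSupIndep_def]
  intro i
  have hb : (⨆ j, ⨆ (_ : j ≠ i), suppModule K (E j)) ≤
      suppModule K (⋃ (j : ι) (_ : j ≠ i), E j) := by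
    refine iSup_le fun j => iSup_le fun hj => ?_
    intro p hp c hc
    exact Set.mem_iUnion₂.mpr ⟨j, hj, hp c hc⟩
  refine Disjoint.mono_right hb (disjoint_suppModule ?_)
  intro c hci hcU
  obtain ⟨j, hj, hcj⟩ := Set.mem_iUnion₂.mp hcU
  exact h j i hj c hcj hci

lemma pairwise_of_indep {ι : Type*} (E : ι → Set (Fin n →₀ ℕ))
    (h : iSupIndep fun i => suppModule K (E i)) :
    ∀ i j, i ≠ j → ∀ c, c ∈ E i → c ∈ E j → False := by
  intro i j hij c hci hcj
  rw [iSupIndep_def] at h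
  have h1 : monomial c (1:K) ∈ suppModule K (E i) := monomial_mem_suppModule.mpr hci
  have h2 : monomial c (1:K) ∈ ⨆ (k) (_ : k ≠ i), suppModule K (E k) := by
    apply Submodule.mem_iSup_of_mem j
    apply Submodule.mem_iSup_of_mem (Ne.symm hij)
    exact monomial_mem_suppModule.mpr hcj
  have := Submodule.disjoint_def.mp (h i) _ h1 h2
  rw [MvPolynomial.monomial_eq_zero] at this
  exact one_ne_zero this

lemma restrictScalars_span_eq (g₀ : Fin n →₀ ℕ) {m : ℕ} (v : Fin m → (Fin n →₀ ℕ)) :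
    Submodule.restrictScalars K (Ideal.span
        (insert (monomial g₀ (1:K)) (Set.range fun i => monomial (v i) (1:K))))
      = suppModule K {c | g₀ ≤ c ∨ ∃ i, v i ≤ c} := by
  have himg : insert (monomial g₀ (1:K)) (Set.range fun i => monomial (v i) (1:K))
      = (fun s => monomial s (1:K)) '' (insert g₀ (Set.range v)) := by
    rw [Set.image_insert_eq, ← Set.range_comp]
    rfl
  ext p
  rw [Submodule.restrictScalars_mem, himg, mem_ideal_span_monomial_image, mem_suppModule]
  apply forall₂_congr
  intro c _
  simp only [Set.mem_insert_iff, Set.mem_range, Set.mem_setOf_eq]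
  constructor
  · rintro ⟨s, (rfl | ⟨i, rfl⟩), hs⟩
    · exact Or.inl hs
    · exact Or.inr ⟨i, hs⟩
  · rintro (h | ⟨i, h⟩)
    · exact ⟨g₀, Or.inl rfl, h⟩
    · exact ⟨v i, Or.inr ⟨i, rfl⟩, h⟩

end SdepthAux

namespace SdepthAux

variable {n : ℕ}

/-- The set of exponents of monomials in the ideal `(x^k v₁, v_2, ..., v_m)`. -/
def Mon (x : Fin n) (v₁ : Fin n →₀ ℕ) {m : ℕ} (v : Fin m → (Fin n →₀ ℕ)) (k : ℕ) :
    Set (Fin n →₀ ℕ) :=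
  {c | Finsupp.single x k + v₁ ≤ c ∨ ∃ i, v i ≤ c}

noncomputable def shiftDown (x : Fin n) (a : ℕ) (c : Fin n →₀ ℕ) : Fin n →₀ ℕ :=
  if a ≤ c x then c - Finsupp.single x 1 else c

noncomputable def shiftUp (x : Fin n) (a : ℕ) (c : Fin n →₀ ℕ) : Fin n →₀ ℕ :=
  if a ≤ c x then c + Finsupp.single x 1 else c

variable {x : Fin n} {a : ℕ} {c u w : Fin n →₀ ℕ}

lemma shiftDown_apply_ne {j : Fin n} (hj : j ≠ x) : shiftDown x a c j = c j := by
  have hxj : ¬ x = j := fun h => hj h.symm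
  unfold shiftDown
  split_ifs <;>
    simp [Finsupp.tsub_apply, Finsupp.single_apply, hxj]

lemma shiftDown_apply_x : shiftDown x a c x = if a ≤ c x then c x - 1 else c x := by
  unfold shiftDown
  split_ifs <;> simp [Finsupp.tsub_apply, Finsupp.single_apply]

lemma shiftUp_apply_ne {j : Fin n} (hj : j ≠ x) : shiftUp x a c j = c j := by
  have hxj : ¬ x = j := fun h => hj h.symm
  unfold shiftUp
  split_ifs <;>
    simp [Finsupp.add_apply, Finsupp.single_apply, hxj]

lemma shiftUp_apply_x : shiftUp x a c x = if a ≤ c x then c x + 1 else c x := by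
  unfold shiftUp
  split_ifs <;> simp [Finsupp.add_apply, Finsupp.single_apply]

lemma single_add_le_iff (hw : w x = 0) {k : ℕ} :
    Finsupp.single x k + w ≤ c ↔ k ≤ c x ∧ ∀ j, j ≠ x → w j ≤ c j := by
  rw [Finsupp.le_def]
  constructor
  · intro h
    refine ⟨by simpa [Finsupp.add_apply, hw] using h x, fun j hj => ?_⟩
    have hxj : ¬ x = j := fun h' => hj h'.symm
    have := h j
    simpa [Finsupp.add_apply, Finsupp.single_apply, hxj] using this
  · rintro ⟨h1, h2⟩ j
    rcases eq_or_ne j x with rfl | hj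
    · simpa [Finsupp.add_apply, hw] using h1
    · have hxj : ¬ x = j := fun h' => hj h'.symm
      simpa [Finsupp.add_apply, Finsupp.single_apply, hxj] using h2 j hj

lemma le_shiftDown_iff (hw : w x = 0) : w ≤ shiftDown x a c ↔ w ≤ c := by
  simp only [Finsupp.le_def]
  constructor <;> intro h j <;> rcases eq_or_ne j x with rfl | hj
  · simp [hw]
  · have := h j; rwa [shiftDown_apply_ne hj] at this
  · simp [hw]
  · rw [shiftDown_apply_ne hj]; exact h j

lemma le_shiftUp_iff (hw : w x = 0) : w ≤ shiftUp x a c ↔ w ≤ c := by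
  simp only [Finsupp.le_def]
  constructor <;> intro h j <;> rcases eq_or_ne j x with rfl | hj
  · simp [hw]
  · have := h j; rwa [shiftUp_apply_ne hj] at this
  · simp [hw]
  · rw [shiftUp_apply_ne hj]; exact h j

variable {m : ℕ} {v₁ : Fin n →₀ ℕ} {v : Fin m → (Fin n →₀ ℕ)}

lemma mem_Mon_shiftDown (ha : 0 < a) (hv₁ : v₁ x = 0) (hv : ∀ i, v i x = 0) :
    c ∈ Mon x v₁ v (a+1) ↔ shiftDown x a c ∈ Mon x v₁ v a := by
  unfold Mon
  simp only [Set.mem_setOf_eq]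
  apply or_congr
  · rw [single_add_le_iff hv₁, single_add_le_iff hv₁]
    have hax : a + 1 ≤ c x ↔ a ≤ shiftDown x a c x := by
      rw [shiftDown_apply_x]; split_ifs <;> omega
    refine ⟨fun ⟨h1, h2⟩ => ⟨hax.mp h1, fun j hj => by
        rw [shiftDown_apply_ne hj]; exact h2 j hj⟩,
      fun ⟨h1, h2⟩ => ⟨hax.mpr h1, fun j hj => by
        have := h2 j hj; rwa [shiftDown_apply_ne hj] at this⟩⟩
  · exact exists_congr fun i => (le_shiftDown_iff (hv i)).symm

lemma mem_Mon_shiftUp (hv₁ : v₁ x = 0) (hv : ∀ i, v i x = 0) :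
    c ∈ Mon x v₁ v a ↔ shiftUp x a c ∈ Mon x v₁ v (a+1) := by
  unfold Mon
  simp only [Set.mem_setOf_eq]
  apply or_congr
  · rw [single_add_le_iff hv₁, single_add_le_iff hv₁]
    have hax : a ≤ c x ↔ a + 1 ≤ shiftUp x a c x := by
      rw [shiftUp_apply_x]; split_ifs <;> omega
    refine ⟨fun ⟨h1, h2⟩ => ⟨hax.mp h1, fun j hj => by
        rw [shiftUp_apply_ne hj]; exact h2 j hj⟩,
      fun ⟨h1, h2⟩ => ⟨hax.mpr h1, fun j hj => by
        have := h2 j hj; rwa [shiftUp_apply_ne hj] at this⟩⟩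
  · exact exists_congr fun i => (le_shiftUp_iff (hv i)).symm

/-- Generic coordinatewise transfer principle for `expSet` membership. -/
lemma expSet_congr_aux {u u' c c' : Fin n →₀ ℕ} {Z : Finset (Fin n)} {R : Prop}
    (hne : ∀ j, j ≠ x → u' j = u j ∧ c' j = c j)
    (hx : (u' x ≤ c' x ∧ (x ∉ Z → c' x = u' x)) ↔
      ((u x ≤ c x ∧ (x ∉ Z → c x = u x)) ∧ R)) :
    c' ∈ expSet u' Z ↔ (c ∈ expSet u Z ∧ R) := by
  unfold expSet
  simp only [Set.mem_setOf_eq]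
  constructor
  · intro h
    have hxx := hx.mp (h x)
    refine ⟨fun j => ?_, hxx.2⟩
    by_cases hj : j = x
    · rw [hj]; exact hxx.1
    · rcases hne j hj with ⟨e1, e2⟩
      rw [← e1, ← e2]
      exact h j
  · rintro ⟨h, hR⟩ j
    by_cases hj : j = x
    · rw [hj]; exact hx.mpr ⟨h x, hR⟩
    · rcases hne j hj with ⟨e1, e2⟩
      rw [e1, e2]
      exact h j

/-- Construction 1 (inl): main transfer. -/
lemma mem_expSet_up_inl (ha : 0 < a) {Z : Finset (Fin n)} :
    c ∈ expSet (if a ≤ u x then u + Finsupp.single x 1 else u) Z ↔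
      (shiftDown x a c ∈ expSet u Z ∧ (c x = a → x ∈ Z)) := by
  classical
  have hne : ∀ j, j ≠ x → (if a ≤ u x then u + Finsupp.single x 1 else u) j = u j ∧
      c j = shiftDown x a c j := by
    intro j hj
    have hxj : ¬ x = j := fun h' => hj h'.symm
    refine ⟨?_, (shiftDown_apply_ne hj).symm⟩
    split_ifs <;> simp [Finsupp.add_apply, Finsupp.single_apply, hxj]
  have hx : ((if a ≤ u x then u + Finsupp.single x 1 else u) x ≤ c x ∧
      (x ∉ Z → c x = (if a ≤ u x then u + Finsupp.single x 1 else u) x)) ↔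
      ((u x ≤ shiftDown x a c x ∧ (x ∉ Z → shiftDown x a c x = u x)) ∧
        (c x = a → x ∈ Z)) := by
    have h1 : (if a ≤ u x then u + Finsupp.single x 1 else u) x
        = if a ≤ u x then u x + 1 else u x := by
      split_ifs <;> simp [Finsupp.add_apply, Finsupp.single_apply]
    rw [h1, shiftDown_apply_x]
    by_cases hp : x ∈ Z <;>
      simp only [hp, not_true_eq_false, not_false_eq_true, false_implies, true_implies,
        forall_true_left, implies_true, and_true, imp_false] <;>
      split_ifs <;> omega
  exact expSet_congr_aux hne hx

/-- Construction 1 (inr): main transfer, for `u x + 1 = a` and `x ∉ Z`. -/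
lemma mem_expSet_up_inr (ha : 0 < a) {Z : Finset (Fin n)} (hb : u x + 1 = a) (hz : x ∉ Z) :
    c ∈ expSet (u + Finsupp.single x 1) Z ↔
      (shiftDown x a c ∈ expSet u Z ∧ c x = a) := by
  classical
  have hne : ∀ j, j ≠ x → ((u + Finsupp.single x 1 : Fin n →₀ ℕ)) j = u j ∧ c j = shiftDown x a c j := by
    intro j hj
    have hxj : ¬ x = j := fun h' => hj h'.symm
    refine ⟨?_, (shiftDown_apply_ne hj).symm⟩
    simp [Finsupp.add_apply, Finsupp.single_apply, hxj]
  have hx : (((u + Finsupp.single x 1 : Fin n →₀ ℕ)) x ≤ c x ∧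
      (x ∉ Z → c x = ((u + Finsupp.single x 1 : Fin n →₀ ℕ)) x)) ↔
      ((u x ≤ shiftDown x a c x ∧ (x ∉ Z → shiftDown x a c x = u x)) ∧ c x = a) := by
    have h1 : ((u + Finsupp.single x 1 : Fin n →₀ ℕ)) x = u x + 1 := by
      simp [Finsupp.add_apply, Finsupp.single_apply]
    rw [h1, shiftDown_apply_x]
    simp only [hz, not_false_eq_true, true_implies, forall_true_left]
    split_ifs <;> omega
  exact expSet_congr_aux hne hx

/-- Construction 2: main transfer, for indices with `¬(u x = a ∧ x ∉ Z)`. -/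
lemma mem_expSet_down (ha : 0 < a) {Z : Finset (Fin n)} (hk : ¬(u x = a ∧ x ∉ Z)) :
    c ∈ expSet (if a + 1 ≤ u x then u - Finsupp.single x 1 else u) Z ↔
      shiftUp x a c ∈ expSet u Z := by
  classical
  have hne : ∀ j, j ≠ x → (if a + 1 ≤ u x then u - Finsupp.single x 1 else u) j = u j ∧
      c j = shiftUp x a c j := by
    intro j hj
    have hxj : ¬ x = j := fun h' => hj h'.symm
    refine ⟨?_, (shiftUp_apply_ne hj).symm⟩
    split_ifs <;> simp [Finsupp.tsub_apply, Finsupp.single_apply, hxj]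
  have hx : ((if a + 1 ≤ u x then u - Finsupp.single x 1 else u) x ≤ c x ∧
      (x ∉ Z → c x = (if a + 1 ≤ u x then u - Finsupp.single x 1 else u) x)) ↔
      ((u x ≤ shiftUp x a c x ∧ (x ∉ Z → shiftUp x a c x = u x)) ∧ True) := by
    have h1 : (if a + 1 ≤ u x then u - Finsupp.single x 1 else u) x
        = if a + 1 ≤ u x then u x - 1 else u x := by
      split_ifs <;> simp [Finsupp.tsub_apply, Finsupp.single_apply]
    rw [h1, shiftUp_apply_x, and_true]
    by_cases hp : x ∈ Z
    · simp only [hp, not_true_eq_false, false_implies, and_true]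
      split_ifs <;> omega
    · have hune : ¬ (u x = a) := fun h => (not_and.mp hk h) hp
      simp only [hp, not_false_eq_true, true_implies, forall_true_left]
      split_ifs <;> omega
  exact (expSet_congr_aux hne hx).trans ⟨fun h => h.1, fun h => ⟨h, trivial⟩⟩

end SdepthAux

namespace SdepthAux

variable {K : Type*} [Field K] {n : ℕ}

lemma sdepth_le_card {I : Ideal (MvPolynomial (Fin n) K)} (D : StanleyDecomposition K I) :
    D.sdepth ≤ n := by
  refine le_trans (Finset.inf'_le _ (Finset.mem_univ (⟨0, D.rpos⟩ : Fin D.r))) ?_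
  exact le_trans (Finset.card_le_univ _) (by simp)

lemma sdepth_le_of_exists {I I' : Ideal (MvPolynomial (Fin n) K)}
    (H : ∀ D : StanleyDecomposition K I, ∃ D' : StanleyDecomposition K I',
      D.sdepth ≤ D'.sdepth) :
    I.sdepth K ≤ I'.sdepth K := by
  rw [Ideal.sdepth, Ideal.sdepth]
  rcases Set.eq_empty_or_nonempty (Set.range fun D : StanleyDecomposition K I => D.sdepth)
    with h | h
  · rw [h, csSup_empty]
    exact bot_le
  · have hbdd : BddAbove (Set.range fun D : StanleyDecomposition K I' => D.sdepth) := by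
      refine ⟨n, ?_⟩
      rintro k ⟨D, rfl⟩
      exact sdepth_le_card D
    refine csSup_le h ?_
    rintro k ⟨D, rfl⟩
    obtain ⟨D', hD'⟩ := H D
    exact le_trans hD' (le_csSup hbdd ⟨D', rfl⟩)

lemma decomposition_data {I : Ideal (MvPolynomial (Fin n) K)} {MonS : Set (Fin n →₀ ℕ)}
    (hI : Submodule.restrictScalars K I = suppModule K MonS)
    (D : StanleyDecomposition K I) :
    (⋃ i, expSet (D.u i) (D.Z i)) = MonS ∧
      (∀ i j, i ≠ j → ∀ c, c ∈ expSet (D.u i) (D.Z i) → c ∈ expSet (D.u j) (D.Z j) →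
        False) := by
  have h1 : suppModule K MonS = suppModule K (⋃ i, expSet (D.u i) (D.Z i)) := by
    rw [← hI, D.isSup]
    simp_rw [stanleySpace_eq]
    rw [iSup_suppModule]
  constructor
  · exact (suppModule_inj h1).symm
  · have h2 := D.indep
    simp_rw [stanleySpace_eq] at h2
    exact pairwise_of_indep _ h2

/-- Build a Stanley decomposition from combinatorial data on exponent sets. -/
noncomputable def mkD {I : Ideal (MvPolynomial (Fin n) K)} {MonS : Set (Fin n →₀ ℕ)}
    (hI : Submodule.restrictScalars K I = suppModule K MonS)
    {r : ℕ} (hr : 0 < r) (u : Fin r → (Fin n →₀ ℕ)) (Z : Fin r → Finset (Fin n))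
    (hcov : (⋃ i, expSet (u i) (Z i)) = MonS)
    (hdisj : ∀ i j : Fin r, i ≠ j → ∀ c, c ∈ expSet (u i) (Z i) →
      c ∈ expSet (u j) (Z j) → False) :
    StanleyDecomposition K I where
  r := r
  rpos := hr
  u := u
  Z := Z
  mem i := by
    have h1 : monomial (u i) (1:K) ∈ suppModule K MonS :=
      monomial_mem_suppModule.mpr (hcov ▸ Set.mem_iUnion.mpr ⟨i, self_mem_expSet _ _⟩)
    rw [← hI] at h1
    rwa [Submodule.restrictScalars_mem] at h1
  isSup := by
    rw [hI]
    simp_rw [stanleySpace_eq]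
    rw [iSup_suppModule, hcov]
  indep := by
    simp_rw [stanleySpace_eq]
    exact indep_of_pairwise _ hdisj

variable {x : Fin n} {m : ℕ} {v₁ : Fin n →₀ ℕ} {v : Fin m → Fin n →₀ ℕ} {a : ℕ}

lemma step_le_up (ha : 0 < a) (hv₁ : v₁ x = 0) (hv : ∀ i, v i x = 0)
    {I I' : Ideal (MvPolynomial (Fin n) K)}
    (hI : Submodule.restrictScalars K I = suppModule K (Mon x v₁ v a))
    (hI' : Submodule.restrictScalars K I' = suppModule K (Mon x v₁ v (a+1))) :
    I.sdepth K ≤ I'.sdepth K := by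
  apply sdepth_le_of_exists
  intro D
  obtain ⟨hcov, hdisj⟩ := decomposition_data hI D
  classical
  let P : Fin D.r → Prop := fun i => D.u i x + 1 = a ∧ x ∉ D.Z i
  let κ := Fin D.r ⊕ {i // P i}
  let proj : κ → Fin D.r := Sum.elim id Subtype.val
  let U : κ → (Fin n →₀ ℕ) := Sum.elim
    (fun i => if a ≤ D.u i x then D.u i + Finsupp.single x 1 else D.u i)
    (fun i => D.u i.1 + Finsupp.single x 1)
  have key : ∀ (k : κ) (c : Fin n →₀ ℕ), c ∈ expSet (U k) (D.Z (proj k)) →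
      shiftDown x a c ∈ expSet (D.u (proj k)) (D.Z (proj k)) := by
    rintro (i | ⟨i, hPi⟩) c hc
    · exact ((mem_expSet_up_inl ha).mp hc).1
    · exact ((mem_expSet_up_inr ha hPi.1 hPi.2).mp hc).1
  have cov' : (⋃ k : κ, expSet (U k) (D.Z (proj k))) = Mon x v₁ v (a+1) := by
    ext c
    rw [Set.mem_iUnion, mem_Mon_shiftDown ha hv₁ hv]
    constructor
    · rintro ⟨k, hk⟩
      rw [← hcov]
      exact Set.mem_iUnion.mpr ⟨proj k, key k c hk⟩
    · intro hc
      rw [← hcov] at hc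
      obtain ⟨i, hi⟩ := Set.mem_iUnion.mp hc
      by_cases hcx : c x = a
      · by_cases hzx : x ∈ D.Z i
        · exact ⟨Sum.inl i, (mem_expSet_up_inl ha).mpr ⟨hi, fun _ => hzx⟩⟩
        · have hux : D.u i x + 1 = a := by
            have h2 := (hi x).2 hzx
            rw [shiftDown_apply_x, if_pos (show a ≤ c x by omega)] at h2
            omega
          exact ⟨Sum.inr ⟨i, ⟨hux, hzx⟩⟩, (mem_expSet_up_inr ha hux hzx).mpr ⟨hi, hcx⟩⟩
      · exact ⟨Sum.inl i, (mem_expSet_up_inl ha).mpr ⟨hi, fun h => absurd h hcx⟩⟩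
  have disj' : ∀ k k' : κ, k ≠ k' → ∀ c, c ∈ expSet (U k) (D.Z (proj k)) →
      c ∈ expSet (U k') (D.Z (proj k')) → False := by
    intro k k' hkk c hk hk'
    by_cases hpp : proj k = proj k'
    case neg => exact hdisj _ _ hpp _ (key k c hk) (key k' c hk')
    case pos =>
      rcases k with i | ⟨i, hPi⟩ <;> rcases k' with i' | ⟨i', hPi'⟩
      · exact hkk (congrArg Sum.inl (show i = i' from hpp))
      · obtain rfl : i = i' := hpp
        have h1 := (mem_expSet_up_inl ha).mp hk
        have h2 := (mem_expSet_up_inr ha hPi'.1 hPi'.2).mp hk'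
        exact hPi'.2 (h1.2 h2.2)
      · obtain rfl : i = i' := hpp
        have h1 := (mem_expSet_up_inl ha).mp hk'
        have h2 := (mem_expSet_up_inr ha hPi.1 hPi.2).mp hk
        exact hPi.2 (h1.2 h2.2)
      · exact hkk (congrArg Sum.inr (Subtype.ext (show (i:Fin D.r) = i' from hpp)))
  let r' := Fintype.card κ
  have hr' : 0 < r' := Fintype.card_pos_iff.mpr ⟨Sum.inl ⟨0, D.rpos⟩⟩
  let e : Fin r' ≃ κ := (Fintype.equivFin κ).symm
  refine ⟨mkD hI' hr' (fun k => U (e k)) (fun k => D.Z (proj (e k))) ?_ ?_, ?_⟩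
  · rw [← cov']
    exact e.surjective.iUnion_comp (fun k => expSet (U k) (D.Z (proj k)))
  · intro i j hij c h1 h2
    exact disj' (e i) (e j) (fun h => hij (e.injective h)) c h1 h2
  · refine Finset.le_inf' _ _ fun k _ => ?_
    exact Finset.inf'_le _ (Finset.mem_univ (proj (e k)))

lemma step_le_down (ha : 0 < a) (hv₁ : v₁ x = 0) (hv : ∀ i, v i x = 0)
    {I I' : Ideal (MvPolynomial (Fin n) K)}
    (hI : Submodule.restrictScalars K I = suppModule K (Mon x v₁ v a))
    (hI' : Submodule.restrictScalars K I' = suppModule K (Mon x v₁ v (a+1))) :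
    I'.sdepth K ≤ I.sdepth K := by
  apply sdepth_le_of_exists
  intro D
  obtain ⟨hcov, hdisj⟩ := decomposition_data hI' D
  classical
  let P : Fin D.r → Prop := fun i => ¬(D.u i x = a ∧ x ∉ D.Z i)
  let κ := {i // P i}
  have hnonempty : Nonempty κ := by
    have hc0 : (Finsupp.single x (a+1) + v₁) ∈ Mon x v₁ v (a+1) := Or.inl le_rfl
    rw [← hcov] at hc0
    obtain ⟨i, hi⟩ := Set.mem_iUnion.mp hc0
    refine ⟨⟨i, ?_⟩⟩
    rintro ⟨hua, hz⟩
    have h2 := (hi x).2 hz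
    have h3 : (Finsupp.single x (a+1) + v₁) x = a + 1 := by
      simp [Finsupp.add_apply, Finsupp.single_eq_same, hv₁]
    omega
  let U : κ → (Fin n →₀ ℕ) := fun i =>
    if a + 1 ≤ D.u i.1 x then D.u i.1 - Finsupp.single x 1 else D.u i.1
  have key : ∀ (k : κ) (c : Fin n →₀ ℕ), c ∈ expSet (U k) (D.Z k.1) ↔
      shiftUp x a c ∈ expSet (D.u k.1) (D.Z k.1) :=
    fun k c => mem_expSet_down ha k.2
  have cov' : (⋃ k : κ, expSet (U k) (D.Z k.1)) = Mon x v₁ v a := by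
    ext c
    rw [Set.mem_iUnion, mem_Mon_shiftUp hv₁ hv]
    constructor
    · rintro ⟨k, hk⟩
      rw [← hcov]
      exact Set.mem_iUnion.mpr ⟨k.1, (key k c).mp hk⟩
    · intro hc
      rw [← hcov] at hc
      obtain ⟨i, hi⟩ := Set.mem_iUnion.mp hc
      have hPi : P i := by
        rintro ⟨hua, hz⟩
        have h2 := (hi x).2 hz
        rw [shiftUp_apply_x] at h2
        split_ifs at h2 <;> omega
      exact ⟨⟨i, hPi⟩, (key ⟨i, hPi⟩ c).mpr hi⟩
  have disj' : ∀ k k' : κ, k ≠ k' → ∀ c, c ∈ expSet (U k) (D.Z k.1) →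
      c ∈ expSet (U k') (D.Z k'.1) → False := by
    intro k k' hkk c hk hk'
    exact hdisj k.1 k'.1 (fun h => hkk (Subtype.ext h)) (shiftUp x a c)
      ((key k c).mp hk) ((key k' c).mp hk')
  let r' := Fintype.card κ
  have hr' : 0 < r' := Fintype.card_pos_iff.mpr hnonempty
  let e : Fin r' ≃ κ := (Fintype.equivFin κ).symm
  refine ⟨mkD hI hr' (fun k => U (e k)) (fun k => D.Z (e k).1) ?_ ?_, ?_⟩
  · rw [← cov']
    exact e.surjective.iUnion_comp (fun k => expSet (U k) (D.Z k.1))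
  · intro i j hij c h1 h2
    exact disj' (e i) (e j) (fun h => hij (e.injective h)) c h1 h2
  · refine Finset.le_inf' _ _ fun k _ => ?_
    exact Finset.inf'_le _ (Finset.mem_univ ((e k).1))

end SdepthAux


/-- Let `v₁, …, vₘ` be monomials of `S = K[x₁,…,xₙ]` not involving `x₁`, and `a > 0`.
Then `sdepth (x₁^a v₁, v₂, …, vₘ) = sdepth (x₁^(a+1) v₁, v₂, …, vₘ)`. -/
theorem sdepth_step (n : ℕ) (hn : 2 ≤ n) (K : Type*) [Field K]
    (m : ℕ) (v₁ : Fin n →₀ ℕ) (v : Fin m → (Fin n →₀ ℕ))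
    (hv₁ : v₁ ⟨0, by omega⟩ = 0) (hv : ∀ i, v i ⟨0, by omega⟩ = 0)
    (a : ℕ) (ha : 0 < a) :
    Ideal.sdepth K (Ideal.span
      (insert (monomial (Finsupp.single ⟨0, by omega⟩ a + v₁) (1 : K))
        (Set.range fun i => monomial (v i) (1 : K)))) =
    Ideal.sdepth K (Ideal.span
      (insert (monomial (Finsupp.single ⟨0, by omega⟩ (a + 1) + v₁) (1 : K))
        (Set.range fun i => monomial (v i) (1 : K)))) := by
  have h0 : 0 < n := by omega
  have hI := SdepthAux.restrictScalars_span_eq (K := K)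
    (Finsupp.single (⟨0, h0⟩ : Fin n) a + v₁) v
  have hI' := SdepthAux.restrictScalars_span_eq (K := K)
    (Finsupp.single (⟨0, h0⟩ : Fin n) (a + 1) + v₁) v
  have hMon : {c : Fin n →₀ ℕ | Finsupp.single (⟨0, h0⟩ : Fin n) a + v₁ ≤ c ∨ ∃ i, v i ≤ c}
      = SdepthAux.Mon ⟨0, h0⟩ v₁ v a := rfl
  have hMon' : {c : Fin n →₀ ℕ | Finsupp.single (⟨0, h0⟩ : Fin n) (a+1) + v₁ ≤ c ∨ ∃ i, v i ≤ c}
      = SdepthAux.Mon ⟨0, h0⟩ v₁ v (a+1) := rfl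
  rw [hMon] at hI
  rw [hMon'] at hI'
  exact le_antisymm (SdepthAux.step_le_up ha hv₁ hv hI hI')
    (SdepthAux.step_le_down ha hv₁ hv hI hI')
end

section
/- Let K be a field, S = K[x_1,…,x_n], and let I ⊆ S be a complete intersection monomial ideal, i.e. I = (v_1,…,v_m) where v_1,…,v_m are monomials forming a regular sequence (equivalently, monomials with pairwise disjoint supports). Then sdepth(I) = sdepth(√I), where √I is the radical of I. -/
open MvPolynomial

namespace SDepth

open Finsupp
attribute [local instance] Classical.propDecidable

variable {n : ℕ}

/-- The set of exponent vectors in the Stanley interval with base `u` and free coords `Z`. -/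
def Box (u : Fin n →₀ ℕ) (Z : Finset (Fin n)) : Set (Fin n →₀ ℕ) :=
  {b | (∀ j ∈ Z, u j ≤ b j) ∧ (∀ j ∉ Z, b j = u j)}

lemma self_mem_box (u : Fin n →₀ ℕ) (Z : Finset (Fin n)) : u ∈ Box u Z :=
  ⟨fun _ _ => le_rfl, fun _ _ => rfl⟩

lemma box_nonempty (u : Fin n →₀ ℕ) (Z : Finset (Fin n)) : (Box u Z).Nonempty :=
  ⟨u, self_mem_box u Z⟩

/-- A combinatorial Stanley partition of a set of exponent vectors. -/
structure CPart (A : Set (Fin n →₀ ℕ)) where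
  r : ℕ
  rpos : 0 < r
  u : Fin r → (Fin n →₀ ℕ)
  Z : Fin r → Finset (Fin n)
  cover : A = ⋃ i, Box (u i) (Z i)
  disj : ∀ i j, i ≠ j → Disjoint (Box (u i) (Z i)) (Box (u j) (Z j))

def CPart.sdepth {A : Set (Fin n →₀ ℕ)} (P : CPart A) : ℕ :=
  Finset.univ.inf' ⟨⟨0, P.rpos⟩, Finset.mem_univ _⟩ fun i => (P.Z i).card

noncomputable def csdepth (A : Set (Fin n →₀ ℕ)) : ℕ :=
  sSup (Set.range fun P : CPart A => P.sdepth)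

lemma CPart.sdepth_le {A : Set (Fin n →₀ ℕ)} (P : CPart A) (i : Fin P.r) :
    P.sdepth ≤ (P.Z i).card :=
  Finset.inf'_le (fun i => (P.Z i).card) (Finset.mem_univ i)

lemma CPart.le_sdepth {A : Set (Fin n →₀ ℕ)} (P : CPart A) (d : ℕ)
    (h : ∀ i, d ≤ (P.Z i).card) : d ≤ P.sdepth :=
  Finset.le_inf' _ (fun i => (P.Z i).card) fun i _ => h i

lemma CPart.sdepth_le_n {A : Set (Fin n →₀ ℕ)} (P : CPart A) : P.sdepth ≤ n :=
  calc P.sdepth ≤ (P.Z ⟨0, P.rpos⟩).card := P.sdepth_le _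
  _ ≤ (Finset.univ : Finset (Fin n)).card :=
      Finset.card_le_card (Finset.subset_univ (P.Z ⟨0, P.rpos⟩))
  _ = n := Finset.card_fin n

lemma bddAbove_sdepth (A : Set (Fin n →₀ ℕ)) :
    BddAbove (Set.range fun P : CPart A => P.sdepth) := by
  refine ⟨n, ?_⟩
  rintro x ⟨P, rfl⟩
  exact P.sdepth_le_n

lemma csdepth_le (A : Set (Fin n →₀ ℕ)) (P : CPart A) : P.sdepth ≤ csdepth A :=
  le_csSup (bddAbove_sdepth A) ⟨P, rfl⟩

lemma exists_cpart_sdepth_eq (A : Set (Fin n →₀ ℕ)) (h : Nonempty (CPart A)) :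
    ∃ P : CPart A, P.sdepth = csdepth A := by
  have hne : (Set.range fun P : CPart A => P.sdepth).Nonempty := Set.range_nonempty _
  have := Nat.sSup_mem hne (bddAbove_sdepth A)
  obtain ⟨P, hP⟩ := this
  exact ⟨P, hP⟩

/-- A good family of disjoint boxes with union `S`, each box satisfying `pred` on its
free-coordinate set. -/
def GoodFam (S : Set (Fin n →₀ ℕ)) (pred : Finset (Fin n) → Prop) : Prop :=
  ∃ F : Finset ((Fin n →₀ ℕ) × Finset (Fin n)),
    (⋃ p ∈ F, Box p.1 p.2) = S ∧
    (∀ p ∈ F, ∀ q ∈ F, p ≠ q → Disjoint (Box p.1 p.2) (Box q.1 q.2)) ∧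
    (∀ p ∈ F, pred p.2)

theorem transfer {s M : ℕ} (A : Set (Fin s →₀ ℕ)) (B : Set (Fin M →₀ ℕ))
    (σ : (Fin s →₀ ℕ) → (Fin M →₀ ℕ))
    (hσ : ∀ x, σ x ∈ B ↔ x ∈ A) (hA : A.Nonempty) (p q : ℕ)
    (hbox : ∀ u Z, GoodFam (σ ⁻¹' Box u Z) (fun W => q + Z.card ≤ W.card + p))
    (P : CPart B) : ∃ Q : CPart A, q + P.sdepth ≤ Q.sdepth + p := by
  classical
  choose F hFcov hFdisj hFcard using fun i : Fin P.r => hbox (P.u i) (P.Z i)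
  -- the global family
  set G : Finset ((Fin s →₀ ℕ) × Finset (Fin s)) := Finset.univ.biUnion F with hG
  have hApre : A = σ ⁻¹' B := by ext x; simp [hσ]
  have hcover : A = ⋃ pr ∈ G, Box pr.1 pr.2 := by
    rw [hApre, P.cover, Set.preimage_iUnion]
    ext x
    simp only [Set.mem_iUnion]
    constructor
    · rintro ⟨i, hx⟩
      have : x ∈ ⋃ pr ∈ F i, Box pr.1 pr.2 := by rw [hFcov i]; exact hx
      simp only [Set.mem_iUnion] at this
      obtain ⟨pr, hpr, hxpr⟩ := this
      exact ⟨pr, by simp [hG]; exact ⟨i, hpr⟩, hxpr⟩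
    · rintro ⟨pr, hpr, hxpr⟩
      simp only [hG, Finset.mem_biUnion, Finset.mem_univ, true_and] at hpr
      obtain ⟨i, hpri⟩ := hpr
      refine ⟨i, ?_⟩
      rw [← hFcov i]
      exact Set.mem_biUnion hpri hxpr
  have hdisjG : ∀ pr ∈ G, ∀ qr ∈ G, pr ≠ qr → Disjoint (Box pr.1 pr.2) (Box qr.1 qr.2) := by
    intro pr hpr qr hqr hne
    simp only [hG, Finset.mem_biUnion, Finset.mem_univ, true_and] at hpr hqr
    obtain ⟨i, hpri⟩ := hpr
    obtain ⟨j, hqrj⟩ := hqr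
    by_cases hij : i = j
    · subst hij; exact hFdisj i pr hpri qr hqrj hne
    · have h1 : Box pr.1 pr.2 ⊆ σ ⁻¹' Box (P.u i) (P.Z i) := by
        rw [← hFcov i]; exact fun x hx => Set.mem_biUnion hpri hx
      have h2 : Box qr.1 qr.2 ⊆ σ ⁻¹' Box (P.u j) (P.Z j) := by
        rw [← hFcov j]; exact fun x hx => Set.mem_biUnion hqrj hx
      have := (P.disj i j hij).preimage σ
      exact Set.disjoint_of_subset h1 h2 this
  have hGne : G.Nonempty := by
    obtain ⟨x, hx⟩ := hA
    rw [hcover] at hx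
    simp only [Set.mem_iUnion] at hx
    obtain ⟨pr, hpr, _⟩ := hx
    exact ⟨pr, hpr⟩
  have hcard : 0 < G.card := Finset.card_pos.mpr hGne
  set e := G.equivFin with he
  have hc2 : A = ⋃ i : Fin G.card, Box (e.symm i).1.1 (e.symm i).1.2 := by
    rw [hcover]
    ext x
    simp only [Set.mem_iUnion]
    constructor
    · rintro ⟨pr, hpr, hx⟩
      exact ⟨e ⟨pr, hpr⟩, by simpa using hx⟩
    · rintro ⟨i, hx⟩
      exact ⟨(e.symm i).1, (e.symm i).2, hx⟩
  have hd2 : ∀ i j : Fin G.card, i ≠ j →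
      Disjoint (Box (e.symm i).1.1 (e.symm i).1.2) (Box (e.symm j).1.1 (e.symm j).1.2) := by
    intro i j hij
    refine hdisjG _ (e.symm i).2 _ (e.symm j).2 ?_
    intro hcontra
    apply hij
    have h2 : (e.symm i) = (e.symm j) := Subtype.ext hcontra
    simpa using congrArg e h2
  refine ⟨⟨G.card, hcard, fun i => (e.symm i).1.1, fun i => (e.symm i).1.2, hc2, hd2⟩, ?_⟩
  have key : ∀ i : Fin G.card, q + P.sdepth ≤ (e.symm i).1.2.card + p := by
    intro i
    have hmem := (e.symm i).2
    simp only [hG, Finset.mem_biUnion, Finset.mem_univ, true_and] at hmem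
    obtain ⟨k, hk⟩ := hmem
    have h1 := hFcard k _ hk
    have h2 : P.sdepth ≤ (P.Z k).card := P.sdepth_le k
    simp only at h1
    omega
  rcases le_or_gt p (q + P.sdepth) with hcase | hcase
  · have hb := CPart.le_sdepth ⟨G.card, hcard, fun i => (e.symm i).1.1,
      fun i => (e.symm i).1.2, hc2, hd2⟩ (q + P.sdepth - p) (fun i => by
      show q + P.sdepth - p ≤ (e.symm i).1.2.card
      have := key i; omega)
    omega
  · have hb := CPart.le_sdepth ⟨G.card, hcard, fun i => (e.symm i).1.1,
      fun i => (e.symm i).1.2, hc2, hd2⟩ 0 (fun i => Nat.zero_le _)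
    omega
section Sig

variable {s M : ℕ}

/-- the condition attached to target coordinate `k` -/
def Cond (T : Fin M → Finset (Fin s)) (θ : Fin s → ℕ) (k : Fin M) (x : Fin s →₀ ℕ) : Prop :=
  ∀ j ∈ T k, θ j ≤ x j

/-- the step-function transfer map -/
noncomputable def sig (T : Fin M → Finset (Fin s)) (θ : Fin s → ℕ) (α : Fin M → ℕ)
    (x : Fin s →₀ ℕ) : Fin M →₀ ℕ :=
  equivFunOnFinite.symm fun k => if Cond T θ k x then α k else 0

lemma sig_apply (T : Fin M → Finset (Fin s)) (θ : Fin s → ℕ) (α : Fin M → ℕ)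
    (x : Fin s →₀ ℕ) (k : Fin M) :
    sig T θ α x k = if Cond T θ k x then α k else 0 := rfl

variable (hs : 0 < s) (T : Fin M → Finset (Fin s)) (θ : Fin s → ℕ) (α : Fin M → ℕ)
  (u : Fin M →₀ ℕ) (Z : Finset (Fin M))

def NegS : Finset (Fin M) := Finset.univ.filter fun k => k ∉ Z ∧ u k = 0 ∧ 1 ≤ α k
def PosS : Finset (Fin M) := Finset.univ.filter fun k =>
  (k ∈ Z ∧ 1 ≤ u k) ∨ (k ∉ Z ∧ u k = α k ∧ 1 ≤ α k)
def TTS : Finset (Fin s) := (PosS α u Z).biUnion T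

def LBf (ξ : Fin M → Fin s × ℕ) (j : Fin s) : ℕ :=
  if j ∈ TTS T α u Z ∨ ∃ k ∈ NegS α u Z, j ∈ T k ∧ j < (ξ k).1 then θ j else 0

def pinnedS (ξ : Fin M → Fin s × ℕ) : Finset (Fin s) := (NegS α u Z).image fun k => (ξ k).1

def WSet (ξ : Fin M → Fin s × ℕ) : Finset (Fin s) := Finset.univ \ pinnedS α u Z ξ

def wval (ξ : Fin M → Fin s × ℕ) (j : Fin s) : ℕ :=
  if j ∈ pinnedS α u Z ξ then (NegS α u Z).sup fun k => if (ξ k).1 = j then (ξ k).2 else 0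
  else LBf T θ α u Z ξ j

noncomputable def wpt (ξ : Fin M → Fin s × ℕ) : Fin s →₀ ℕ :=
  equivFunOnFinite.symm (wval T θ α u Z ξ)

def Valid (ξ : Fin M → Fin s × ℕ) : Prop :=
  (∀ k ∈ NegS α u Z, (ξ k).1 ∈ T k ∧ (ξ k).2 < θ (ξ k).1 ∧ (ξ k).1 ∉ TTS T α u Z ∧
     (∀ k' ∈ NegS α u Z, ¬((ξ k).1 ∈ T k' ∧ (ξ k).1 < (ξ k').1)) ∧
     (∀ k' ∈ NegS α u Z, (ξ k').1 = (ξ k).1 → (ξ k').2 = (ξ k).2)) ∧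
  (∀ k ∉ NegS α u Z, ξ k = (⟨0, hs⟩, 0))

def wfil (x : Fin s →₀ ℕ) (k : Fin M) : Finset (Fin s) := (T k).filter fun j => x j < θ j

noncomputable def xi (x : Fin s →₀ ℕ) : Fin M → Fin s × ℕ := fun k =>
  if h : k ∈ NegS α u Z ∧ (wfil T θ x k).Nonempty then
    ((wfil T θ x k).min' h.2, x ((wfil T θ x k).min' h.2))
  else (⟨0, hs⟩, 0)

lemma wval_pinned {ξ : Fin M → Fin s × ℕ} (hξ : Valid hs T θ α u Z ξ)
    {k : Fin M} (hk : k ∈ NegS α u Z) : wval T θ α u Z ξ ((ξ k).1) = (ξ k).2 := by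
  have hpin : (ξ k).1 ∈ pinnedS α u Z ξ := Finset.mem_image_of_mem _ hk
  rw [wval, if_pos hpin]
  apply le_antisymm
  · apply Finset.sup_le
    intro k' hk'
    by_cases h : (ξ k').1 = (ξ k).1
    · rw [if_pos h, (hξ.1 k hk).2.2.2.2 k' hk' h]
    · rw [if_neg h]; exact Nat.zero_le _
  · have := Finset.le_sup (f := fun k' => if (ξ k').1 = (ξ k).1 then (ξ k').2 else 0) hk
    simpa using this

lemma mem_box_w_iff (ξ : Fin M → Fin s × ℕ) (x : Fin s →₀ ℕ) :
    x ∈ Box (wpt T θ α u Z ξ) (WSet α u Z ξ) ↔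
    (∀ j, j ∉ pinnedS α u Z ξ → wval T θ α u Z ξ j ≤ x j) ∧
    (∀ j ∈ pinnedS α u Z ξ, x j = wval T θ α u Z ξ j) := by
  have hw : ∀ j, wpt T θ α u Z ξ j = wval T θ α u Z ξ j := fun j => rfl
  constructor
  · rintro ⟨h1, h2⟩
    constructor
    · intro j hj
      have := h1 j (by simp [WSet, hj])
      rwa [hw] at this
    · intro j hj
      have := h2 j (by simp [WSet, hj])
      rwa [hw] at this
  · rintro ⟨h1, h2⟩
    constructor
    · intro j hj
      rw [hw]
      exact h1 j (by simpa [WSet] using hj)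
    · intro j hj
      rw [hw]
      exact h2 j (by simpa [WSet] using hj)

lemma pre_char (hZle : ∀ k ∈ Z, u k ≤ α k) (hnZ : ∀ k ∉ Z, u k = 0 ∨ u k = α k)
    (x : Fin s →₀ ℕ) :
    sig T θ α x ∈ Box u Z ↔
    (∀ k ∈ PosS α u Z, Cond T θ k x) ∧ (∀ k ∈ NegS α u Z, ¬ Cond T θ k x) := by
  constructor
  · rintro ⟨h1, h2⟩
    constructor
    · intro k hk
      rw [PosS, Finset.mem_filter] at hk
      rcases hk.2 with ⟨hkZ, hu⟩ | ⟨hkZ, hue, ha⟩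
      · have := h1 k hkZ
        rw [sig_apply] at this
        by_contra hcond
        rw [if_neg hcond] at this
        omega
      · have := h2 k hkZ
        rw [sig_apply] at this
        by_contra hcond
        rw [if_neg hcond] at this
        omega
    · intro k hk
      rw [NegS, Finset.mem_filter] at hk
      obtain ⟨-, hkZ, hu0, ha⟩ := hk
      have := h2 k hkZ
      rw [sig_apply] at this
      intro hcond
      rw [if_pos hcond] at this
      omega
  · rintro ⟨hp, hn⟩
    constructor
    · intro k hkZ
      rw [sig_apply]
      by_cases hu : 1 ≤ u k
      · have hk : k ∈ PosS α u Z := by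
          rw [PosS, Finset.mem_filter]
          exact ⟨Finset.mem_univ _, Or.inl ⟨hkZ, hu⟩⟩
        rw [if_pos (hp k hk)]
        exact hZle k hkZ
      · omega
    · intro k hkZ
      rw [sig_apply]
      rcases hnZ k hkZ with hu0 | hue
      · by_cases ha : 1 ≤ α k
        · have hk : k ∈ NegS α u Z := by
            rw [NegS, Finset.mem_filter]
            exact ⟨Finset.mem_univ _, hkZ, hu0, ha⟩
          rw [if_neg (hn k hk)]
          omega
        · split <;> omega
      · by_cases ha : 1 ≤ α k
        · have hk : k ∈ PosS α u Z := by
            rw [PosS, Finset.mem_filter]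
            exact ⟨Finset.mem_univ _, Or.inr ⟨hkZ, hue, ha⟩⟩
          rw [if_pos (hp k hk)]
          omega
        · split <;> omega

lemma claim2 {ξ : Fin M → Fin s × ℕ} (hξ : Valid hs T θ α u Z ξ) (x : Fin s →₀ ℕ)
    (hx : x ∈ Box (wpt T θ α u Z ξ) (WSet α u Z ξ)) :
    (∀ k ∈ PosS α u Z, Cond T θ k x) ∧ (∀ k ∈ NegS α u Z, ¬ Cond T θ k x) := by
  rw [mem_box_w_iff] at hx
  obtain ⟨h1, h2⟩ := hx
  constructor
  · intro k hk j hj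
    have hTT : j ∈ TTS T α u Z := Finset.mem_biUnion.mpr ⟨k, hk, hj⟩
    have hunp : j ∉ pinnedS α u Z ξ := by
      intro hp
      rw [pinnedS, Finset.mem_image] at hp
      obtain ⟨k', hk', hk'j⟩ := hp
      exact ((hξ.1 k' hk').2.2.1) (hk'j ▸ hTT)
    have := h1 j hunp
    rw [wval, if_neg hunp, LBf, if_pos (Or.inl hTT)] at this
    exact this
  · intro k hk hcond
    have hj1 : (ξ k).1 ∈ T k := (hξ.1 k hk).1
    have hxj : x ((ξ k).1) = (ξ k).2 := by
      rw [h2 _ (Finset.mem_image_of_mem _ hk), wval_pinned hs T θ α u Z hξ hk]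
    have := hcond _ hj1
    rw [hxj] at this
    exact absurd this (not_le.mpr (hξ.1 k hk).2.1)

lemma claim1 (x : Fin s →₀ ℕ)
    (hx1 : ∀ k ∈ PosS α u Z, Cond T θ k x) (hx2 : ∀ k ∈ NegS α u Z, ¬ Cond T θ k x) :
    Valid hs T θ α u Z (xi hs T θ α u Z x) ∧
    x ∈ Box (wpt T θ α u Z (xi hs T θ α u Z x)) (WSet α u Z (xi hs T θ α u Z x)) := by
  set ξ := xi hs T θ α u Z x with hξdef
  have hwne : ∀ k ∈ NegS α u Z, (wfil T θ x k).Nonempty := by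
    intro k hk
    have := hx2 k hk
    rw [Cond] at this
    push_neg at this
    obtain ⟨j, hj, hjlt⟩ := this
    exact ⟨j, Finset.mem_filter.mpr ⟨hj, by omega⟩⟩
  have hxik : ∀ k, ∀ hk : k ∈ NegS α u Z, ξ k =
      ((wfil T θ x k).min' (hwne k hk), x ((wfil T θ x k).min' (hwne k hk))) := by
    intro k hk
    rw [hξdef, xi, dif_pos ⟨hk, hwne k hk⟩]
  have hmem : ∀ k (hk : k ∈ NegS α u Z), (ξ k).1 ∈ wfil T θ x k := by
    intro k hk
    rw [hxik k hk]
    exact Finset.min'_mem _ (hwne k hk)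
  have hval : ∀ k (hk : k ∈ NegS α u Z), (ξ k).2 = x ((ξ k).1) := by
    intro k hk
    rw [hxik k hk]
  have hlt : ∀ k (hk : k ∈ NegS α u Z), x ((ξ k).1) < θ ((ξ k).1) := by
    intro k hk
    have := hmem k hk
    rw [wfil, Finset.mem_filter] at this
    exact this.2
  have hminle : ∀ k (hk : k ∈ NegS α u Z), ∀ j ∈ wfil T θ x k, (ξ k).1 ≤ j := by
    intro k hk j hj
    rw [hxik k hk]
    exact Finset.min'_le _ _ hj
  have hValid : Valid hs T θ α u Z ξ := by
    constructor
    · intro k hk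
      refine ⟨(Finset.mem_filter.mp (hmem k hk)).1, ?_, ?_, ?_, ?_⟩
      · rw [hval k hk]; exact hlt k hk
      · intro hTT
        rw [TTS, Finset.mem_biUnion] at hTT
        obtain ⟨k', hk', hjk'⟩ := hTT
        exact absurd (hx1 k' hk' _ hjk') (by have := hlt k hk; omega)
      · rintro k' hk' ⟨hT, hlt'⟩
        have : (ξ k).1 ∈ wfil T θ x k' :=
          Finset.mem_filter.mpr ⟨hT, hlt k hk⟩
        exact absurd (hminle k' hk' _ this) (by omega)
      · intro k' hk' heq
        rw [hval k' hk', hval k hk, heq]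
    · intro k hk
      rw [hξdef, xi, dif_neg (by tauto)]
  refine ⟨hValid, ?_⟩
  rw [mem_box_w_iff]
  constructor
  · intro j hj
    rw [wval, if_neg hj, LBf]
    split
    · next hcase =>
      rcases hcase with hTT | ⟨k, hk, hjT, hjlt⟩
      · rw [TTS, Finset.mem_biUnion] at hTT
        obtain ⟨k', hk', hjk'⟩ := hTT
        exact hx1 k' hk' _ hjk'
      · by_contra hcon
        have : j ∈ wfil T θ x k := Finset.mem_filter.mpr ⟨hjT, by omega⟩
        exact absurd (hminle k hk _ this) (by omega)
    · exact Nat.zero_le _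
  · intro j hj
    rw [pinnedS, Finset.mem_image] at hj
    obtain ⟨k, hk, rfl⟩ := hj
    rw [wval_pinned hs T θ α u Z hValid hk, hval k hk]

lemma claim3 {ξ : Fin M → Fin s × ℕ} (hξ : Valid hs T θ α u Z ξ) (x : Fin s →₀ ℕ)
    (hx : x ∈ Box (wpt T θ α u Z ξ) (WSet α u Z ξ)) :
    xi hs T θ α u Z x = ξ := by
  rw [mem_box_w_iff] at hx
  obtain ⟨h1, h2⟩ := hx
  funext k
  by_cases hk : k ∈ NegS α u Z
  · have hxj : x ((ξ k).1) = (ξ k).2 := by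
      rw [h2 _ (Finset.mem_image_of_mem _ hk), wval_pinned hs T θ α u Z hξ hk]
    have hjmem : (ξ k).1 ∈ wfil T θ x k :=
      Finset.mem_filter.mpr ⟨(hξ.1 k hk).1, by rw [hxj]; exact (hξ.1 k hk).2.1⟩
    have hne : (wfil T θ x k).Nonempty := ⟨_, hjmem⟩
    rw [xi, dif_pos ⟨hk, hne⟩]
    set jm := (wfil T θ x k).min' hne with hjm
    have hjmmem : jm ∈ wfil T θ x k := Finset.min'_mem _ _
    have hjmle : jm ≤ (ξ k).1 := Finset.min'_le _ _ hjmem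
    have hjmT : jm ∈ T k := (Finset.mem_filter.mp hjmmem).1
    have hjmlt : x jm < θ jm := (Finset.mem_filter.mp hjmmem).2
    have heq : jm = (ξ k).1 := by
      rcases lt_or_eq_of_le hjmle with hlt | heq
      · exfalso
        by_cases hpin : jm ∈ pinnedS α u Z ξ
        · rw [pinnedS, Finset.mem_image] at hpin
          obtain ⟨k', hk', hk'j⟩ := hpin
          exact ((hξ.1 k' hk').2.2.2.1 k hk) ⟨hk'j ▸ hjmT, by omega⟩
        · have := h1 jm hpin
          rw [wval, if_neg hpin, LBf,
            if_pos (Or.inr ⟨k, hk, hjmT, hlt⟩)] at this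
          omega
      · exact heq
    rw [Prod.ext_iff]
    refine ⟨heq, ?_⟩
    simp only
    rw [heq, hxj]
  · rw [xi, dif_neg (by tauto), hξ.2 k hk]

theorem sig_goodFam (T : Fin M → Finset (Fin s)) (θ : Fin s → ℕ)
    (hθ : ∀ j, 1 ≤ θ j) (α : Fin M → ℕ) (u : Fin M →₀ ℕ) (Z : Finset (Fin M)) :
    GoodFam ((sig T θ α) ⁻¹' Box u Z) (fun W => s + Z.card ≤ W.card + M) := by
  classical
  rcases Nat.eq_zero_or_pos s with hs0 | hs
  · -- s = 0 : every nonempty box predicate holds trivially; but we still need a family.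
    subst hs0
    by_cases hne : ((sig T θ α) ⁻¹' Box u Z).Nonempty
    · obtain ⟨x0, hx0⟩ := hne
      refine ⟨{(x0, ∅)}, ?_, ?_, ?_⟩
      · ext x
        have hxx : x = x0 := Subsingleton.elim x x0
        subst hxx
        simp only [Finset.mem_singleton, Set.mem_iUnion]
        constructor
        · rintro ⟨p, rfl, _⟩; exact hx0
        · intro h; exact ⟨(x, ∅), rfl, fun j => j.elim0, fun j => j.elim0⟩
      · intro p hp q hq hne'
        simp only [Finset.mem_singleton] at hp hq
        exact absurd (hp.trans hq.symm) hne'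
      · intro p hp
        simp only [Finset.mem_singleton] at hp
        subst hp
        simp only [Finset.card_empty]
        have : Z.card ≤ M := by
          calc Z.card ≤ (Finset.univ : Finset (Fin M)).card :=
                Finset.card_le_card (Finset.subset_univ _)
          _ = M := Finset.card_fin M
        omega
    · refine ⟨∅, ?_, by simp, by simp⟩
      simp only [Finset.notMem_empty, Set.iUnion_of_empty, Set.iUnion_empty]
      symm
      exact Set.not_nonempty_iff_eq_empty.mp hne
  by_cases hbad : (∃ k ∈ Z, α k < u k) ∨ (∃ k, k ∉ Z ∧ u k ≠ 0 ∧ u k ≠ α k)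
  · refine ⟨∅, ?_, by simp, by simp⟩
    simp only [Finset.notMem_empty, Set.iUnion_of_empty, Set.iUnion_empty]
    symm
    rw [Set.eq_empty_iff_forall_notMem]
    intro x hx
    obtain ⟨h1, h2⟩ := hx
    rcases hbad with ⟨k, hkZ, hk⟩ | ⟨k, hkZ, h0, hα⟩
    · have := h1 k hkZ
      rw [sig_apply] at this
      split at this <;> omega
    · have := h2 k hkZ
      rw [sig_apply] at this
      split at this <;> omega
  · push_neg at hbad
    obtain ⟨hZle', hnZ'⟩ := hbad
    have hZle : ∀ k ∈ Z, u k ≤ α k := hZle'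
    have hnZ : ∀ k ∉ Z, u k = 0 ∨ u k = α k := by
      intro k hk
      by_cases h0 : u k = 0
      · exact Or.inl h0
      · exact Or.inr (hnZ' k hk h0)
    set Θ := Finset.univ.sup θ with hΘdef
    have hθΘ : ∀ j, θ j ≤ Θ := fun j => Finset.le_sup (Finset.mem_univ j)
    have hΘ : 0 < Θ := lt_of_lt_of_le (hθ ⟨0, hs⟩) (hθΘ ⟨0, hs⟩)
    set dec : (Fin M → Fin s × Fin Θ) → (Fin M → Fin s × ℕ) :=
      fun ζ k => ((ζ k).1, ((ζ k).2 : ℕ)) with hdecdef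
    set F : Finset ((Fin s →₀ ℕ) × Finset (Fin s)) :=
      (Finset.univ.filter fun ζ : Fin M → Fin s × Fin Θ => Valid hs T θ α u Z (dec ζ)).image
        (fun ζ => (wpt T θ α u Z (dec ζ), WSet α u Z (dec ζ))) with hFdef
    refine ⟨F, ?_, ?_, ?_⟩
    · ext x
      simp only [Set.mem_iUnion, hFdef, Finset.mem_image, Finset.mem_filter, Finset.mem_univ,
        true_and]
      constructor
      · rintro ⟨p, ⟨ζ, hζ, rfl⟩, hx⟩
        rw [Set.mem_preimage, pre_char T θ α u Z hZle hnZ]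
        exact claim2 hs T θ α u Z hζ x hx
      · intro hx
        rw [Set.mem_preimage, pre_char T θ α u Z hZle hnZ] at hx
        obtain ⟨hV, hB⟩ := claim1 hs T θ α u Z x hx.1 hx.2
        have hbound : ∀ k, (xi hs T θ α u Z x k).2 < Θ := by
          intro k
          by_cases hk : k ∈ NegS α u Z
          · have h2 := (hV.1 k hk).2.1
            exact lt_of_lt_of_le h2 (hθΘ _)
          · rw [hV.2 k hk]
            exact hΘ
        set ζ : Fin M → Fin s × Fin Θ :=
          fun k => ((xi hs T θ α u Z x k).1, ⟨(xi hs T θ α u Z x k).2, hbound k⟩) with hζdef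
        have hdec : dec ζ = xi hs T θ α u Z x := by
          funext k
          simp [hdecdef, hζdef]
        refine ⟨_, ⟨ζ, by rw [hdec]; exact hV, rfl⟩, by rw [hdec]; exact hB⟩
    · rintro p hp q hq hne
      simp only [hFdef, Finset.mem_image, Finset.mem_filter, Finset.mem_univ, true_and] at hp hq
      obtain ⟨ζ1, h1, rfl⟩ := hp
      obtain ⟨ζ2, h2, rfl⟩ := hq
      rw [Set.disjoint_left]
      intro x hx1 hx2
      have e1 := claim3 hs T θ α u Z h1 x hx1
      have e2 := claim3 hs T θ α u Z h2 x hx2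
      have : dec ζ1 = dec ζ2 := e1.symm.trans e2
      exact hne (by rw [this])
    · rintro p hp
      simp only [hFdef, Finset.mem_image, Finset.mem_filter, Finset.mem_univ, true_and] at hp
      obtain ⟨ζ, hζ, rfl⟩ := hp
      simp only
      have h1 : (WSet α u Z (dec ζ)).card = s - (pinnedS α u Z (dec ζ)).card := by
        rw [WSet, Finset.card_sdiff_of_subset (Finset.subset_univ _), Finset.card_fin]
      have h2 : (pinnedS α u Z (dec ζ)).card ≤ (NegS α u Z).card := Finset.card_image_le
      have h3 : (NegS α u Z).card + Z.card ≤ M := by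
        have hd : Disjoint (NegS α u Z) Z := by
          rw [Finset.disjoint_left]
          intro k hk hkZ
          rw [NegS, Finset.mem_filter] at hk
          exact hk.2.1 hkZ
        calc (NegS α u Z).card + Z.card = (NegS α u Z ∪ Z).card :=
              (Finset.card_union_of_disjoint hd).symm
        _ ≤ (Finset.univ : Finset (Fin M)).card := Finset.card_le_card (Finset.subset_univ _)
        _ = M := Finset.card_fin M
      have h4 : (pinnedS α u Z (dec ζ)).card ≤ s := by
        calc (pinnedS α u Z (dec ζ)).card ≤ (Finset.univ : Finset (Fin s)).card :=
              Finset.card_le_card (Finset.subset_univ _)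
        _ = s := Finset.card_fin s
      omega

end Sig

section Model

/-- the model: the maximal monomial ideal in `m` variables -/
def modelSet (m : ℕ) : Set (Fin m →₀ ℕ) := {c | ∃ i, 1 ≤ c i}

noncomputable def modelPart {m : ℕ} (hm : 0 < m) : CPart (modelSet m) where
  r := m
  rpos := hm
  u := fun i => Finsupp.single i 1
  Z := fun i => Finset.Ici i
  cover := by
    classical
    ext c
    simp only [Set.mem_iUnion]
    constructor
    · rintro ⟨i, hi⟩
      have hne : (Finset.univ.filter fun i => 1 ≤ c i).Nonempty :=
        ⟨i, Finset.mem_filter.mpr ⟨Finset.mem_univ _, hi⟩⟩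
      set i0 := (Finset.univ.filter fun i => 1 ≤ c i).min' hne with hi0
      have hi0mem : 1 ≤ c i0 :=
        (Finset.mem_filter.mp ((Finset.univ.filter fun i => 1 ≤ c i).min'_mem hne)).2
      refine ⟨i0, ?_, ?_⟩
      · intro j hj
        by_cases hji : j = i0
        · subst hji; simpa using hi0mem
        · rw [Finsupp.single_apply, if_neg (by exact fun h => hji h.symm)]
          exact Nat.zero_le _
      · intro j hj
        rw [Finset.mem_Ici, not_le] at hj
        have : ¬ (1 ≤ c j) := by
          intro hc
          have : i0 ≤ j := Finset.min'_le (Finset.univ.filter fun i => 1 ≤ c i) j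
            (Finset.mem_filter.mpr ⟨Finset.mem_univ j, hc⟩)
          omega
        rw [Finsupp.single_apply, if_neg (by intro h; subst h; exact absurd le_rfl (not_le.mpr hj))]
        omega
    · rintro ⟨i, h1, h2⟩
      refine ⟨i, ?_⟩
      have := h1 i (Finset.mem_Ici.mpr le_rfl)
      simpa using this
  disj := by
    intro i j hij
    rw [Set.disjoint_left]
    intro c hc1 hc2
    rcases lt_or_gt_of_ne hij with h | h
    · have ha : 1 ≤ c i := by
        have := hc1.1 i (Finset.mem_Ici.mpr le_rfl)
        simpa using this
      have hb : c i = 0 := by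
        have := hc2.2 i (by rw [Finset.mem_Ici]; omega)
        rw [this, Finsupp.single_apply, if_neg (by intro hh; subst hh; omega)]
      omega
    · have ha : 1 ≤ c j := by
        have := hc2.1 j (Finset.mem_Ici.mpr le_rfl)
        simpa using this
      have hb : c j = 0 := by
        have := hc1.2 j (by rw [Finset.mem_Ici]; omega)
        rw [this, Finsupp.single_apply, if_neg (by intro hh; subst hh; omega)]
      omega

end Model

section Main

theorem csdepth_eq {m n : ℕ} (hm : 0 < m) (S : Fin m → Finset (Fin n))
    (hS : ∀ i, (S i).Nonempty)
    (hdisj : ∀ i i', i ≠ i' → Disjoint (S i) (S i')) (a : Fin n → ℕ)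
    (ha : ∀ i, ∀ j ∈ S i, 1 ≤ a j) :
    csdepth {x : Fin n →₀ ℕ | ∃ i, ∀ j ∈ S i, a j ≤ x j} + m
      = n + csdepth (modelSet m) := by
  classical
  set A : Set (Fin n →₀ ℕ) := {x | ∃ i, ∀ j ∈ S i, a j ≤ x j} with hAdef
  set B : Set (Fin m →₀ ℕ) := modelSet m with hBdef
  -- the map from source `A` to model `B`
  set T1 : Fin m → Finset (Fin n) := S with hT1
  set θ1 : Fin n → ℕ := fun j => max (a j) 1 with hθ1
  set α1 : Fin m → ℕ := fun _ => 1 with hα1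
  have hσ1 : ∀ x, sig T1 θ1 α1 x ∈ B ↔ x ∈ A := by
    intro x
    simp only [hBdef, modelSet, Set.mem_setOf_eq, hAdef, sig_apply]
    constructor
    · rintro ⟨i, hi⟩
      refine ⟨i, ?_⟩
      by_cases hc : Cond T1 θ1 i x
      · intro j hj
        have := hc j hj
        rw [hθ1] at this
        simp only at this
        omega
      · rw [if_neg hc] at hi; omega
    · rintro ⟨i, hi⟩
      refine ⟨i, ?_⟩
      have hc : Cond T1 θ1 i x := by
        intro j hj
        have h1 := hi j hj
        have h2 := ha i j hj
        rw [hθ1]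
        simp only
        omega
      rw [if_pos hc, hα1]
  have hA : A.Nonempty := by
    refine ⟨Finsupp.equivFunOnFinite.symm a, ⟨⟨0, hm⟩, ?_⟩⟩
    intro j hj
    exact le_of_eq rfl
  have hbox1 : ∀ u Z, GoodFam ((sig T1 θ1 α1) ⁻¹' Box u Z)
      (fun W => n + Z.card ≤ W.card + m) :=
    sig_goodFam T1 θ1 (fun j => le_max_right _ _) α1
  -- the map from model `B` to `A`
  set T2 : Fin n → Finset (Fin m) := fun j => Finset.univ.filter fun i => j ∈ S i with hT2
  set θ2 : Fin m → ℕ := fun _ => 1 with hθ2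
  have hσ2 : ∀ c, sig T2 θ2 a c ∈ A ↔ c ∈ B := by
    intro c
    simp only [hBdef, modelSet, Set.mem_setOf_eq, hAdef, sig_apply]
    constructor
    · rintro ⟨i, hi⟩
      obtain ⟨j0, hj0⟩ := hS i
      have h1 := hi j0 hj0
      have h2 := ha i j0 hj0
      by_cases hc : Cond T2 θ2 j0 c
      · have : 1 ≤ c i := by
          have := hc i (Finset.mem_filter.mpr ⟨Finset.mem_univ _, hj0⟩)
          exact this
        exact ⟨i, this⟩
      · rw [if_neg hc] at h1; omega
    · rintro ⟨i, hi⟩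
      refine ⟨i, ?_⟩
      intro j hj
      have hc : Cond T2 θ2 j c := by
        intro i' hi'
        rw [hT2, Finset.mem_filter] at hi'
        have : i' = i := by
          by_contra hne
          exact absurd hj (Finset.disjoint_left.mp (hdisj i' i hne) hi'.2)
        rw [this]
        exact hi
      rw [if_pos hc]
  have hB : B.Nonempty := by
    refine ⟨Finsupp.single ⟨0, hm⟩ 1, ⟨⟨0, hm⟩, ?_⟩⟩
    simp
  have hbox2 : ∀ u Z, GoodFam ((sig T2 θ2 a) ⁻¹' Box u Z)
      (fun W => m + Z.card ≤ W.card + n) :=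
    sig_goodFam T2 θ2 (fun _ => le_rfl) a
  -- transfers
  obtain ⟨Pb, hPb⟩ := exists_cpart_sdepth_eq B ⟨modelPart hm⟩
  obtain ⟨Qa, hQa⟩ := transfer A B (sig T1 θ1 α1) hσ1 hA m n hbox1 Pb
  obtain ⟨Pa, hPa⟩ := exists_cpart_sdepth_eq A ⟨Qa⟩
  obtain ⟨Qb, hQb⟩ := transfer B A (sig T2 θ2 a) hσ2 hB n m hbox2 Pa
  have l1 := csdepth_le A Qa
  have l2 := csdepth_le B Qb
  rw [hPb] at hQa
  rw [hPa] at hQb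
  omega

end Main




variable (K : Type*) [Field K]

/-- The submodule of polynomials with support in `A`. -/
def MS (A : Set (Fin n →₀ ℕ)) : Submodule K (MvPolynomial (Fin n) K) where
  carrier := {p | ∀ d ∈ p.support, d ∈ A}
  add_mem' := by
    intro p q hp hq d hd
    rcases Finset.mem_union.mp (MvPolynomial.support_add hd) with h | h
    · exact hp d h
    · exact hq d h
  zero_mem' := by simp
  smul_mem' := fun c p hp d hd => hp d (MvPolynomial.support_smul hd)

lemma mem_MS {A : Set (Fin n →₀ ℕ)} {p : MvPolynomial (Fin n) K} :
    p ∈ MS K A ↔ ∀ d ∈ p.support, d ∈ A := Iff.rfl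

lemma monomial_mem_MS {A : Set (Fin n →₀ ℕ)} {d : Fin n →₀ ℕ} {c : K} (hc : c ≠ 0) :
    monomial d c ∈ MS K A ↔ d ∈ A := by
  rw [mem_MS]
  constructor
  · intro h
    exact h d (by rw [MvPolynomial.support_monomial, if_neg hc]; exact Finset.mem_singleton_self d)
  · intro h e he
    rw [MvPolynomial.support_monomial, if_neg hc, Finset.mem_singleton] at he
    exact he ▸ h

lemma MS_mono {A B : Set (Fin n →₀ ℕ)} (h : A ⊆ B) : MS K A ≤ MS K B :=
  fun _ hp d hd => h (hp d hd)

lemma support_sub_monomial (p : MvPolynomial (Fin n) K) (d : Fin n →₀ ℕ) :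
    (p - monomial d (coeff d p)).support = p.support.erase d := by
  ext e
  rw [MvPolynomial.mem_support_iff, Finset.mem_erase, MvPolynomial.mem_support_iff,
    MvPolynomial.coeff_sub, MvPolynomial.coeff_monomial]
  by_cases he : d = e
  · subst he; simp
  · simp only [if_neg he, sub_zero]
    constructor
    · intro h; exact ⟨fun hc => he hc.symm, h⟩
    · intro ⟨h1, h2⟩; exact h2

lemma span_monomials_eq (A : Set (Fin n →₀ ℕ)) :
    Submodule.span K ((fun d => monomial d (1 : K)) '' A) = MS K A := by
  apply le_antisymm
  · rw [Submodule.span_le]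
    rintro p ⟨d, hd, rfl⟩
    intro e he
    rw [MvPolynomial.support_monomial, if_neg (one_ne_zero : (1:K) ≠ 0),
      Finset.mem_singleton] at he
    exact he ▸ hd
  · intro p hp
    generalize hN : p.support.card = N
    induction N generalizing p with
    | zero =>
      have : p = 0 := by
        rw [← MvPolynomial.support_eq_empty, ← Finset.card_eq_zero, hN]
      exact this ▸ Submodule.zero_mem _
    | succ N ih =>
      have hne : p.support.Nonempty := by rw [← Finset.card_pos, hN]; omega
      obtain ⟨d, hd⟩ := hne
      have hsplit : p = (p - monomial d (coeff d p)) + monomial d (coeff d p) := by ring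
      rw [hsplit]
      apply Submodule.add_mem
      · apply ih
        · intro e he
          rw [support_sub_monomial] at he
          exact hp e (Finset.mem_of_mem_erase he)
        · rw [support_sub_monomial, Finset.card_erase_of_mem hd, hN]
          omega
      · have heq : monomial d (coeff d p) = (coeff d p) • monomial d (1 : K) := by
          rw [MvPolynomial.smul_monomial, smul_eq_mul, mul_one]
        rw [heq]
        exact Submodule.smul_mem _ _ (Submodule.subset_span ⟨d, hp d hd, rfl⟩)

lemma MS_iUnion {ι : Type*} (s : ι → Set (Fin n →₀ ℕ)) :
    MS K (⋃ i, s i) = ⨆ i, MS K (s i) := by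
  apply le_antisymm
  · intro p hp
    generalize hN : p.support.card = N
    induction N generalizing p with
    | zero =>
      have : p = 0 := by
        rw [← MvPolynomial.support_eq_empty, ← Finset.card_eq_zero, hN]
      exact this ▸ Submodule.zero_mem _
    | succ N ih =>
      have hne : p.support.Nonempty := by rw [← Finset.card_pos, hN]; omega
      obtain ⟨d, hd⟩ := hne
      obtain ⟨i, hi⟩ := Set.mem_iUnion.mp (hp d hd)
      have hsplit : p = (p - monomial d (coeff d p)) + monomial d (coeff d p) := by ring
      rw [hsplit]
      apply Submodule.add_mem
      · apply ih
        · intro e he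
          rw [support_sub_monomial] at he
          exact hp e (Finset.mem_of_mem_erase he)
        · rw [support_sub_monomial, Finset.card_erase_of_mem hd, hN]
          omega
      · have hmem : monomial d (coeff d p) ∈ MS K (s i) := by
          intro e he
          rw [MvPolynomial.support_monomial] at he
          split at he
          · exact absurd he (Finset.notMem_empty e)
          · rw [Finset.mem_singleton] at he
            exact he ▸ hi
        exact le_iSup (fun i => MS K (s i)) i hmem
  · exact iSup_le fun i => MS_mono K (Set.subset_iUnion s i)

lemma MS_disjoint {A B : Set (Fin n →₀ ℕ)} (h : Disjoint A B) :
    Disjoint (MS K A) (MS K B) := by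
  rw [Submodule.disjoint_def]
  intro p hpA hpB
  by_contra hp0
  obtain ⟨d, hd⟩ := MvPolynomial.support_eq_empty.not.mpr hp0 |> fun h' =>
    Finset.nonempty_iff_ne_empty.mpr h'
  exact Set.disjoint_left.mp h (hpA d hd) (hpB d hd)

lemma iSupIndep_MS {ι : Type*} (s : ι → Set (Fin n →₀ ℕ))
    (h : ∀ i j, i ≠ j → Disjoint (s i) (s j)) :
    iSupIndep fun i => MS K (s i) := by
  intro i
  have hle : (⨆ j, ⨆ _ : j ≠ i, MS K (s j)) ≤ MS K (⋃ j : {j // j ≠ i}, s j) := by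
    apply iSup_le
    intro j
    apply iSup_le
    intro hj
    exact MS_mono K (Set.subset_iUnion (fun j : {j // j ≠ i} => s j) ⟨j, hj⟩)
  refine Disjoint.mono_right hle (MS_disjoint K ?_)
  rw [Set.disjoint_iUnion_right]
  exact fun j => h i j (Ne.symm j.2)

variable {m : ℕ}

def monSet (w : Fin m → (Fin n →₀ ℕ)) : Set (Fin n →₀ ℕ) := {d | ∃ i, w i ≤ d}

lemma mem_spanI (w : Fin m → (Fin n →₀ ℕ)) (p : MvPolynomial (Fin n) K) :
    p ∈ Ideal.span (Set.range fun i => monomial (w i) (1 : K)) ↔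
      ∀ d ∈ p.support, d ∈ monSet w := by
  have hr : (Set.range fun i => monomial (w i) (1 : K)) =
      (fun s => monomial s (1 : K)) '' (Set.range w) := by
    rw [← Set.range_comp]; rfl
  rw [hr, MvPolynomial.mem_ideal_span_monomial_image]
  constructor
  · intro h d hd
    obtain ⟨si, ⟨i, rfl⟩, hsi⟩ := h d hd
    exact ⟨i, hsi⟩
  · intro h d hd
    obtain ⟨i, hi⟩ := h d hd
    exact ⟨w i, ⟨i, rfl⟩, hi⟩

lemma restrict_eq (w : Fin m → (Fin n →₀ ℕ)) :
    Submodule.restrictScalars K (Ideal.span (Set.range fun i => monomial (w i) (1 : K))) =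
      MS K (monSet w) := by
  ext p
  rw [Submodule.restrictScalars_mem, mem_spanI, mem_MS]

lemma monomial_mem_spanI (w : Fin m → (Fin n →₀ ℕ)) (d : Fin n →₀ ℕ) :
    monomial d (1 : K) ∈ Ideal.span (Set.range fun i => monomial (w i) (1 : K)) ↔
      d ∈ monSet w := by
  rw [mem_spanI]
  constructor
  · intro h
    apply h d
    rw [MvPolynomial.support_monomial, if_neg (one_ne_zero : (1:K) ≠ 0)]
    exact Finset.mem_singleton_self d
  · intro h e he
    rw [MvPolynomial.support_monomial, if_neg (one_ne_zero : (1:K) ≠ 0),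
      Finset.mem_singleton] at he
    exact he ▸ h

lemma box_image_eq (u : Fin n →₀ ℕ) (Z : Finset (Fin n)) :
    {p : MvPolynomial (Fin n) K | ∃ τ : Fin n →₀ ℕ, (τ.support : Set (Fin n)) ⊆ Z ∧
      p = monomial (u + τ) (1 : K)} = (fun d => monomial d (1 : K)) '' Box u Z := by
  ext p
  simp only [Set.mem_image, Set.mem_setOf_eq]
  constructor
  · rintro ⟨τ, hτ, rfl⟩
    refine ⟨u + τ, ⟨?_, ?_⟩, rfl⟩
    · intro j _
      rw [Finsupp.add_apply]
      exact Nat.le_add_right _ _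
    · intro j hj
      have hτj : τ j = 0 := by
        by_contra hc
        exact hj (hτ (Finsupp.mem_support_iff.mpr hc))
      rw [Finsupp.add_apply, hτj, add_zero]
  · rintro ⟨d, ⟨h1, h2⟩, rfl⟩
    refine ⟨d - u, ?_, ?_⟩
    · intro j hj
      rw [Finset.mem_coe, Finsupp.mem_support_iff, Finsupp.tsub_apply] at hj
      by_contra hjZ
      rw [h2 j hjZ] at hj
      omega
    · have : u + (d - u) = d := by
        ext j
        rw [Finsupp.add_apply, Finsupp.tsub_apply]
        by_cases hj : j ∈ Z
        · have := h1 j hj; omega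
        · have := h2 j hj; omega
      rw [this]

section Radical

open scoped MonomialOrder

lemma coeff_mul_max (p r : MvPolynomial (Fin n) K)
    (dp dr : Fin n →₀ ℕ)
    (hp : ∀ e ∈ p.support, toLex e ≤ toLex dp)
    (hr : ∀ e ∈ r.support, toLex e ≤ toLex dr) :
    coeff (dp + dr) (p * r) = coeff dp p * coeff dr r := by
  classical
  rw [MvPolynomial.coeff_mul]
  rw [Finset.sum_eq_single_of_mem (dp, dr) (Finset.HasAntidiagonal.mem_antidiagonal.mpr rfl)]
  · rintro ⟨x, y⟩ hxy hne
    rw [Finset.HasAntidiagonal.mem_antidiagonal] at hxy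
    by_cases hx : coeff x p = 0
    · simp [hx]
    by_cases hy : coeff y r = 0
    · simp [hy]
    have h1 := hp x (MvPolynomial.mem_support_iff.mpr hx)
    have h2 := hr y (MvPolynomial.mem_support_iff.mpr hy)
    have hsum : toLex x + toLex y = toLex dp + toLex dr := by
      rw [← toLex_add, ← toLex_add, hxy]
    have hx' : toLex x = toLex dp := by
      by_contra hne'
      have hlt : toLex x < toLex dp := lt_of_le_of_ne h1 hne'
      exact absurd hsum (ne_of_lt (add_lt_add_of_lt_of_le hlt h2))
    have hy' : toLex y = toLex dr := by
      by_contra hne'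
      have hlt : toLex y < toLex dr := lt_of_le_of_ne h2 hne'
      exact absurd hsum (ne_of_lt (add_lt_add_of_le_of_lt h1 hlt))
    exact absurd (Prod.ext (toLex.injective hx') (toLex.injective hy')) hne


lemma pow_max (p : MvPolynomial (Fin n) K) (dp : Fin n →₀ ℕ)
    (hp : ∀ e ∈ p.support, toLex e ≤ toLex dp) (k : ℕ) :
    (∀ e ∈ (p ^ k).support, toLex e ≤ toLex (k • dp)) ∧
      coeff (k • dp) (p ^ k) = (coeff dp p) ^ k := by
  classical
  induction k with
  | zero =>
    constructor
    · intro e he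
      rw [pow_zero] at he
      have : e = 0 := by
        have h1 : (1 : MvPolynomial (Fin n) K) = monomial 0 1 := by
          rw [MvPolynomial.monomial_zero']; rfl
        rw [h1, MvPolynomial.support_monomial, if_neg (one_ne_zero : (1:K) ≠ 0),
          Finset.mem_singleton] at he
        exact he
      rw [this, zero_smul]
    · rw [pow_zero, pow_zero, zero_smul]
      simp [MvPolynomial.coeff_zero_one]
  | succ k ih =>
    have hss : ((k + 1) • dp) = k • dp + dp := succ_nsmul dp k
    constructor
    · intro e he
      rw [pow_succ] at he
      have := MvPolynomial.support_mul (p ^ k) p he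
      rw [Finset.mem_add] at this
      obtain ⟨y, hy, z, hz, rfl⟩ := this
      rw [hss, toLex_add, toLex_add]
      exact add_le_add (ih.1 y hy) (hp z hz)
    · rw [pow_succ, hss, coeff_mul_max K (p ^ k) p (k • dp) dp ih.1 hp, ih.2, pow_succ]

variable {m : ℕ}

/-- squarefree part of an exponent vector. -/
noncomputable def sqf (w : Fin n →₀ ℕ) : Fin n →₀ ℕ := Finsupp.mapRange (fun t => min t 1) rfl w

lemma sqf_apply (w : Fin n →₀ ℕ) (j : Fin n) : sqf w j = min (w j) 1 :=
  Finsupp.mapRange_apply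

theorem radical_span_eq (w : Fin m → (Fin n →₀ ℕ)) (hw : ∀ i, w i ≠ 0) :
    (Ideal.span (Set.range fun i => monomial (w i) (1 : K))).radical =
      Ideal.span (Set.range fun i => monomial (sqf (w i)) (1 : K)) := by
  classical
  set I := Ideal.span (Set.range fun i => monomial (w i) (1 : K)) with hI
  set J := Ideal.span (Set.range fun i => monomial (sqf (w i)) (1 : K)) with hJ
  have hJrad : J ≤ I.radical := by
    rw [hJ, Ideal.span_le]
    rintro _ ⟨i, rfl⟩
    rw [SetLike.mem_coe, Ideal.mem_radical_iff]
    set N := Finset.univ.sup fun j => w i j with hNdef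
    refine ⟨N, ?_⟩
    rw [MvPolynomial.monomial_pow, one_pow, hI, mem_spanI]
    intro d hd
    rw [MvPolynomial.support_monomial, if_neg (one_ne_zero : (1:K) ≠ 0),
      Finset.mem_singleton] at hd
    subst hd
    refine ⟨i, ?_⟩
    rw [Finsupp.le_def]
    intro j
    rw [Finsupp.smul_apply, sqf_apply, smul_eq_mul]
    have hNj : w i j ≤ N := Finset.le_sup (Finset.mem_univ j)
    rcases Nat.eq_zero_or_pos (w i j) with h0 | h1
    · omega
    · have : min (w i j) 1 = 1 := by omega
      rw [this]; omega
  apply le_antisymm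
  · -- radical I ≤ J
    intro p hp
    generalize hNc : p.support.card = N
    induction N using Nat.strong_induction_on generalizing p with
    | _ N ih =>
    rcases Nat.eq_zero_or_pos N with hN0 | hNpos
    · subst hN0
      have : p = 0 := by
        rw [← MvPolynomial.support_eq_empty, ← Finset.card_eq_zero, hNc]
      exact this ▸ Ideal.zero_mem J
    · have hne : p.support.Nonempty := by rw [← Finset.card_pos, hNc]; omega
      obtain ⟨d0, hd0mem, hd0eq⟩ := Finset.exists_mem_eq_sup' hne
        (fun e : Fin n →₀ ℕ => toLex e)
      have hmax : ∀ e ∈ p.support, toLex e ≤ toLex d0 := by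
        intro e he
        rw [← hd0eq]
        exact Finset.le_sup' (fun e : Fin n →₀ ℕ => toLex e) he
      obtain ⟨k, hk⟩ := Ideal.mem_radical_iff.mp hp
      rcases Nat.eq_zero_or_pos k with hk0 | hkpos
      · subst hk0
        rw [pow_zero, hI, mem_spanI] at hk
        have h1 : (0 : Fin n →₀ ℕ) ∈ (1 : MvPolynomial (Fin n) K).support := by
          rw [MvPolynomial.mem_support_iff, MvPolynomial.coeff_zero_one]
          exact one_ne_zero
        obtain ⟨i, hi⟩ := hk 0 h1
        refine absurd ?_ (hw i)
        ext j
        exact Nat.le_zero.mp (Finsupp.le_def.mp hi j)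
      · have hpow := pow_max K p d0 hmax k
        have hc0 : coeff d0 p ≠ 0 := MvPolynomial.mem_support_iff.mp hd0mem
        have hck : coeff (k • d0) (p ^ k) ≠ 0 := by
          rw [hpow.2]
          exact pow_ne_zero k hc0
        rw [hI, mem_spanI] at hk
        obtain ⟨i, hi⟩ := hk (k • d0) (MvPolynomial.mem_support_iff.mpr hck)
        have hsqf : sqf (w i) ≤ d0 := by
          rw [Finsupp.le_def]
          intro j
          rw [sqf_apply]
          have := Finsupp.le_def.mp hi j
          rw [Finsupp.smul_apply, smul_eq_mul] at this
          rcases Nat.eq_zero_or_pos (w i j) with h0 | h1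
          · omega
          · have hd0j : 1 ≤ d0 j := by
              by_contra hcon
              push_neg at hcon
              interval_cases h : d0 j
              · omega
            omega
        have hmono : monomial d0 (coeff d0 p) ∈ J := by
          rw [hJ]
          have h1 : monomial d0 (1 : K) ∈ J := by
            rw [hJ, monomial_mem_spanI]
            exact ⟨i, hsqf⟩
          have heq : monomial d0 (coeff d0 p) = C (coeff d0 p) * monomial d0 (1 : K) := by
            rw [MvPolynomial.C_mul_monomial, mul_one]
          rw [heq, ← hJ]
          exact Ideal.mul_mem_left _ _ h1
        have hq : p - monomial d0 (coeff d0 p) ∈ I.radical := by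
          apply Ideal.sub_mem _ hp (hJrad hmono)
        have hqcard : (p - monomial d0 (coeff d0 p)).support.card < N := by
          rw [support_sub_monomial, Finset.card_erase_of_mem hd0mem, hNc]
          omega
        have hqJ := ih _ hqcard hq rfl
        have : p = (p - monomial d0 (coeff d0 p)) + monomial d0 (coeff d0 p) := by ring
        rw [this]
        exact Ideal.add_mem J hqJ hmono
  · exact hJrad

end Radical


section Convert

variable (K : Type*) [Field K] {n : ℕ}

lemma stanleySpace_eq (u : Fin n →₀ ℕ) (Z : Finset (Fin n)) :
    StanleySpace K u Z = MS K (Box u Z) := by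
  rw [StanleySpace, box_image_eq, span_monomials_eq]

variable {m : ℕ} (w : Fin m → (Fin n →₀ ℕ))

lemma iSup_stanley_eq {r : ℕ} (U : Fin r → (Fin n →₀ ℕ)) (ZZ : Fin r → Finset (Fin n)) :
    (⨆ i, StanleySpace K (U i) (ZZ i)) = MS K (⋃ i, Box (U i) (ZZ i)) := by
  rw [MS_iUnion]
  exact iSup_congr fun i => stanleySpace_eq K _ _

def toCPart (D : StanleyDecomposition K
    (Ideal.span (Set.range fun i => monomial (w i) (1 : K)))) : CPart (monSet w) where
  r := D.r
  rpos := D.rpos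
  u := D.u
  Z := D.Z
  cover := by
    ext d
    rw [← monomial_mem_MS K (one_ne_zero : (1:K) ≠ 0)
        (A := ⋃ i, Box (D.u i) (D.Z i)),
      ← iSup_stanley_eq K D.u D.Z, ← D.isSup, Submodule.restrictScalars_mem,
      monomial_mem_spanI]
  disj := by
    intro i j hij
    rw [Set.disjoint_left]
    intro d hdi hdj
    have h1 : monomial d (1 : K) ∈ StanleySpace K (D.u i) (D.Z i) := by
      rw [stanleySpace_eq, monomial_mem_MS K (one_ne_zero : (1:K) ≠ 0)]
      exact hdi
    have h2 : monomial d (1 : K) ∈ StanleySpace K (D.u j) (D.Z j) := by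
      rw [stanleySpace_eq, monomial_mem_MS K (one_ne_zero : (1:K) ≠ 0)]
      exact hdj
    have hle : StanleySpace K (D.u j) (D.Z j) ≤
        ⨆ k, ⨆ _ : k ≠ i, StanleySpace K (D.u k) (D.Z k) :=
      le_iSup_of_le j (le_iSup_of_le (Ne.symm hij) le_rfl)
    have h0 : monomial d (1 : K) = 0 :=
      Submodule.disjoint_def.mp (D.indep i) _ h1 (hle h2)
    have : (1 : K) = 0 := by
      have := congrArg (MvPolynomial.coeff d) h0
      rwa [MvPolynomial.coeff_monomial, if_pos rfl, MvPolynomial.coeff_zero] at this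
    exact one_ne_zero this

def ofCPart (P : CPart (monSet w)) : StanleyDecomposition K
    (Ideal.span (Set.range fun i => monomial (w i) (1 : K))) where
  r := P.r
  rpos := P.rpos
  u := P.u
  Z := P.Z
  mem := by
    intro i
    rw [monomial_mem_spanI]
    have h1 : P.u i ∈ ⋃ i, Box (P.u i) (P.Z i) :=
      Set.mem_iUnion.mpr ⟨i, self_mem_box _ _⟩
    rwa [← P.cover] at h1
  isSup := by
    have hc : MS K (monSet w) = ⨆ i, MS K (Box (P.u i) (P.Z i)) := by
      rw [← MS_iUnion K]
      exact congrArg (MS K) P.cover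
    rw [restrict_eq K w, hc]
    exact (iSup_congr fun i => stanleySpace_eq K (P.u i) (P.Z i)).symm
  indep := by
    have hfe : (fun i => StanleySpace K (P.u i) (P.Z i)) =
        fun i => MS K (Box (P.u i) (P.Z i)) :=
      funext fun i => stanleySpace_eq K _ _
    show iSupIndep fun i => StanleySpace K (P.u i) (P.Z i)
    rw [hfe]
    exact iSupIndep_MS K _ P.disj

lemma sdepth_eq : Ideal.sdepth K (Ideal.span (Set.range fun i => monomial (w i) (1 : K)))
    = csdepth (monSet w) := by
  unfold Ideal.sdepth csdepth
  congr 1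
  ext x
  constructor
  · rintro ⟨D, rfl⟩
    exact ⟨toCPart K w D, rfl⟩
  · rintro ⟨P, rfl⟩
    exact ⟨ofCPart K w P, rfl⟩

end Convert

end SDepth

/-- If `I = (v₁, …, vₘ)` is a complete intersection monomial ideal (the monomial
generators are nonconstant with pairwise disjoint supports, i.e. they form a regular
sequence), then `sdepth I = sdepth √I`. -/
theorem sdepth_ci_radical (n : ℕ) (K : Type*) [Field K]
    (m : ℕ) (v : Fin m → (Fin n →₀ ℕ)) (hv : ∀ i, v i ≠ 0)
    (hdisj : ∀ i j, i ≠ j → Disjoint (v i).support (v j).support) :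
    Ideal.sdepth K (Ideal.span (Set.range fun i => monomial (v i) (1 : K))) =
    Ideal.sdepth K
      (Ideal.span (Set.range fun i => monomial (v i) (1 : K))).radical := by
  classical
  rcases Nat.eq_zero_or_pos m with hm0 | hm
  · subst hm0
    have h1 : (Set.range fun i : Fin 0 => monomial (v i) (1 : K)) = ∅ :=
      Set.range_eq_empty _
    rw [h1, Ideal.span_empty]
    have h2 : (⊥ : Ideal (MvPolynomial (Fin n) K)).radical = ⊥ := by
      have h3 := nilradical_eq_zero (MvPolynomial (Fin n) K)
      rwa [nilradical, Ideal.zero_eq_bot] at h3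
    rw [h2]
  · rw [SDepth.radical_span_eq K v hv,
      SDepth.sdepth_eq K v, SDepth.sdepth_eq K (fun i => SDepth.sqf (v i))]
    set S : Fin m → Finset (Fin n) := fun i => (v i).support with hSdef
    have hSne : ∀ i, (S i).Nonempty := fun i =>
      Finsupp.support_nonempty_iff.mpr (hv i)
    have hSdisj : ∀ i i', i ≠ i' → Disjoint (S i) (S i') := fun i i' h => hdisj i i' h
    set a : Fin n → ℕ := fun j => ∑ i, v i j with hadef
    have hax : ∀ i, ∀ j ∈ S i, a j = v i j := by
      intro i j hj
      rw [hadef]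
      simp only
      rw [Finset.sum_eq_single i]
      · intro i' _ hne
        by_contra hne0
        have hmem : j ∈ (v i').support := Finsupp.mem_support_iff.mpr hne0
        exact (Finset.disjoint_left.mp (hdisj i' i hne) hmem) hj
      · intro h
        exact absurd (Finset.mem_univ i) h
    have ha1 : ∀ i, ∀ j ∈ S i, 1 ≤ a j := by
      intro i j hj
      rw [hax i j hj]
      exact Nat.one_le_iff_ne_zero.mpr (Finsupp.mem_support_iff.mp hj)
    have hmon1 : SDepth.monSet v = {x : Fin n →₀ ℕ | ∃ i, ∀ j ∈ S i, a j ≤ x j} := by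
      ext d
      simp only [SDepth.monSet, Set.mem_setOf_eq]
      constructor
      · rintro ⟨i, hi⟩
        exact ⟨i, fun j hj => (hax i j hj) ▸ (Finsupp.le_def.mp hi j)⟩
      · rintro ⟨i, hi⟩
        refine ⟨i, Finsupp.le_def.mpr fun j => ?_⟩
        by_cases hj : j ∈ S i
        · rw [← hax i j hj]
          exact hi j hj
        · rw [Finsupp.notMem_support_iff.mp hj]
          exact Nat.zero_le _
    have hmon2 : SDepth.monSet (fun i => SDepth.sqf (v i)) =
        {x : Fin n →₀ ℕ | ∃ i, ∀ j ∈ S i, (fun _ : Fin n => 1) j ≤ x j} := by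
      ext d
      simp only [SDepth.monSet, Set.mem_setOf_eq]
      constructor
      · rintro ⟨i, hi⟩
        refine ⟨i, fun j hj => ?_⟩
        have := Finsupp.le_def.mp hi j
        rw [SDepth.sqf_apply] at this
        have hv1 : 1 ≤ v i j := Nat.one_le_iff_ne_zero.mpr (Finsupp.mem_support_iff.mp hj)
        show 1 ≤ d j
        omega
      · rintro ⟨i, hi⟩
        refine ⟨i, Finsupp.le_def.mpr fun j => ?_⟩
        rw [SDepth.sqf_apply]
        by_cases hj : j ∈ S i
        · have h9 : 1 ≤ d j := hi j hj
          omega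
        · rw [Finsupp.notMem_support_iff.mp hj]
          omega
    rw [hmon1, hmon2]
    have e1 := SDepth.csdepth_eq hm S hSne hSdisj a ha1
    have e2 := SDepth.csdepth_eq hm S hSne hSdisj (fun _ : Fin n => 1)
      (fun i j hj => le_rfl)
    beta_reduce at e1 e2 ⊢
    omega
end

section
/- Let K be a field, S = K[x_1,…,x_n], and let φ: S[x_{n+1}] → S be the K-algebra homomorphism with φ(x_i) = x_i for i ≤ n and φ(x_{n+1}) = 1. Let I' ⊆ S[x_{n+1}] be a monomial ideal and let I = φ(I') be its image ideal in S. Then sdepth(I') ≤ sdepth(I) + 1. -/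
open MvPolynomial

namespace SdepthAux

open Pointwise

variable {K : Type*} [Field K] {N : ℕ}

/-- The exponent set of a Stanley space. -/
def Bset {N : ℕ} (u : Fin N →₀ ℕ) (Z : Finset (Fin N)) : Set (Fin N →₀ ℕ) :=
  {b | ∃ τ : Fin N →₀ ℕ, (τ.support : Set (Fin N)) ⊆ Z ∧ b = u + τ}

lemma mem_supported_mv {A : Set (Fin N →₀ ℕ)} {p : MvPolynomial (Fin N) K} :
    p ∈ (MvPolynomial.restrictSupport K A : Submodule K (MvPolynomial (Fin N) K)) ↔
      ↑p.support ⊆ A :=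
  Iff.rfl

lemma monomial_mem_supported {A : Set (Fin N →₀ ℕ)} {b : Fin N →₀ ℕ} :
    (monomial b (1 : K)) ∈ (MvPolynomial.restrictSupport K A : Submodule K (MvPolynomial (Fin N) K)) ↔
      b ∈ A := by
  classical
  rw [mem_supported_mv, MvPolynomial.support_monomial]
  simp [one_ne_zero]

lemma stanleySpace_eq_s5 (u : Fin N →₀ ℕ) (Z : Finset (Fin N)) :
    StanleySpace K u Z =
      (MvPolynomial.restrictSupport K (Bset u Z) : Submodule K (MvPolynomial (Fin N) K)) := by
  have h1 : {p : MvPolynomial (Fin N) K | ∃ τ : Fin N →₀ ℕ,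
        (τ.support : Set (Fin N)) ⊆ Z ∧ p = monomial (u + τ) (1 : K)}
      = (fun b => monomial b (1 : K)) '' Bset u Z := by
    ext p
    constructor
    · rintro ⟨τ, hτ, rfl⟩
      exact ⟨u + τ, ⟨τ, hτ, rfl⟩, rfl⟩
    · rintro ⟨b, ⟨τ, hτ, rfl⟩, rfl⟩
      exact ⟨τ, hτ, rfl⟩
  rw [StanleySpace, h1, MvPolynomial.restrictSupport_eq_span]

lemma iSup_supported {ι : Type*} (A : ι → Set (Fin N →₀ ℕ)) :
    (⨆ i, (MvPolynomial.restrictSupport K (A i) : Submodule K (MvPolynomial (Fin N) K)))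
      = MvPolynomial.restrictSupport K (⋃ i, A i) :=
  by simp only [MvPolynomial.restrictSupport_eq_span, Set.image_iUnion, Submodule.span_iUnion]

lemma supported_inj {A B : Set (Fin N →₀ ℕ)}
    (h : (MvPolynomial.restrictSupport K A : Submodule K (MvPolynomial (Fin N) K))
        = MvPolynomial.restrictSupport K B) : A = B := by
  ext b
  constructor <;> intro hb
  · exact (monomial_mem_supported (K := K)).mp
      (h ▸ (monomial_mem_supported (K := K)).mpr hb)
  · exact (monomial_mem_supported (K := K)).mp
      (h.symm ▸ (monomial_mem_supported (K := K)).mpr hb)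

lemma disjoint_of_supported {A B : Set (Fin N →₀ ℕ)}
    (h : Disjoint (MvPolynomial.restrictSupport K A : Submodule K (MvPolynomial (Fin N) K))
        (MvPolynomial.restrictSupport K B)) : Disjoint A B := by
  rw [Set.disjoint_left]
  intro b hA hB
  have h0 := Submodule.disjoint_def.mp h (monomial b (1 : K))
    ((monomial_mem_supported (K := K)).mpr hA) ((monomial_mem_supported (K := K)).mpr hB)
  exact one_ne_zero (MvPolynomial.monomial_eq_zero.mp h0)

lemma disjoint_restrictSupport {A B : Set (Fin N →₀ ℕ)} (h : Disjoint A B) :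
    Disjoint (MvPolynomial.restrictSupport K A) (MvPolynomial.restrictSupport K B) := by
  refine Submodule.disjoint_def.mpr fun p hpA hpB => ?_
  rw [← MvPolynomial.support_eq_empty, Finset.eq_empty_iff_forall_notMem]
  intro b hb
  exact Set.disjoint_left.mp h (hpA hb) (hpB hb)

lemma iSupIndep_supported {ι : Type*} (A : ι → Set (Fin N →₀ ℕ))
    (h : Pairwise (Function.onFun Disjoint A)) :
    iSupIndep (fun i => (MvPolynomial.restrictSupport K (A i) : Submodule K (MvPolynomial (Fin N) K))) := by
  intro i
  have hle : (⨆ j, ⨆ (_ : j ≠ i),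
        (MvPolynomial.restrictSupport K (A j) : Submodule K (MvPolynomial (Fin N) K)))
      ≤ MvPolynomial.restrictSupport K (⋃ j, ⋃ (_ : j ≠ i), A j) := by
    refine iSup₂_le fun j hj => ?_
    exact MvPolynomial.restrictSupport_mono K (fun x hx => Set.mem_iUnion₂.mpr ⟨j, hj, hx⟩)
  refine Disjoint.mono_right hle ?_
  refine disjoint_restrictSupport ?_
  rw [Set.disjoint_left]
  intro b hb hb'
  obtain ⟨j, hj, hbj⟩ := Set.mem_iUnion₂.mp hb'
  exact Set.disjoint_left.mp (h (Ne.symm hj)) hb hbj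

lemma restrictScalars_span_monomials {m : ℕ} (v : Fin m → (Fin N →₀ ℕ)) :
    Submodule.restrictScalars K (Ideal.span (Set.range fun j => monomial (v j) (1 : K)))
      = (MvPolynomial.restrictSupport K {a | ∃ j, v j ≤ a} : Submodule K (MvPolynomial (Fin N) K)) := by
  classical
  apply le_antisymm
  · intro p hp
    rw [Submodule.restrictScalars_mem] at hp
    refine Submodule.span_induction ?_ ?_ ?_ ?_ hp
    · rintro x ⟨j, rfl⟩
      exact (monomial_mem_supported (K := K)).mpr ⟨j, le_refl _⟩
    · exact Submodule.zero_mem _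
    · intro x y _ _ hx hy
      exact Submodule.add_mem _ hx hy
    · intro r x _ hx
      rw [smul_eq_mul]
      rw [mem_supported_mv] at hx ⊢
      intro a ha
      have ha' : a ∈ r.support + x.support := MvPolynomial.support_mul r x ha
      obtain ⟨c, hc, d, hd, rfl⟩ := Finset.mem_add.mp ha'
      obtain ⟨j, hj⟩ := hx hd
      exact ⟨j, hj.trans (self_le_add_left d c)⟩
  · intro p hp
    rw [mem_supported_mv] at hp
    rw [Submodule.restrictScalars_mem]
    rw [MvPolynomial.as_sum p]
    refine Submodule.sum_mem _ fun a ha => ?_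
    obtain ⟨j, hj⟩ := hp ha
    have heq : monomial a (coeff a p) =
        monomial (a - v j) (coeff a p) * monomial (v j) (1 : K) := by
      rw [MvPolynomial.monomial_mul, mul_one, tsub_add_cancel_of_le hj]
    rw [heq]
    exact Ideal.mul_mem_left _ _ (Ideal.subset_span ⟨j, rfl⟩)

section snoc

variable {n : ℕ}

/-- Append a last exponent. -/
noncomputable def fsnoc (a : Fin n →₀ ℕ) (c : ℕ) : Fin (n + 1) →₀ ℕ :=
  Finsupp.equivFunOnFinite.symm (Fin.snoc a c)

/-- Drop the last exponent. -/
noncomputable def ffront (b : Fin (n + 1) →₀ ℕ) : Fin n →₀ ℕ :=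
  Finsupp.equivFunOnFinite.symm (fun i => b i.castSucc)

@[simp] lemma fsnoc_castSucc (a : Fin n →₀ ℕ) (c : ℕ) (i : Fin n) :
    fsnoc a c i.castSucc = a i := by
  simp [fsnoc]

@[simp] lemma fsnoc_last (a : Fin n →₀ ℕ) (c : ℕ) :
    fsnoc a c (Fin.last n) = c := by
  simp [fsnoc]

@[simp] lemma ffront_apply (b : Fin (n + 1) →₀ ℕ) (i : Fin n) :
    ffront b i = b i.castSucc := by
  simp [ffront]

lemma ffront_add (b₁ b₂ : Fin (n + 1) →₀ ℕ) :
    ffront (b₁ + b₂) = ffront b₁ + ffront b₂ := by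
  ext i; simp

@[simp] lemma ffront_fsnoc (a : Fin n →₀ ℕ) (c : ℕ) : ffront (fsnoc a c) = a := by
  ext i; simp

lemma le_fsnoc_iff {w : Fin (n + 1) →₀ ℕ} {a : Fin n →₀ ℕ} {c : ℕ} :
    w ≤ fsnoc a c ↔ ffront w ≤ a ∧ w (Fin.last n) ≤ c := by
  simp only [Finsupp.le_def]
  constructor
  · intro h
    exact ⟨fun i => by simpa using h i.castSucc, by simpa using h (Fin.last n)⟩
  · rintro ⟨h1, h2⟩ i
    rcases Fin.eq_castSucc_or_eq_last i with ⟨j, rfl⟩ | rfl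
    · simpa using h1 j
    · simpa using h2

/-- The `Z`-set of the contracted Stanley space. -/
def Zfront (Z : Finset (Fin (n + 1))) : Finset (Fin n) :=
  Finset.univ.filter fun j : Fin n => j.castSucc ∈ Z

lemma mem_Zfront {Z : Finset (Fin (n + 1))} {j : Fin n} :
    j ∈ Zfront Z ↔ j.castSucc ∈ Z := by
  simp [Zfront]

lemma card_Zfront {Z : Finset (Fin (n + 1))} (hZ : Fin.last n ∈ Z) :
    Z.card = (Zfront Z).card + 1 := by
  classical
  have himg : (Zfront Z).image Fin.castSucc = Z.erase (Fin.last n) := by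
    ext x
    simp only [Finset.mem_image, Finset.mem_erase, mem_Zfront]
    constructor
    · rintro ⟨j, hj, rfl⟩
      exact ⟨Fin.castSucc_lt_last j |>.ne, hj⟩
    · rintro ⟨hne, hx⟩
      rcases Fin.eq_castSucc_or_eq_last x with ⟨j, rfl⟩ | rfl
      · exact ⟨j, hx, rfl⟩
      · exact absurd rfl hne
    
  have hcard : (Zfront Z).card = (Z.erase (Fin.last n)).card := by
    rw [← himg, Finset.card_image_of_injective _ (Fin.castSucc_injective n)]
  rw [hcard, Finset.card_erase_of_mem hZ]
  have hpos : 0 < Z.card := Finset.card_pos.mpr ⟨_, hZ⟩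
  omega

lemma slice_mem {u : Fin (n + 1) →₀ ℕ} {Z : Finset (Fin (n + 1))} {a : Fin n →₀ ℕ} {c : ℕ}
    (hZ : Fin.last n ∈ Z) (hu : u (Fin.last n) ≤ c) :
    fsnoc a c ∈ Bset u Z ↔ a ∈ Bset (ffront u) (Zfront Z) := by
  constructor
  · rintro ⟨τ, hτ, hab⟩
    refine ⟨ffront τ, ?_, ?_⟩
    · intro j hj
      have hj' : τ j.castSucc ≠ 0 := by
        simpa using Finsupp.mem_support_iff.mp hj
      have : (j.castSucc : Fin (n + 1)) ∈ Z := hτ (Finsupp.mem_support_iff.mpr hj')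
      simpa [mem_Zfront] using this
    · have h2 := congrArg ffront hab
      rwa [ffront_fsnoc, ffront_add] at h2
  · rintro ⟨σ, hσ, rfl⟩
    refine ⟨fsnoc σ (c - u (Fin.last n)), ?_, ?_⟩
    · intro j hj
      rcases Fin.eq_castSucc_or_eq_last j with ⟨k, rfl⟩ | rfl
      · have hk : σ k ≠ 0 := by simpa using Finsupp.mem_support_iff.mp hj
        have : k ∈ Zfront Z := hσ (Finsupp.mem_support_iff.mpr hk)
        simpa using (mem_Zfront.mp this)
      · exact hZ
    · ext j
      rcases Fin.eq_castSucc_or_eq_last j with ⟨k, rfl⟩ | rfl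
      · simp [Finsupp.add_apply]
      · simp only [fsnoc_last, Finsupp.add_apply, fsnoc_last]
        omega
    

lemma slice_not_mem {u : Fin (n + 1) →₀ ℕ} {Z : Finset (Fin (n + 1))} {a : Fin n →₀ ℕ} {c : ℕ}
    (hZ : Fin.last n ∉ Z) (hu : u (Fin.last n) < c) :
    fsnoc a c ∉ Bset u Z := by
  rintro ⟨τ, hτ, hab⟩
  have h1 : c = u (Fin.last n) + τ (Fin.last n) := by
    have := congrArg (fun f => f (Fin.last n)) hab
    simpa using this
  have hεl : τ (Fin.last n) ≠ 0 := by omega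
  exact hZ (hτ (Finsupp.mem_support_iff.mpr hεl))

lemma phi_monomial (b : Fin (n + 1) →₀ ℕ) :
    (MvPolynomial.aeval (R := K) (Fin.snoc MvPolynomial.X 1) :
        MvPolynomial (Fin (n + 1)) K →ₐ[K] MvPolynomial (Fin n) K) (monomial b 1)
      = monomial (ffront b) 1 := by
  rw [aeval_monomial, map_one, one_mul, Finsupp.prod_pow, Fin.prod_univ_castSucc]
  simp only [Fin.snoc_castSucc, Fin.snoc_last, one_pow, mul_one]
  rw [monomial_eq, C_1, one_mul, Finsupp.prod_pow]
  exact Finset.prod_congr rfl fun i _ => by rw [ffront_apply]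

end snoc

end SdepthAux

open SdepthAux in
/-- The key construction: from a Stanley decomposition of `I'`, produce one of the
contracted ideal with `sdepth` dropping by at most one. -/
theorem sdepth_key (n : ℕ) (K : Type*) [Field K]
    (I' : Ideal (MvPolynomial (Fin (n + 1)) K))
    (m : ℕ) (w : Fin m → (Fin (n + 1) →₀ ℕ))
    (hI' : I' = Ideal.span (Set.range fun i => monomial (w i) (1 : K)))
    (D : StanleyDecomposition K I') :
    ∃ D₂ : StanleyDecomposition K
      (Ideal.map (MvPolynomial.aeval (R := K) (Fin.snoc MvPolynomial.X 1) :
        MvPolynomial (Fin (n + 1)) K →ₐ[K] MvPolynomial (Fin n) K) I'),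
      D.sdepth ≤ D₂.sdepth + 1 := by
  classical
  set φ := (MvPolynomial.aeval (R := K) (Fin.snoc MvPolynomial.X 1) :
      MvPolynomial (Fin (n + 1)) K →ₐ[K] MvPolynomial (Fin n) K) with hφ
  -- N is bigger than any relevant last exponent
  set N : ℕ := (Finset.univ.sup fun j : Fin m => w j (Fin.last n)) +
      (Finset.univ.sup fun i : Fin D.r => D.u i (Fin.last n)) + 1 with hN
  have hNw : ∀ j, w j (Fin.last n) ≤ N := fun j => by
    have h : w j (Fin.last n) ≤ Finset.univ.sup fun j : Fin m => w j (Fin.last n) :=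
      Finset.le_sup (f := fun j : Fin m => w j (Fin.last n)) (Finset.mem_univ j)
    omega
  have hNu : ∀ i, D.u i (Fin.last n) < N := fun i => by
    have h : D.u i (Fin.last n) ≤ Finset.univ.sup fun i : Fin D.r => D.u i (Fin.last n) :=
      Finset.le_sup (f := fun i : Fin D.r => D.u i (Fin.last n)) (Finset.mem_univ i)
    omega
  -- the exponent set of I'
  have hE'1 : Submodule.restrictScalars K I'
      = (MvPolynomial.restrictSupport K {b | ∃ j, w j ≤ b} :
          Submodule K (MvPolynomial (Fin (n + 1)) K)) := by
    rw [hI']; exact restrictScalars_span_monomials w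
  have hE'2 : Submodule.restrictScalars K I'
      = (MvPolynomial.restrictSupport K (⋃ i, Bset (D.u i) (D.Z i)) :
          Submodule K (MvPolynomial (Fin (n + 1)) K)) := by
    rw [D.isSup, ← iSup_supported]
    exact iSup_congr fun i => stanleySpace_eq_s5 _ _
  have hsets : (⋃ i, Bset (D.u i) (D.Z i)) = {b | ∃ j, w j ≤ b} :=
    supported_inj (hE'2.symm.trans hE'1)
  -- the contracted ideal
  have hI : Ideal.map φ I' = Ideal.span (Set.range fun j => monomial (ffront (w j)) (1 : K)) := by
    rw [hI', Ideal.map_span, ← Set.range_comp]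
    congr 1
    ext p
    constructor
    · rintro ⟨j, rfl⟩; exact ⟨j, (phi_monomial (w j)).symm⟩
    · rintro ⟨j, rfl⟩; exact ⟨j, phi_monomial (w j)⟩
  have hE : Submodule.restrictScalars K (Ideal.map φ I')
      = (MvPolynomial.restrictSupport K {a | ∃ j, ffront (w j) ≤ a} :
          Submodule K (MvPolynomial (Fin n) K)) := by
    rw [hI]; exact restrictScalars_span_monomials _
  -- pairwise disjointness of the original exponent sets
  have hdisj : ∀ i j : Fin D.r, i ≠ j →
      Disjoint (Bset (D.u i) (D.Z i)) (Bset (D.u j) (D.Z j)) := by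
    intro i j hij
    have h0 : Disjoint (StanleySpace K (D.u i) (D.Z i)) (StanleySpace K (D.u j) (D.Z j)) :=
      D.indep.pairwiseDisjoint hij
    rw [stanleySpace_eq_s5, stanleySpace_eq_s5] at h0
    exact disjoint_of_supported h0
  -- the relevant index set
  set R : Finset (Fin D.r) := Finset.univ.filter (fun i => Fin.last n ∈ D.Z i) with hR
  have hmemR : ∀ {i}, i ∈ R ↔ Fin.last n ∈ D.Z i := by
    intro i; simp [hR]
  -- R is nonempty
  have hRne : R.Nonempty := by
    set i0 : Fin D.r := ⟨0, D.rpos⟩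
    have hu0 : D.u i0 ∈ {b | ∃ j, w j ≤ b} := by
      have h1 : monomial (D.u i0) (1 : K) ∈ Submodule.restrictScalars K I' := D.mem i0
      rw [hE'1] at h1
      exact (monomial_mem_supported (K := K)).mp h1
    obtain ⟨j, hj⟩ := hu0
    have hb : D.u i0 + Finsupp.single (Fin.last n) N ∈ ⋃ i, Bset (D.u i) (D.Z i) := by
      rw [hsets]
      exact ⟨j, hj.trans (by simp [Finsupp.le_def])⟩
    obtain ⟨s, ⟨i, rfl⟩, τ, hτ, hbi⟩ := hb
    refine ⟨i, hmemR.mpr ?_⟩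
    have hlast := congrArg (fun f => f (Fin.last n)) hbi
    simp only [Finsupp.add_apply, Finsupp.single_eq_same] at hlast
    have hτl : τ (Fin.last n) ≠ 0 := by
      have := hNu i
      omega
    exact hτ (Finsupp.mem_support_iff.mpr hτl)
  -- the new decomposition
  set e : Fin R.card ≃ {x // x ∈ R} := R.equivFin.symm with he
  set u₂ : Fin R.card → (Fin n →₀ ℕ) := fun k => ffront (D.u (e k)) with hu₂
  set Z₂ : Fin R.card → Finset (Fin n) := fun k => Zfront (D.Z (e k)) with hZ₂
  have hlastZ : ∀ k : Fin R.card, Fin.last n ∈ D.Z (e k) := fun k => hmemR.mp (e k).2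
  -- slice equivalence
  have hslice : ∀ (k : Fin R.card) (a : Fin n →₀ ℕ),
      fsnoc a N ∈ Bset (D.u (e k)) (D.Z (e k)) ↔ a ∈ Bset (u₂ k) (Z₂ k) := by
    intro k a
    exact slice_mem (hlastZ k) (le_of_lt (hNu _))
  -- exponent set equality for the contracted ideal
  have hEset : {a : Fin n →₀ ℕ | ∃ j, ffront (w j) ≤ a} = ⋃ k, Bset (u₂ k) (Z₂ k) := by
    ext a
    constructor
    · intro ha
      obtain ⟨j, hj⟩ := ha
      have hb : fsnoc a N ∈ {b | ∃ j, w j ≤ b} :=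
        ⟨j, le_fsnoc_iff.mpr ⟨hj, hNw j⟩⟩
      rw [← hsets] at hb
      obtain ⟨s, ⟨i, rfl⟩, hbi⟩ := hb
      have hZi : Fin.last n ∈ D.Z i := by
        obtain ⟨τ, hτ, hab⟩ := hbi
        have hlast := congrArg (fun f => f (Fin.last n)) hab
        simp only [fsnoc_last, Finsupp.add_apply] at hlast
        have hτl : τ (Fin.last n) ≠ 0 := by
          have := hNu i
          omega
        exact hτ (Finsupp.mem_support_iff.mpr hτl)
      set k : Fin R.card := e.symm ⟨i, hmemR.mpr hZi⟩ with hk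
      have hek : (e k : Fin D.r) = i := by rw [hk, Equiv.apply_symm_apply]
      refine Set.mem_iUnion.mpr ⟨k, ?_⟩
      rw [← hslice k a, hek]
      exact hbi
    · intro ha
      obtain ⟨k, hk⟩ := Set.mem_iUnion.mp ha
      have hb : fsnoc a N ∈ Bset (D.u (e k)) (D.Z (e k)) := (hslice k a).mpr hk
      have hb' : fsnoc a N ∈ {b | ∃ j, w j ≤ b} := by
        rw [← hsets]; exact Set.mem_iUnion.mpr ⟨e k, hb⟩
      obtain ⟨j, hj⟩ := hb'
      exact ⟨j, (le_fsnoc_iff.mp hj).1⟩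
  -- pairwise disjointness of the new exponent sets
  have hdisj₂ : Pairwise (Function.onFun Disjoint fun k => Bset (u₂ k) (Z₂ k)) := by
    intro k l hkl
    rw [Function.onFun, Set.disjoint_left]
    intro a hak hal
    have h1 : fsnoc a N ∈ Bset (D.u (e k)) (D.Z (e k)) := (hslice k a).mpr hak
    have h2 : fsnoc a N ∈ Bset (D.u (e l)) (D.Z (e l)) := (hslice l a).mpr hal
    have hne : (e k : Fin D.r) ≠ (e l : Fin D.r) := by
      intro hEq
      exact hkl (e.injective (Subtype.ext hEq))
    exact Set.disjoint_left.mp (hdisj _ _ hne) h1 h2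
  have hrpos : 0 < R.card := Finset.card_pos.mpr hRne
  refine ⟨⟨R.card, hrpos, u₂, Z₂, ?_, ?_, ?_⟩, ?_⟩
  · -- mem
    intro k
    have := D.mem (e k)
    have h2 : φ (monomial (D.u (e k)) (1 : K)) ∈ Ideal.map φ I' :=
      Ideal.mem_map_of_mem _ this
    rwa [phi_monomial] at h2
  · -- isSup
    rw [hE]
    rw [hEset, ← iSup_supported]
    exact (iSup_congr fun k => stanleySpace_eq_s5 _ _).symm
  · -- indep
    have hfun : (fun k => StanleySpace K (u₂ k) (Z₂ k))
        = fun k => (MvPolynomial.restrictSupport K (Bset (u₂ k) (Z₂ k)) :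
            Submodule K (MvPolynomial (Fin n) K)) :=
      funext fun k => stanleySpace_eq_s5 _ _
    rw [hfun]
    exact iSupIndep_supported _ hdisj₂
  · -- sdepth comparison
    show D.sdepth ≤ (Finset.univ.inf' _ fun k => (Z₂ k).card) + 1
    obtain ⟨k₀, _, hk₀⟩ := Finset.exists_mem_eq_inf' (H := ⟨⟨0, hrpos⟩, Finset.mem_univ _⟩)
      (fun k : Fin R.card => (Z₂ k).card)
    rw [hk₀]
    have h1 : D.sdepth ≤ (D.Z (e k₀)).card :=
      Finset.inf'_le _ (Finset.mem_univ _)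
    have h2 : (D.Z (e k₀)).card = (Z₂ k₀).card + 1 := card_Zfront (hlastZ k₀)
    omega

/-- Let `φ : S[x_{n+1}] → S` be the `K`-algebra map sending `x_{n+1}` to `1` and fixing
the other variables. If `I' ⊆ S[x_{n+1}]` is a monomial ideal and `I = φ(I')`, then
`sdepth I' ≤ sdepth I + 1`. -/
theorem sdepth_contraction (n : ℕ) (K : Type*) [Field K]
    (I' : Ideal (MvPolynomial (Fin (n + 1)) K))
    (m : ℕ) (w : Fin m → (Fin (n + 1) →₀ ℕ))
    (hI' : I' = Ideal.span (Set.range fun i => monomial (w i) (1 : K))) :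
    Ideal.sdepth K I' ≤
    Ideal.sdepth K
      (Ideal.map (MvPolynomial.aeval (R := K) (Fin.snoc MvPolynomial.X 1) :
        MvPolynomial (Fin (n + 1)) K →ₐ[K] MvPolynomial (Fin n) K) I') + 1 := by
  apply csSup_le'
  rintro _ ⟨D, rfl⟩
  obtain ⟨D₂, hD₂⟩ := sdepth_key n K I' m w hI' D
  refine hD₂.trans (Nat.add_le_add_right ?_ 1)
  refine le_csSup ⟨n, ?_⟩ ⟨D₂, rfl⟩
  rintro _ ⟨Dd, rfl⟩
  calc Dd.sdepth ≤ (Dd.Z ⟨0, Dd.rpos⟩).card := Finset.inf'_le _ (Finset.mem_univ _)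
    _ ≤ n := by simpa using Finset.card_le_univ (Dd.Z ⟨0, Dd.rpos⟩)
end

section
/- Let K be a field, S = K[x_1,…,x_n], and let I ⊆ S be a monomial ideal with minimal monomial generating set G(I) = {v_1,…,v_m}. Let S' = S[x_{n+1}] and I' = (v_1,…,v_{m−1}, x_{n+1} v_m) ⊆ S'. Then sdepth(I') ≤ sdepth(I) + 1. -/
open MvPolynomial

namespace SdepthAux

variable (K : Type*) [Field K] {N : ℕ}

/-- Submodule of polynomials whose support is contained in `B`. -/
def suppIn (B : Set (Fin N →₀ ℕ)) : Submodule K (MvPolynomial (Fin N) K) where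
  carrier := {p | ∀ d ∈ p.support, d ∈ B}
  zero_mem' := by simp
  add_mem' := by
    classical
    intro p q hp hq d hd
    rcases Finset.mem_union.mp (MvPolynomial.support_add hd) with h | h
    · exact hp d h
    · exact hq d h
  smul_mem' := by
    intro c p hp d hd
    exact hp d (MvPolynomial.support_smul hd)

variable {K}

lemma mem_suppIn {B : Set (Fin N →₀ ℕ)} {p : MvPolynomial (Fin N) K} :
    p ∈ suppIn K B ↔ ∀ d ∈ p.support, d ∈ B := Iff.rfl

lemma monomial_mem_suppIn {B : Set (Fin N →₀ ℕ)} {d : Fin N →₀ ℕ} :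
    monomial d (1 : K) ∈ suppIn K B ↔ d ∈ B := by
  classical
  rw [mem_suppIn]
  constructor
  · intro h
    refine h d ?_
    rw [MvPolynomial.support_monomial, if_neg (one_ne_zero)]
    exact Finset.mem_singleton_self d
  · intro h e he
    rw [MvPolynomial.support_monomial, if_neg (one_ne_zero), Finset.mem_singleton] at he
    subst he; exact h

lemma suppIn_eq_span (B : Set (Fin N →₀ ℕ)) :
    suppIn K B = Submodule.span K ((fun d => monomial d (1 : K)) '' B) := by
  apply le_antisymm
  · intro p hp
    rw [← MvPolynomial.support_sum_monomial_coeff p]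
    apply Submodule.sum_mem
    intro d hd
    have h1 : monomial d (MvPolynomial.coeff d p)
        = (MvPolynomial.coeff d p) • monomial d (1 : K) := by
      rw [MvPolynomial.smul_monomial, smul_eq_mul, mul_one]
    rw [h1]
    exact Submodule.smul_mem _ _ (Submodule.subset_span ⟨d, hp d hd, rfl⟩)
  · rw [Submodule.span_le]
    rintro _ ⟨d, hd, rfl⟩
    exact monomial_mem_suppIn.mpr hd

lemma suppIn_iUnion {ι : Sort*} (B : ι → Set (Fin N →₀ ℕ)) :
    suppIn K (⋃ i, B i) = ⨆ i, suppIn (K := K) (B i) := by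
  simp only [suppIn_eq_span, Set.image_iUnion, Submodule.span_iUnion]

lemma suppIn_empty : suppIn K (∅ : Set (Fin N →₀ ℕ)) = ⊥ := by
  ext p
  simp only [mem_suppIn, Set.mem_empty_iff_false, Submodule.mem_bot]
  constructor
  · intro h
    rw [← MvPolynomial.support_eq_empty]
    by_contra hne
    obtain ⟨d, hd⟩ := Finset.nonempty_iff_ne_empty.mpr hne
    exact h d hd
  · rintro rfl; simp

lemma suppIn_inter (B C : Set (Fin N →₀ ℕ)) :
    suppIn K B ⊓ suppIn (K := K) C = suppIn K (B ∩ C) := by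
  ext p
  simp only [Submodule.mem_inf, mem_suppIn, Set.mem_inter_iff]
  constructor
  · rintro ⟨h1, h2⟩ d hd; exact ⟨h1 d hd, h2 d hd⟩
  · intro h; exact ⟨fun d hd => (h d hd).1, fun d hd => (h d hd).2⟩

lemma disjoint_suppIn {B C : Set (Fin N →₀ ℕ)} (h : Disjoint B C) :
    Disjoint (suppIn K B) (suppIn (K := K) C) := by
  rw [disjoint_iff, suppIn_inter, Set.disjoint_iff_inter_eq_empty.mp h, suppIn_empty]

lemma disjoint_sets_of_disjoint_suppIn {B C : Set (Fin N →₀ ℕ)}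
    (h : Disjoint (suppIn K B) (suppIn (K := K) C)) : Disjoint B C := by
  rw [Set.disjoint_iff_inter_eq_empty]
  by_contra hne
  obtain ⟨d, hd⟩ := Set.nonempty_iff_ne_empty.mpr hne
  have : monomial d (1 : K) ∈ suppIn K B ⊓ suppIn (K := K) C := by
    rw [suppIn_inter]; exact monomial_mem_suppIn.mpr hd
  rw [disjoint_iff.mp h, Submodule.mem_bot] at this
  exact one_ne_zero (MvPolynomial.monomial_eq_zero.mp this)

lemma suppIn_injective {B C : Set (Fin N →₀ ℕ)}
    (h : suppIn K B = suppIn (K := K) C) : B = C := by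
  ext d
  rw [← monomial_mem_suppIn (K := K) (B := B), ← monomial_mem_suppIn (K := K) (B := C), h]

/-- The "box" of exponents of `u K[Z]`. -/
def box (u : Fin N →₀ ℕ) (Z : Finset (Fin N)) : Set (Fin N →₀ ℕ) :=
  {c | ∀ j, u j ≤ c j ∧ (u j ≠ c j → j ∈ Z)}

lemma stanleySpace_eq_suppIn (K : Type*) [Field K] (u : Fin N →₀ ℕ) (Z : Finset (Fin N)) :
    StanleySpace K u Z = suppIn K (box u Z) := by
  rw [suppIn_eq_span, StanleySpace]
  congr 1
  ext p
  constructor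
  · rintro ⟨τ, hτ, rfl⟩
    refine ⟨u + τ, fun j => ⟨by simp, fun hne => ?_⟩, rfl⟩
    apply hτ
    simp only [Finset.coe_subset] at *
    have : τ j ≠ 0 := by
      intro h0; apply hne; simp [Finsupp.add_apply, h0]
    exact Finsupp.mem_support_iff.mpr this
  · rintro ⟨c, hc, rfl⟩
    refine ⟨c - u, ?_, ?_⟩
    · intro j hj
      simp only [Finset.mem_coe, Finsupp.mem_support_iff, Finsupp.tsub_apply] at hj
      have := hc j
      exact this.2 (fun h => hj (by omega))
    · congr 1
      ext j
      simp only [Finsupp.add_apply, Finsupp.tsub_apply]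
      exact (Nat.add_sub_cancel' (hc j).1).symm

/-- upper set generated by `G`. -/
def upSet (G : Set (Fin N →₀ ℕ)) : Set (Fin N →₀ ℕ) := {c | ∃ g ∈ G, g ≤ c}

variable (K)

def upIdeal (G : Set (Fin N →₀ ℕ)) : Ideal (MvPolynomial (Fin N) K) where
  carrier := {p | ∀ d ∈ p.support, d ∈ upSet G}
  zero_mem' := by simp
  add_mem' := by
    classical
    intro p q hp hq d hd
    rcases Finset.mem_union.mp (MvPolynomial.support_add hd) with h | h
    · exact hp d h
    · exact hq d h
  smul_mem' := by
    classical
    intro q p hp d hd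
    rw [smul_eq_mul] at hd
    obtain ⟨a, ha, b, hb, rfl⟩ := Finset.mem_add.mp (MvPolynomial.support_mul q p hd)
    obtain ⟨g, hg, hgb⟩ := hp b hb
    exact ⟨g, hg, hgb.trans le_add_self⟩

variable {K}

lemma span_image_monomial (G : Set (Fin N →₀ ℕ)) :
    Submodule.restrictScalars K (Ideal.span ((fun d => monomial d (1 : K)) '' G))
      = suppIn K (upSet G) := by
  classical
  apply le_antisymm
  · intro p hp
    have hle : Ideal.span ((fun d => monomial d (1 : K)) '' G) ≤ upIdeal K G := by
      rw [Ideal.span_le]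
      rintro _ ⟨d, hd, rfl⟩
      intro e he
      rw [MvPolynomial.support_monomial, if_neg one_ne_zero, Finset.mem_singleton] at he
      subst he
      exact ⟨_, hd, le_refl _⟩
    exact hle hp
  · rw [suppIn_eq_span, Submodule.span_le]
    rintro _ ⟨c, ⟨g, hg, hgc⟩, rfl⟩
    have h1 : monomial c (1 : K) = monomial g 1 * monomial (c - g) 1 := by
      rw [MvPolynomial.monomial_mul, one_mul, add_tsub_cancel_of_le hgc]
    show monomial c (1 : K) ∈ Ideal.span _
    rw [h1]
    exact Ideal.mul_mem_right _ _ (Ideal.subset_span ⟨g, hg, rfl⟩)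


section Emb

variable {n : ℕ}

noncomputable def iota (a : Fin n →₀ ℕ) : Fin (n + 1) →₀ ℕ :=
  Finsupp.mapDomain Fin.castSucc a

noncomputable def emb (a : Fin n →₀ ℕ) : Fin (n + 1) →₀ ℕ :=
  iota a + Finsupp.single (Fin.last n) 1

noncomputable def res (u : Fin (n + 1) →₀ ℕ) : Fin n →₀ ℕ :=
  Finsupp.equivFunOnFinite.symm fun j => u j.castSucc

lemma iota_castSucc (a : Fin n →₀ ℕ) (j : Fin n) : iota a j.castSucc = a j :=
  Finsupp.mapDomain_apply (Fin.castSucc_injective n) a j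

lemma iota_last (a : Fin n →₀ ℕ) : iota a (Fin.last n) = 0 := by
  refine Finsupp.mapDomain_notin_range a _ ?_
  rw [Set.mem_range]
  simp [Fin.exists_castSucc_eq]

lemma emb_castSucc (a : Fin n →₀ ℕ) (j : Fin n) : emb a j.castSucc = a j := by
  rw [emb, Finsupp.add_apply, iota_castSucc,
    Finsupp.single_eq_of_ne' (Fin.castSucc_lt_last j).ne']
  simp

lemma emb_last (a : Fin n →₀ ℕ) : emb a (Fin.last n) = 1 := by
  rw [emb, Finsupp.add_apply, iota_last, Finsupp.single_eq_same]

lemma res_apply (u : Fin (n + 1) →₀ ℕ) (j : Fin n) : res u j = u j.castSucc := rfl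

lemma iota_le_emb_iff (b a : Fin n →₀ ℕ) : iota b ≤ emb a ↔ b ≤ a := by
  simp only [Finsupp.le_def, Fin.forall_fin_succ', iota_castSucc, emb_castSucc,
    iota_last, emb_last]
  simp

lemma emb_le_emb_iff (b a : Fin n →₀ ℕ) : emb b ≤ emb a ↔ b ≤ a := by
  simp only [Finsupp.le_def, Fin.forall_fin_succ', emb_castSucc, emb_last]
  simp

lemma emb_preimage_upSet (w : Fin n →₀ ℕ) (T : Set (Fin n →₀ ℕ)) :
    emb ⁻¹' upSet (insert (emb w) (iota '' T)) = upSet (insert w T) := by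
  ext a
  simp only [Set.mem_preimage, upSet, Set.mem_setOf_eq]
  constructor
  · rintro ⟨g, hg, hle⟩
    rcases hg with rfl | ⟨t, ht, rfl⟩
    · exact ⟨w, Set.mem_insert _ _, (emb_le_emb_iff _ _).mp hle⟩
    · exact ⟨t, Set.mem_insert_of_mem _ ht, (iota_le_emb_iff _ _).mp hle⟩
  · rintro ⟨g, hg, hle⟩
    rcases hg with rfl | hg
    · exact ⟨emb g, Set.mem_insert _ _, (emb_le_emb_iff _ _).mpr hle⟩
    · exact ⟨iota g, Set.mem_insert_of_mem _ ⟨g, hg, rfl⟩, (iota_le_emb_iff _ _).mpr hle⟩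

lemma emb_preimage_box_eligible (u' : Fin (n + 1) →₀ ℕ) (Z' : Finset (Fin (n + 1)))
    (h1 : u' (Fin.last n) ≤ 1) (h2 : u' (Fin.last n) = 1 ∨ Fin.last n ∈ Z') :
    emb ⁻¹' box u' Z'
      = box (res u') (Finset.filter (fun j : Fin n => j.castSucc ∈ Z') Finset.univ) := by
  ext a
  simp only [Set.mem_preimage, box, Set.mem_setOf_eq, Fin.forall_fin_succ',
    emb_castSucc, emb_last, res_apply, Finset.mem_filter, Finset.mem_univ, true_and]
  constructor
  · rintro ⟨h, -⟩ j
    exact ⟨(h j).1, (h j).2⟩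
  · intro h
    refine ⟨fun j => h j, h1, fun hne => ?_⟩
    rcases h2 with h2 | h2
    · exact absurd h2 hne
    · exact h2

lemma emb_preimage_box_ineligible (u' : Fin (n + 1) →₀ ℕ) (Z' : Finset (Fin (n + 1)))
    (h : ¬(u' (Fin.last n) ≤ 1 ∧ (u' (Fin.last n) = 1 ∨ Fin.last n ∈ Z'))) :
    emb ⁻¹' box u' Z' = ∅ := by
  ext a
  simp only [Set.mem_preimage, box, Set.mem_setOf_eq, Set.mem_empty_iff_false, iff_false]
  intro ha
  obtain ⟨hle, hcond⟩ := ha (Fin.last n)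
  rw [emb_last] at hle hcond
  apply h
  refine ⟨hle, ?_⟩
  by_cases h1 : u' (Fin.last n) = 1
  · exact Or.inl h1
  · exact Or.inr (hcond h1)

lemma res_mem_upSet (w : Fin n →₀ ℕ) (T : Set (Fin n →₀ ℕ)) (u' : Fin (n + 1) →₀ ℕ)
    (hu : u' ∈ upSet (insert (emb w) (iota '' T))) :
    res u' ∈ upSet (insert w T) := by
  obtain ⟨g, hg, hle⟩ := hu
  rcases hg with rfl | ⟨t, ht, rfl⟩
  · refine ⟨w, Set.mem_insert _ _, ?_⟩
    intro j
    have := Finsupp.le_def.mp hle j.castSucc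
    rw [emb_castSucc] at this
    exact le_trans this (le_of_eq (res_apply u' j).symm)
  · refine ⟨t, Set.mem_insert_of_mem _ ht, ?_⟩
    intro j
    have := Finsupp.le_def.mp hle j.castSucc
    rw [iota_castSucc] at this
    exact le_trans this (le_of_eq (res_apply u' j).symm)

lemma card_filter_castSucc (Z' : Finset (Fin (n + 1))) :
    Z'.card ≤ (Finset.filter (fun j : Fin n => j.castSucc ∈ Z') Finset.univ).card + 1 := by
  classical
  have hsub : Z' ⊆ insert (Fin.last n)
      ((Finset.filter (fun j : Fin n => j.castSucc ∈ Z') Finset.univ).image Fin.castSucc) := by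
    intro k hk
    rcases Fin.eq_castSucc_or_eq_last k with ⟨j, rfl⟩ | rfl
    · exact Finset.mem_insert_of_mem (Finset.mem_image_of_mem _
        (Finset.mem_filter.mpr ⟨Finset.mem_univ _, hk⟩))
    · exact Finset.mem_insert_self _ _
  refine le_trans (Finset.card_le_card hsub) ?_
  refine le_trans (Finset.card_insert_le _ _) ?_
  rw [Finset.card_image_of_injective _ (Fin.castSucc_injective n)]

lemma suppIn_mono {K : Type*} [Field K] {B C : Set (Fin n →₀ ℕ)} (h : B ⊆ C) :
    suppIn K B ≤ suppIn K C := fun _ hp d hd => h (hp d hd)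

end Emb

end SdepthAux

open SdepthAux in
/-- Let `I ⊆ S` be a monomial ideal with minimal monomial generators `v₁, …, vₘ`
(no generator divides another) and let `I' = (v₁, …, v_{m-1}, x_{n+1} vₘ) ⊆ S[x_{n+1}]`.
Then `sdepth I' ≤ sdepth I + 1`. Here the generators are `v 0, …, v m` with `vₘ = v (Fin.last m)`. -/
theorem sdepth_multiply_new_variable (n : ℕ) (K : Type*) [Field K]
    (m : ℕ) (v : Fin (m + 1) → (Fin n →₀ ℕ))
    (hmin : ∀ i j, i ≠ j → ¬ v i ≤ v j) :
    Ideal.sdepth K (Ideal.span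
      (insert
        (monomial (Finsupp.mapDomain Fin.castSucc (v (Fin.last m)) +
          Finsupp.single (Fin.last n) 1) (1 : K))
        (Set.range fun i : Fin m =>
          monomial (Finsupp.mapDomain Fin.castSucc (v i.castSucc)) (1 : K)))) ≤
    Ideal.sdepth K (Ideal.span
      (Set.range fun i : Fin (m + 1) => monomial (v i) (1 : K))) + 1 := by
  classical
  set w : Fin n →₀ ℕ := v (Fin.last m) with hw
  set T : Set (Fin n →₀ ℕ) := Set.range fun i : Fin m => v i.castSucc with hT
  set G' : Set (Fin (n + 1) →₀ ℕ) := insert (emb w) (iota '' T) with hG'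
  set I' : Ideal (MvPolynomial (Fin (n + 1)) K) := Ideal.span
      (insert
        (monomial (Finsupp.mapDomain Fin.castSucc (v (Fin.last m)) +
          Finsupp.single (Fin.last n) 1) (1 : K))
        (Set.range fun i : Fin m =>
          monomial (Finsupp.mapDomain Fin.castSucc (v i.castSucc)) (1 : K))) with hI'def
  set I : Ideal (MvPolynomial (Fin n) K) := Ideal.span
      (Set.range fun i : Fin (m + 1) => monomial (v i) (1 : K)) with hIdef
  -- the generating sets as images of the monomial map
  have hGset : (insert
        (monomial (Finsupp.mapDomain Fin.castSucc (v (Fin.last m)) +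
          Finsupp.single (Fin.last n) 1) (1 : K))
        (Set.range fun i : Fin m =>
          monomial (Finsupp.mapDomain Fin.castSucc (v i.castSucc)) (1 : K)))
      = (fun d => monomial d (1 : K)) '' G' := by
    rw [hG', Set.image_insert_eq]
    congr 1
    have h1 : (Set.range fun i : Fin m =>
        monomial (Finsupp.mapDomain Fin.castSucc (v i.castSucc)) (1 : K))
        = Set.range (((fun d => monomial d (1 : K)) ∘ iota) ∘ fun i : Fin m => v i.castSucc) :=
      rfl
    rw [h1, Set.range_comp, Set.image_comp]
  have hIset : (Set.range fun i : Fin (m + 1) => monomial (v i) (1 : K))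
      = (fun d => monomial d (1 : K)) '' Set.range v := by
    rw [← Set.range_comp]; rfl
  have hI' : Submodule.restrictScalars K I' = suppIn K (upSet G') := by
    rw [hI'def, hGset, span_image_monomial]
  have hI : Submodule.restrictScalars K I = suppIn K (upSet (Set.range v)) := by
    rw [hIdef, hIset, span_image_monomial]
  have hrange : insert w T = Set.range v := by
    ext c
    simp only [Set.mem_insert_iff, Set.mem_range, hT, hw, Fin.exists_fin_succ']
    tauto
  -- bound the sSup
  have hbdd : BddAbove (Set.range fun D : StanleyDecomposition K I => D.sdepth) := by
    refine ⟨n, ?_⟩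
    rintro _ ⟨D, rfl⟩
    refine le_trans (Finset.inf'_le _ (Finset.mem_univ ⟨0, D.rpos⟩)) ?_
    refine le_trans (Finset.card_le_univ _) ?_
    simp
  rcases Set.eq_empty_or_nonempty
      (Set.range fun D : StanleyDecomposition K I' => D.sdepth) with hemp | hne
  · rw [Ideal.sdepth, hemp, csSup_empty]
    exact Nat.zero_le _
  refine csSup_le hne ?_
  rintro _ ⟨D', rfl⟩
  -- from the decomposition of I', read off the partition of exponents
  have hsup : suppIn K (upSet G') = ⨆ i, suppIn K (box (D'.u i) (D'.Z i)) := by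
    rw [← hI', D'.isSup]
    simp only [stanleySpace_eq_suppIn]
  have hB' : upSet G' = ⋃ i, box (D'.u i) (D'.Z i) :=
    suppIn_injective (K := K) (by rw [hsup, ← suppIn_iUnion])
  -- eligible indices
  set P : Fin D'.r → Prop := fun i =>
    D'.u i (Fin.last n) ≤ 1 ∧ (D'.u i (Fin.last n) = 1 ∨ Fin.last n ∈ D'.Z i) with hP
  set elig : Finset (Fin D'.r) := Finset.filter P Finset.univ with helig
  have hpre : ∀ i : Fin D'.r, ¬ P i → emb ⁻¹' box (D'.u i) (D'.Z i) = ∅ := fun i hi =>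
    emb_preimage_box_ineligible _ _ hi
  have hnelig : elig.Nonempty := by
    have hmem : emb w ∈ upSet G' := ⟨emb w, Set.mem_insert _ _, le_refl _⟩
    rw [hB'] at hmem
    obtain ⟨_, ⟨i, rfl⟩, hi⟩ := hmem
    refine ⟨i, Finset.mem_filter.mpr ⟨Finset.mem_univ _, ?_⟩⟩
    by_contra hni
    have : (w : Fin n →₀ ℕ) ∈ emb ⁻¹' box (D'.u i) (D'.Z i) := hi
    rw [hpre i hni] at this
    exact this
  -- the induced decomposition of I
  set r' : ℕ := elig.card with hr'
  have hr'pos : 0 < r' := Finset.card_pos.mpr hnelig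
  set e : Fin r' ≃ {x // x ∈ elig} := elig.equivFin.symm with he
  set u0 : Fin r' → (Fin n →₀ ℕ) := fun k => res (D'.u (e k)) with hu0
  set Z0 : Fin r' → Finset (Fin n) :=
    fun k => Finset.filter (fun j : Fin n => j.castSucc ∈ D'.Z (e k)) Finset.univ with hZ0
  have hPe : ∀ k : Fin r', P (e k) := fun k => (Finset.mem_filter.mp (e k).2).2
  have hbox : ∀ k : Fin r',
      emb ⁻¹' box (D'.u (e k)) (D'.Z (e k)) = box (u0 k) (Z0 k) := fun k =>
    emb_preimage_box_eligible _ _ (hPe k).1 (hPe k).2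
  have hBnew : upSet (Set.range v) = ⋃ k : Fin r', box (u0 k) (Z0 k) := by
    rw [← hrange, ← emb_preimage_upSet, ← hG', hB', Set.preimage_iUnion]
    apply le_antisymm
    · refine Set.iUnion_subset fun i => ?_
      by_cases hi : P i
      · have hie : i ∈ elig := Finset.mem_filter.mpr ⟨Finset.mem_univ _, hi⟩
        have : emb ⁻¹' box (D'.u i) (D'.Z i) = box (u0 (e.symm ⟨i, hie⟩)) (Z0 (e.symm ⟨i, hie⟩)) := by
          rw [← hbox (e.symm ⟨i, hie⟩), Equiv.apply_symm_apply]
        rw [this]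
        exact Set.subset_iUnion (fun k => box (u0 k) (Z0 k)) _
      · rw [hpre i hi]
        exact Set.empty_subset _
    · refine Set.iUnion_subset fun k => ?_
      rw [← hbox k]
      exact Set.subset_iUnion (fun i => emb ⁻¹' box (D'.u i) (D'.Z i)) _
  -- pairwise disjointness of the original boxes
  have hdisj : ∀ i j : Fin D'.r, i ≠ j →
      Disjoint (box (D'.u i) (D'.Z i)) (box (D'.u j) (D'.Z j)) := by
    intro i j hij
    refine disjoint_sets_of_disjoint_suppIn (K := K) ?_
    have h1 := D'.indep i
    simp only [stanleySpace_eq_suppIn] at h1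
    refine h1.mono_right ?_
    exact le_iSup_of_le j (le_iSup_of_le (Ne.symm hij) le_rfl)
  have hdisj0 : ∀ k l : Fin r', k ≠ l → Disjoint (box (u0 k) (Z0 k)) (box (u0 l) (Z0 l)) := by
    intro k l hkl
    rw [← hbox k, ← hbox l]
    exact Disjoint.preimage _
      (hdisj (e k) (e l) fun h => hkl (e.injective (Subtype.ext h)))
  -- build the new Stanley decomposition of I
  set D : StanleyDecomposition K I :=
    { r := r'
      rpos := hr'pos
      u := u0
      Z := Z0
      mem := by
        intro k
        have h0 : monomial (D'.u (e k)) (1 : K) ∈ Submodule.restrictScalars K I' :=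
          D'.mem (e k)
        rw [hI'] at h0
        have h1 : (D'.u (e k)) ∈ upSet G' := monomial_mem_suppIn.mp h0
        have h2 : u0 k ∈ upSet (insert w T) := res_mem_upSet w T _ (hG' ▸ h1)
        have h3 : monomial (u0 k) (1 : K) ∈ Submodule.restrictScalars K I := by
          rw [hI]
          exact monomial_mem_suppIn.mpr (hrange ▸ h2)
        exact h3
      isSup := by
        rw [hI, hBnew, suppIn_iUnion]
        simp only [stanleySpace_eq_suppIn]
      indep := by
        intro k
        simp only [stanleySpace_eq_suppIn]
        have hle : (⨆ l, ⨆ (_ : l ≠ k), suppIn K (box (u0 l) (Z0 l)))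
            ≤ suppIn K (⋃ l : {l : Fin r' // l ≠ k}, box (u0 l) (Z0 l)) := by
          refine iSup₂_le fun l hl => ?_
          rw [suppIn_iUnion]
          exact le_iSup (fun l : {l : Fin r' // l ≠ k} => suppIn K (box (u0 l) (Z0 l)))
            ⟨l, hl⟩
        refine Disjoint.mono_right hle ?_
        refine disjoint_suppIn ?_
        rw [Set.disjoint_iUnion_right]
        rintro ⟨l, hl⟩
        exact hdisj0 k l (Ne.symm hl) } with hD
  -- compare the depths
  have hDle : D.sdepth ≤ Ideal.sdepth K I :=
    le_csSup hbdd ⟨D, rfl⟩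
  obtain ⟨k0, hk0mem, hk0⟩ := Finset.exists_mem_eq_inf' (s := (Finset.univ : Finset (Fin r')))
    ⟨⟨0, hr'pos⟩, Finset.mem_univ _⟩ (fun k => (Z0 k).card)
  have hstep : D'.sdepth ≤ D.sdepth + 1 := by
    have h1 : D'.sdepth ≤ (D'.Z (e k0)).card :=
      Finset.inf'_le _ (Finset.mem_univ (e k0 : Fin D'.r))
    have h2 : (D'.Z (e k0)).card ≤ (Z0 k0).card + 1 := card_filter_castSucc _
    have h3 : D.sdepth = (Z0 k0).card := hk0
    omega
  exact le_trans hstep (by omega)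
end

section
/- Let K be a field, S = K[x_1,…,x_n], and let I ⊆ S be a complete intersection monomial ideal minimally generated by m monomials (a regular sequence of monomials, equivalently monomials with pairwise disjoint supports). Then sdepth(I) ≥ 1 + n − m. -/
open MvPolynomial

namespace SDaux

variable {K : Type*} [Field K] {n m : ℕ}

/-- Span of a set of monomials, as a `K`-submodule. -/
noncomputable def MS (K : Type*) [Field K] (n : ℕ) (A : Set (Fin n →₀ ℕ)) :
    Submodule K (MvPolynomial (Fin n) K) :=
  Submodule.span K ((fun a => monomial a (1 : K)) '' A)

lemma stanley_set_eq (u : Fin n →₀ ℕ) (Z : Finset (Fin n)) :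
    {p : MvPolynomial (Fin n) K | ∃ τ : Fin n →₀ ℕ, (τ.support : Set (Fin n)) ⊆ Z ∧
      p = monomial (u + τ) (1 : K)}
    = (fun a => monomial a (1 : K)) '' {a | u ≤ a ∧ ∀ s ∉ Z, a s = u s} := by
  ext p
  constructor
  · rintro ⟨τ, hτ, rfl⟩
    refine ⟨u + τ, ⟨le_self_add, fun s hs => ?_⟩, rfl⟩
    have hτs : τ s = 0 := by
      by_contra h
      exact hs (hτ (Finsupp.mem_support_iff.2 h))
    simp [hτs]
  · rintro ⟨a, ⟨h1, h2⟩, rfl⟩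
    refine ⟨a - u, fun s hs => ?_, by rw [add_tsub_cancel_of_le h1]⟩
    simp only [Finset.mem_coe, Finsupp.mem_support_iff, Finsupp.tsub_apply] at hs
    by_contra hsz
    exact hs (by rw [h2 s hsz]; omega)

lemma stanleySpace_eq_MS (u : Fin n →₀ ℕ) (Z : Finset (Fin n)) :
    StanleySpace K u Z = MS K n {a | u ≤ a ∧ ∀ s ∉ Z, a s = u s} := by
  unfold StanleySpace MS
  rw [stanley_set_eq]

lemma smul_mem_MS {A : Set (Fin n →₀ ℕ)} (hA : ∀ a ∈ A, ∀ b, b + a ∈ A)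
    (q : MvPolynomial (Fin n) K) {x : MvPolynomial (Fin n) K} (hx : x ∈ MS K n A) :
    q • x ∈ MS K n A := by
  induction hx using Submodule.span_induction with
  | mem x hx =>
    obtain ⟨a, ha, rfl⟩ := hx
    induction q using MvPolynomial.induction_on' with
    | monomial d c =>
      have : (monomial d c : MvPolynomial (Fin n) K) • monomial a (1 : K)
          = c • monomial (d + a) (1 : K) := by
        rw [smul_eq_mul, monomial_mul, smul_monomial]
        simp
      rw [this]
      exact Submodule.smul_mem _ _ (Submodule.subset_span ⟨d + a, hA a ha d, rfl⟩)
    | add p q hp hq =>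
      rw [smul_eq_mul, add_mul]
      exact add_mem hp hq
  | zero => rw [smul_zero]; exact zero_mem _
  | add y z _ _ hy hz => rw [smul_add]; exact add_mem hy hz
  | smul c y _ hy =>
    rw [smul_comm]
    exact Submodule.smul_mem _ _ hy

lemma restrictScalars_span_monomials (v : Fin m → (Fin n →₀ ℕ)) :
    Submodule.restrictScalars K (Ideal.span (Set.range fun i => monomial (v i) (1 : K)))
      = MS K n {a | ∃ i, v i ≤ a} := by
  apply le_antisymm
  · intro p hp
    rw [Submodule.restrictScalars_mem] at hp
    induction hp using Submodule.span_induction with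
    | mem x hx =>
      obtain ⟨i, rfl⟩ := hx
      exact Submodule.subset_span ⟨v i, ⟨i, le_rfl⟩, rfl⟩
    | zero => exact zero_mem _
    | add _ _ _ _ h1 h2 => exact add_mem h1 h2
    | smul q x _ hx =>
      exact smul_mem_MS (fun a ha b => by obtain ⟨i, hi⟩ := ha; exact ⟨i, hi.trans le_add_self⟩)
        q hx
  · rw [MS, Submodule.span_le]
    rintro p ⟨a, ⟨i, hi⟩, rfl⟩
    simp only [SetLike.mem_coe, Submodule.restrictScalars_mem]
    have : (monomial a (1 : K) : MvPolynomial (Fin n) K)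
        = monomial (a - v i) (1 : K) * monomial (v i) (1 : K) := by
      rw [monomial_mul, one_mul, tsub_add_cancel_of_le hi]
    rw [this]
    exact Ideal.mul_mem_left _ _ (Ideal.subset_span ⟨i, rfl⟩)

lemma MS_iUnion {ι : Sort*} (A : ι → Set (Fin n →₀ ℕ)) :
    MS K n (⋃ i, A i) = ⨆ i, MS K n (A i) := by
  unfold MS
  rw [Set.image_iUnion, Submodule.span_iUnion]

lemma iSupIndep_MS {ι : Type*} {A : ι → Set (Fin n →₀ ℕ)}
    (h : Pairwise (Function.onFun Disjoint A)) :
    iSupIndep fun i => MS K n (A i) := by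
  have hli : LinearIndependent K (fun a : Fin n →₀ ℕ => monomial a (1 : K)) := by
    have := (MvPolynomial.basisMonomials (Fin n) K).linearIndependent
    rwa [MvPolynomial.coe_basisMonomials] at this
  rw [iSupIndep_def]
  intro i
  have heq : (⨆ j, ⨆ _ : j ≠ i, MS K n (A j)) = MS K n (⋃ j, ⋃ _ : j ≠ i, A j) := by
    rw [MS_iUnion]
    congr 1
    funext j
    exact (MS_iUnion _).symm
  rw [heq]
  apply hli.disjoint_span_image
  rw [Set.disjoint_iUnion_right]
  intro j
  rw [Set.disjoint_iUnion_right]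
  intro hji
  exact h (Ne.symm hji)

variable {v : Fin m → (Fin n →₀ ℕ)}

abbrev emb (i : Fin m) (j : Fin (i : ℕ)) : Fin m := Fin.castLE i.isLt.le j

lemma emb_ne (i : Fin m) (j : Fin (i : ℕ)) : emb i j ≠ i := by
  intro h
  have h1 : ((emb i j : Fin m) : ℕ) = (j : ℕ) := rfl
  have h2 := j.isLt
  rw [h] at h1
  omega

abbrev Choice (v : Fin m → (Fin n →₀ ℕ)) (i : Fin m) : Type :=
  (j : Fin (i : ℕ)) → Σ t : Fin n, Fin (v (emb i j) t)

abbrev Idx (v : Fin m → (Fin n →₀ ℕ)) : Type := Σ i : Fin m, Choice v i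

example : Fintype (Idx v) := inferInstance

def tOf {i : Fin m} (f : Choice v i) (j : Fin (i : ℕ)) : Fin n := (f j).1

def cOf {i : Fin m} (f : Choice v i) (j : Fin (i : ℕ)) : ℕ := ((f j).2 : ℕ)

lemma cOf_lt {i : Fin m} (f : Choice v i) (j : Fin (i : ℕ)) :
    cOf f j < v (emb i j) (tOf f j) := (f j).2.isLt

lemma tOf_mem_support {i : Fin m} (f : Choice v i) (j : Fin (i : ℕ)) :
    tOf f j ∈ (v (emb i j)).support := by
  rw [Finsupp.mem_support_iff]
  have := cOf_lt f j
  omega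

/-- In supports-disjoint situation: membership in one support excludes others. -/
lemma not_mem_support (hdisj : ∀ i j, i ≠ j → Disjoint (v i).support (v j).support)
    {i j : Fin m} (hne : i ≠ j) {s : Fin n} (h : s ∈ (v i).support) :
    s ∉ (v j).support :=
  fun h2 => (Finset.disjoint_left.1 (hdisj i j hne) h) h2

def T {i : Fin m} (f : Choice v i) (j : Fin (i : ℕ)) (s : Fin n) : ℕ :=
  if s = tOf f j then cOf f j else if s < tOf f j then v (emb i j) s else 0

lemma T_ne_zero {i : Fin m} {f : Choice v i} {j : Fin (i : ℕ)} {s : Fin n}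
    (h : T f j s ≠ 0) : s ∈ (v (emb i j)).support := by
  unfold T at h
  split_ifs at h with h1 h2
  · rw [h1]; exact tOf_mem_support f j
  · exact Finsupp.mem_support_iff.2 h
  · exact absurd rfl h

def wFun {i : Fin m} (f : Choice v i) (s : Fin n) : ℕ :=
  v i s + ∑ j : Fin (i : ℕ), T f j s

noncomputable def uOf (x : Idx v) : Fin n →₀ ℕ := Finsupp.equivFunOnFinite.symm (wFun x.2)

lemma uOf_apply (x : Idx v) (s : Fin n) : uOf x s = wFun x.2 s := rfl

def ZOf (x : Idx v) : Finset (Fin n) :=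
  Finset.univ \ Finset.image (tOf x.2) Finset.univ

def Bset (x : Idx v) : Set (Fin n →₀ ℕ) :=
  {a | uOf x ≤ a ∧ ∀ s ∉ ZOf x, a s = uOf x s}

lemma w_at_t (hdisj : ∀ i j, i ≠ j → Disjoint (v i).support (v j).support)
    {i : Fin m} (f : Choice v i) (j : Fin (i : ℕ)) :
    wFun f (tOf f j) = cOf f j := by
  unfold wFun
  have h0 : v i (tOf f j) = 0 := by
    rw [← Finsupp.notMem_support_iff]
    exact not_mem_support hdisj (emb_ne i j) (tOf_mem_support f j)
  rw [h0, zero_add]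
  rw [Finset.sum_eq_single j]
  · unfold T; rw [if_pos rfl]
  · intro j2 _ hne
    by_contra h
    have hs2 := T_ne_zero h
    have hne' : emb i j2 ≠ emb i j := fun he => hne (Fin.castLE_injective _ he)
    exact (not_mem_support hdisj hne' hs2) (tOf_mem_support f j)
  · intro h; exact absurd (Finset.mem_univ j) h

lemma T_le_w {i : Fin m} (f : Choice v i) (j : Fin (i : ℕ)) (s : Fin n) :
    T f j s ≤ wFun f s := by
  unfold wFun
  have : T f j s ≤ ∑ j' : Fin (i : ℕ), T f j' s :=
    Finset.single_le_sum (f := fun j' => T f j' s) (fun _ _ => Nat.zero_le _) (Finset.mem_univ j)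
  omega

lemma v_le_w {i : Fin m} (f : Choice v i) (s : Fin n) : v i s ≤ wFun f s :=
  Nat.le_add_right _ _

lemma w_le (hdisj : ∀ i j, i ≠ j → Disjoint (v i).support (v j).support)
    {i : Fin m} (f : Choice v i) (a : Fin n →₀ ℕ) (h1 : ∀ s, v i s ≤ a s)
    (h2 : ∀ j, a (tOf f j) = cOf f j ∧ ∀ s, s < tOf f j → v (emb i j) s ≤ a s)
    (s : Fin n) : wFun f s ≤ a s := by
  unfold wFun
  have hTle : ∀ j, T f j s ≤ a s := by
    intro j
    unfold T
    split_ifs with ht hlt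
    · rw [ht]; exact le_of_eq (h2 j).1.symm
    · exact (h2 j).2 s hlt
    · exact Nat.zero_le _
  by_cases hvi : v i s = 0
  · rw [hvi, zero_add]
    by_cases hT : ∀ j, T f j s = 0
    · rw [Finset.sum_eq_zero (fun j _ => hT j)]; exact Nat.zero_le _
    · push_neg at hT
      obtain ⟨j0, hj0⟩ := hT
      rw [Finset.sum_eq_single j0]
      · exact hTle j0
      · intro j2 _ hne
        by_contra hc
        have hne' : emb i j2 ≠ emb i j0 := fun he => hne (Fin.castLE_injective _ he)
        exact (not_mem_support hdisj hne' (T_ne_zero hc)) (T_ne_zero hj0)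
      · intro h; exact absurd (Finset.mem_univ j0) h
  · have hs : s ∈ (v i).support := Finsupp.mem_support_iff.2 hvi
    have : ∀ j, T f j s = 0 := by
      intro j
      by_contra hc
      exact (not_mem_support hdisj (emb_ne i j) (T_ne_zero hc)) hs
    rw [Finset.sum_eq_zero (fun j _ => this j), add_zero]
    exact h1 s

lemma mem_Bset_iff (hdisj : ∀ i j, i ≠ j → Disjoint (v i).support (v j).support)
    (x : Idx v) (a : Fin n →₀ ℕ) :
    a ∈ Bset x ↔ (∀ s, v x.1 s ≤ a s) ∧
      ∀ j, a (tOf x.2 j) = cOf x.2 j ∧ ∀ s, s < tOf x.2 j → v (emb x.1 j) s ≤ a s := by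
  obtain ⟨i, f⟩ := x
  constructor
  · rintro ⟨hle, hz⟩
    have hle' : ∀ s, wFun f s ≤ a s := fun s => by
      have := Finsupp.le_def.1 hle s; rwa [uOf_apply] at this
    refine ⟨fun s => le_trans (v_le_w f s) (hle' s), fun j => ?_⟩
    have htz : tOf f j ∉ ZOf ⟨i, f⟩ := by
      unfold ZOf
      simp only [Finset.mem_sdiff, Finset.mem_univ, Finset.mem_image, true_and, not_not,
        not_forall, not_and]
      exact ⟨j, rfl⟩
    refine ⟨by rw [hz _ htz, uOf_apply, w_at_t hdisj f j], fun s hs => ?_⟩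
    have : T f j s = v (emb i j) s := by
      unfold T
      rw [if_neg (by intro h; rw [h] at hs; exact lt_irrefl _ hs), if_pos hs]
    calc v (emb i j) s = T f j s := this.symm
      _ ≤ wFun f s := T_le_w f j s
      _ ≤ a s := hle' s
  · rintro ⟨h1, h2⟩
    refine ⟨Finsupp.le_def.2 (fun s => ?_), fun s hs => ?_⟩
    · rw [uOf_apply]; exact w_le hdisj f a h1 h2 s
    · unfold ZOf at hs
      simp only [Finset.mem_sdiff, Finset.mem_univ, Finset.mem_image, true_and, not_not,
        not_forall, not_and] at hs
      obtain ⟨j, rfl⟩ := hs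
      rw [uOf_apply, w_at_t hdisj f j]
      exact (h2 j).1

lemma exists_mem_Bset (hdisj : ∀ i j, i ≠ j → Disjoint (v i).support (v j).support)
    (a : Fin n →₀ ℕ) (ha : ∃ i, v i ≤ a) : ∃ x : Idx v, a ∈ Bset x := by
  classical
  set Fi : Finset (Fin m) := Finset.univ.filter (fun i => v i ≤ a) with hFi
  have hFine : Fi.Nonempty := by
    obtain ⟨i, hi⟩ := ha
    exact ⟨i, by simp [hFi, hi]⟩
  set i0 := Fi.min' hFine with hi0
  have hi0mem : v i0 ≤ a := (Finset.mem_filter.1 (Fi.min'_mem hFine)).2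
  have hlt : ∀ j : Fin m, (j : ℕ) < (i0 : ℕ) → ¬ v j ≤ a := by
    intro j hj hja
    have : i0 ≤ j := Fi.min'_le j (by simp [hFi, hja])
    have : (i0 : ℕ) ≤ (j : ℕ) := this
    omega
  -- for each j < i0 pick the least coordinate where a fails v j
  have hch : ∀ j : Fin (i0 : ℕ), ∃ t : Fin n, a t < v (emb i0 j) t := by
    intro j
    have := hlt (emb i0 j) (j.isLt) 
    rw [Finsupp.le_def] at this
    push_neg at this
    obtain ⟨t, ht⟩ := this
    exact ⟨t, ht⟩
  set FT : Fin (i0 : ℕ) → Finset (Fin n) :=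
    fun j => Finset.univ.filter (fun t => a t < v (emb i0 j) t) with hFT
  have hFTne : ∀ j, (FT j).Nonempty := by
    intro j
    obtain ⟨t, ht⟩ := hch j
    exact ⟨t, by simp [hFT, ht]⟩
  set f : Choice v i0 := fun j =>
    ⟨(FT j).min' (hFTne j), ⟨a ((FT j).min' (hFTne j)),
      (Finset.mem_filter.1 ((FT j).min'_mem (hFTne j))).2⟩⟩ with hf
  refine ⟨⟨i0, f⟩, (mem_Bset_iff hdisj ⟨i0, f⟩ a).2 ⟨Finsupp.le_def.1 hi0mem, fun j => ?_⟩⟩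
  constructor
  · rfl
  · intro s hs
    by_contra hc
    push_neg at hc
    have hmem : s ∈ FT j := by simp [hFT, hc]
    have := (FT j).min'_le s hmem
    have hts : tOf f j = (FT j).min' (hFTne j) := rfl
    rw [hts] at hs
    exact absurd hs (not_lt.2 this)

lemma bset_disjoint (hdisj : ∀ i j, i ≠ j → Disjoint (v i).support (v j).support) :
    Pairwise (Function.onFun Disjoint (Bset (v := v))) := by
  intro x y hxy
  rw [Function.onFun, Set.disjoint_left]
  intro a hax hay
  apply hxy
  obtain ⟨i1, f1⟩ := x
  obtain ⟨i2, f2⟩ := y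
  rw [mem_Bset_iff hdisj] at hax hay
  obtain ⟨hv1, hq1⟩ := hax
  obtain ⟨hv2, hq2⟩ := hay
  dsimp only at hv1 hq1 hv2 hq2
  -- first, i1 = i2
  have hii : i1 = i2 := by
    by_contra hne
    rcases Fin.lt_or_lt_of_ne hne with h | h
    · -- i1 < i2 : j := i1 viewed in Fin i2
      have hj : (⟨(i1 : ℕ), h⟩ : Fin (i2 : ℕ)) = ⟨(i1 : ℕ), h⟩ := rfl
      set j : Fin (i2 : ℕ) := ⟨(i1 : ℕ), h⟩
      have hemb : emb i2 j = i1 := Fin.ext rfl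
      obtain ⟨hc, _⟩ := hq2 j
      have h2 := cOf_lt f2 j
      rw [hemb] at h2
      have := hv1 (tOf f2 j)
      omega
    · have hj : (⟨(i2 : ℕ), h⟩ : Fin (i1 : ℕ)) = ⟨(i2 : ℕ), h⟩ := rfl
      set j : Fin (i1 : ℕ) := ⟨(i2 : ℕ), h⟩
      have hemb : emb i1 j = i2 := Fin.ext rfl
      obtain ⟨hc, _⟩ := hq1 j
      have h2 := cOf_lt f1 j
      rw [hemb] at h2
      have := hv2 (tOf f1 j)
      omega
  subst hii
  -- now f1 = f2
  have hff : f1 = f2 := by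
    funext j
    have htt : tOf f1 j = tOf f2 j := by
      by_contra hne
      rcases lt_or_gt_of_ne hne with h | h
      · have := (hq2 j).2 _ h
        obtain ⟨hc1, _⟩ := hq1 j
        have := cOf_lt f1 j
        omega
      · have := (hq1 j).2 _ h
        obtain ⟨hc2, _⟩ := hq2 j
        have := cOf_lt f2 j
        omega
    -- sigma ext
    have hcc : cOf f1 j = cOf f2 j := by
      rw [← (hq1 j).1, ← (hq2 j).1, htt]
    unfold tOf at htt
    unfold cOf at hcc
    exact Sigma.ext htt ((Fin.heq_ext_iff (by rw [htt])).2 hcc)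
  rw [hff]

lemma bset_cover (hdisj : ∀ i j, i ≠ j → Disjoint (v i).support (v j).support) :
    (⋃ x : Idx v, Bset x) = {a | ∃ i, v i ≤ a} := by
  ext a
  simp only [Set.mem_iUnion, Set.mem_setOf_eq]
  constructor
  · rintro ⟨x, hx⟩
    rw [mem_Bset_iff hdisj] at hx
    exact ⟨x.1, Finsupp.le_def.2 hx.1⟩
  · exact exists_mem_Bset hdisj a

lemma stanleySpace_uZ (hdisj : ∀ i j, i ≠ j → Disjoint (v i).support (v j).support)
    (x : Idx v) :
    StanleySpace K (uOf x) (ZOf x) = MS K n (Bset x) := by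
  rw [stanleySpace_eq_MS]
  rfl

lemma uOf_eq_add (x : Idx v) :
    uOf x = Finsupp.equivFunOnFinite.symm (fun s => ∑ j : Fin (x.1 : ℕ), T x.2 j s)
      + v x.1 := by
  ext s
  rw [Finsupp.add_apply, uOf_apply]
  unfold wFun
  have : (Finsupp.equivFunOnFinite.symm (fun s => ∑ j : Fin (x.1 : ℕ), T x.2 j s)) s
      = ∑ j : Fin (x.1 : ℕ), T x.2 j s := rfl
  rw [this]
  omega

lemma card_ZOf (hdisj : ∀ i j, i ≠ j → Disjoint (v i).support (v j).support)
    (x : Idx v) : (ZOf x).card = n - (x.1 : ℕ) := by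
  have hinj : Function.Injective (tOf x.2) := by
    intro j1 j2 h
    by_contra hne
    have hne' : emb x.1 j1 ≠ emb x.1 j2 := fun he => hne (Fin.castLE_injective _ he)
    exact (not_mem_support hdisj hne' (tOf_mem_support x.2 j1))
      (h ▸ tOf_mem_support x.2 j2)
  unfold ZOf
  rw [Finset.card_sdiff_of_subset (Finset.subset_univ _), Finset.card_image_of_injective _ hinj]
  simp

end SDaux

/-- If `I ⊆ K[x₁,…,xₙ]` is a complete intersection monomial ideal minimally generated
by `m` monomials (nonconstant monomials with pairwise disjoint supports), then
`sdepth I ≥ 1 + n - m`. -/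


theorem sdepth_ci_lower_bound (n : ℕ) (K : Type*) [Field K]
    (m : ℕ) (hm : 0 < m) (v : Fin m → (Fin n →₀ ℕ)) (hv : ∀ i, v i ≠ 0)
    (hdisj : ∀ i j, i ≠ j → Disjoint (v i).support (v j).support) :
    1 + n - m ≤
      Ideal.sdepth K (Ideal.span (Set.range fun i => monomial (v i) (1 : K))) := by
  classical
  haveI : Nonempty (SDaux.Idx v) := ⟨⟨⟨0, hm⟩, fun j => j.elim0⟩⟩
  set I : Ideal (MvPolynomial (Fin n) K) :=
    Ideal.span (Set.range fun i => monomial (v i) (1 : K)) with hI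
  let e := (Fintype.equivFin (SDaux.Idx v)).symm
  let D : StanleyDecomposition K I :=
    { r := Fintype.card (SDaux.Idx v)
      rpos := Fintype.card_pos
      u := fun i => SDaux.uOf (e i)
      Z := fun i => SDaux.ZOf (e i)
      mem := by
        intro i
        show monomial (SDaux.uOf (e i)) (1 : K) ∈ I
        rw [SDaux.uOf_eq_add, ← one_mul (1 : K), ← monomial_mul]
        exact Ideal.mul_mem_left _ _ (Ideal.subset_span ⟨(e i).1, rfl⟩)
      isSup := by
        rw [hI, SDaux.restrictScalars_span_monomials v, ← SDaux.bset_cover hdisj,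
          SDaux.MS_iUnion,
          ← Equiv.iSup_comp (e := e) (g := fun x => SDaux.MS K n (SDaux.Bset x))]
        exact (iSup_congr fun i =>
          (SDaux.stanleySpace_uZ (K := K) hdisj (e i) : _)).symm
      indep := by
        have h1 := SDaux.iSupIndep_MS (K := K) (SDaux.bset_disjoint (v := v) hdisj)
        have h2 := h1.comp e.injective
        have h3 : (fun i => StanleySpace K (SDaux.uOf (e i)) (SDaux.ZOf (e i)))
            = (fun x => SDaux.MS K n (SDaux.Bset x)) ∘ e :=
          funext fun i => SDaux.stanleySpace_uZ (K := K) hdisj (e i)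
        rw [h3]
        exact h2 }
  have hbdd : BddAbove (Set.range fun D' : StanleyDecomposition K I => D'.sdepth) := by
    refine ⟨n, ?_⟩
    rintro x ⟨D', rfl⟩
    refine le_trans (Finset.inf'_le _ (Finset.mem_univ ⟨0, D'.rpos⟩)) ?_
    exact le_trans (Finset.card_le_univ _) (by simp)
  have hmem : D.sdepth ∈ Set.range (fun D' : StanleyDecomposition K I => D'.sdepth) :=
    ⟨D, rfl⟩
  refine le_trans ?_ (le_csSup hbdd hmem)
  apply Finset.le_inf'
  intro b _
  show 1 + n - m ≤ (SDaux.ZOf (e b)).card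
  rw [SDaux.card_ZOf hdisj]
  have h1 := (e b).1.isLt
  have h2 : ((e b).1 : ℕ) ≤ n := by
    by_contra hc
    push_neg at hc
    -- there are (e b).1-many distinct elements t_j of Fin n
    have hinj : Function.Injective (SDaux.tOf (e b).2) := by
      intro j1 j2 h
      by_contra hne
      have hne' : SDaux.emb (e b).1 j1 ≠ SDaux.emb (e b).1 j2 :=
        fun he => hne (Fin.castLE_injective _ he)
      exact (SDaux.not_mem_support hdisj hne' (SDaux.tOf_mem_support (e b).2 j1))
        (h ▸ SDaux.tOf_mem_support (e b).2 j2)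
    have := Fintype.card_le_of_injective _ hinj
    simp at this
    omega
  omega
end

section
/- Let K be a field, S = K[x_1,…,x_n], and let I ⊆ S be a complete intersection monomial ideal minimally generated by m monomials (a regular sequence of monomials, equivalently monomials with pairwise disjoint supports). Then sdepth(I) ≤ ⌈m/2⌉ + n − m. -/
open MvPolynomial

/-- The submodule of polynomials whose coefficients vanish outside `T`. -/
def coeffVanish (K : Type*) [Field K] {n : ℕ} (T : Set (Fin n →₀ ℕ)) :
    Submodule K (MvPolynomial (Fin n) K) where
  carrier := {p | ∀ b ∉ T, coeff b p = 0}
  add_mem' := fun {p q} hp hq b hb => by simp [coeff_add, hp b hb, hq b hb]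
  zero_mem' := fun b _ => by simp
  smul_mem' := fun c p hp b hb => by simp [coeff_smul, hp b hb]

lemma stanleySpace_le_coeffVanish {K : Type*} [Field K] {n : ℕ}
    (u : Fin n →₀ ℕ) (Z : Finset (Fin n)) {T : Set (Fin n →₀ ℕ)}
    (hT : ∀ τ : Fin n →₀ ℕ, (τ.support : Set (Fin n)) ⊆ Z → u + τ ∈ T) :
    StanleySpace K u Z ≤ coeffVanish K T := by
  apply Submodule.span_le.2
  rintro p ⟨τ, hτ, rfl⟩ b hb
  show coeff b (monomial (u + τ) (1:K)) = 0
  rw [coeff_monomial]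
  split
  · next h => exact absurd (h ▸ hT τ hτ) hb
  · rfl

lemma mem_stanleySpace {K : Type*} [Field K] {n : ℕ}
    (u : Fin n →₀ ℕ) (Z : Finset (Fin n)) (τ : Fin n →₀ ℕ)
    (hτ : (τ.support : Set (Fin n)) ⊆ Z) :
    monomial (u + τ) (1 : K) ∈ StanleySpace K u Z :=
  Submodule.subset_span ⟨τ, hτ, rfl⟩

/-- If `I ⊆ K[x₁,…,xₙ]` is a complete intersection monomial ideal minimally generated
by `m` monomials (nonconstant monomials with pairwise disjoint supports), then
`sdepth I ≤ ⌈m/2⌉ + n - m`. -/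
theorem sdepth_ci_upper_bound (n : ℕ) (K : Type*) [Field K]
    (m : ℕ) (hm : 0 < m) (v : Fin m → (Fin n →₀ ℕ)) (hv : ∀ i, v i ≠ 0)
    (hdisj : ∀ i j, i ≠ j → Disjoint (v i).support (v j).support) :
    Ideal.sdepth K (Ideal.span (Set.range fun i => monomial (v i) (1 : K))) ≤
      (m + 1) / 2 + (n - m) := by
  classical
  set I : Ideal (MvPolynomial (Fin n) K) :=
    Ideal.span (Set.range fun i => monomial (v i) (1 : K)) with hIdef
  unfold Ideal.sdepth
  refine csSup_le' ?_
  rintro a ⟨D, rfl⟩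
  -- the exponent intervals
  set A : Fin D.r → (Fin n →₀ ℕ) → Prop :=
    fun i a => ∃ τ : Fin n →₀ ℕ, (τ.support : Set (Fin n)) ⊆ (D.Z i) ∧ a = D.u i + τ with hA
  -- monomials above a generator belong to I
  have memE : ∀ (a : Fin n →₀ ℕ) (j : Fin m), v j ≤ a → monomial a (1:K) ∈ I := by
    intro a j hja
    have he : monomial a (1:K) = monomial (a - v j) 1 * monomial (v j) 1 := by
      rw [monomial_mul, one_mul, tsub_add_cancel_of_le hja]
    rw [he]
    exact Ideal.mul_mem_left _ _ (Ideal.subset_span ⟨j, rfl⟩)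
  -- converse: monomials of I lie above a generator
  have vE : ∀ a : Fin n →₀ ℕ, monomial a (1:K) ∈ I → ∃ j, v j ≤ a := by
    intro a ha
    have himg : (Set.range fun i => monomial (v i) (1 : K)) =
        (fun s => monomial s (1:K)) '' Set.range v := by
      ext p
      constructor
      · rintro ⟨i, rfl⟩; exact ⟨v i, ⟨i, rfl⟩, rfl⟩
      · rintro ⟨s, ⟨i, rfl⟩, rfl⟩; exact ⟨i, rfl⟩
    rw [hIdef, himg, mem_ideal_span_monomial_image] at ha
    have hmem : a ∈ (monomial a (1:K)).support := by
      rw [support_monomial]; simp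
    obtain ⟨si, ⟨j, rfl⟩, hle⟩ := ha a hmem
    exact ⟨j, hle⟩
  -- each monomial of I lies in some interval
  have exI : ∀ a : Fin n →₀ ℕ, monomial a (1:K) ∈ I → ∃ i, A i a := by
    intro a ha
    have h1 : monomial a (1:K) ∈ ⨆ i, StanleySpace K (D.u i) (D.Z i) := by
      rw [← D.isSup]; exact ha
    have h2 : (⨆ i, StanleySpace K (D.u i) (D.Z i)) ≤
        coeffVanish K {a | ∃ i, A i a} :=
      iSup_le fun i => stanleySpace_le_coeffVanish _ _ fun τ hτ => ⟨i, τ, hτ, rfl⟩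
    by_contra hc
    have h3 := h2 h1 a hc
    rw [coeff_monomial, if_pos rfl] at h3
    exact one_ne_zero h3
  -- the intervals are pairwise disjoint
  have uniq : ∀ (i i' : Fin D.r), i ≠ i' → ∀ a, A i a → A i' a → False := by
    rintro i i' hii' a ⟨τ, hτ, rfl⟩ ⟨τ', hτ', he⟩
    have h1 := mem_stanleySpace (K := K) (D.u i) (D.Z i) τ hτ
    have h2 : monomial (D.u i + τ) (1:K) ∈ StanleySpace K (D.u i') (D.Z i') := by
      rw [he]; exact mem_stanleySpace _ _ τ' hτ'
    have h3 := Submodule.disjoint_def.mp (D.indep.pairwiseDisjoint hii') _ h1 h2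
    exact one_ne_zero (monomial_eq_zero.mp h3)
  -- each generator lies in an interval with bottom equal to it
  have hvj : ∀ j, ∃ i, A i (v j) := fun j => exI _ (memE _ j le_rfl)
  choose ifn hifn using hvj
  have vle : ∀ l j : Fin m, v l ≤ v j → l = j := by
    intro l j hle
    by_contra h
    have hsub := Finsupp.support_mono hle
    have hbot := (hdisj l j h).eq_bot_of_le hsub
    exact hv l (Finsupp.support_eq_empty.mp hbot)
  have vinj : ∀ j k : Fin m, j ≠ k → v j ≠ v k := by
    intro j k hjk he
    exact hjk (vle j k (le_of_eq he))
  have ubot : ∀ j, D.u (ifn j) = v j := by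
    intro j
    obtain ⟨τ, hτ, heq⟩ := hifn j
    have hle : D.u (ifn j) ≤ v j := heq ▸ le_self_add
    obtain ⟨l, hl⟩ := vE _ (D.mem (ifn j))
    have hlj : l = j := vle l j (hl.trans hle)
    subst hlj
    exact le_antisymm hle hl
  have ifninj : ∀ j k, j ≠ k → ifn j ≠ ifn k := by
    intro j k hjk he
    exact vinj j k hjk (by rw [← ubot j, ← ubot k, he])
  set C : Fin m → Finset (Fin m) :=
    fun j => Finset.univ.filter fun k => k ≠ j ∧ (v k).support ⊆ D.Z (ifn j) with hC
  have hCmem : ∀ j k, k ∈ C j ↔ (k ≠ j ∧ (v k).support ⊆ D.Z (ifn j)) := by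
    intro j k; simp [hC]
  have pairC : ∀ j k, k ∈ C j → A (ifn j) (v j + v k) := by
    intro j k hk
    rw [hCmem] at hk
    exact ⟨v k, Finset.coe_subset.mpr hk.2, by rw [ubot]⟩
  have antisym : ∀ j k, j ≠ k → k ∈ C j → j ∈ C k → False := by
    intro j k hjk hkj hjk'
    refine uniq (ifn j) (ifn k) (ifninj j k hjk) (v j + v k) (pairC j k hkj) ?_
    rw [add_comm]
    exact pairC k j hjk'
  -- counting : ∑ |C j| ≤ choose m 2
  have hsum : ∑ j, (C j).card ≤ m.choose 2 := by
    rw [← Finset.card_sigma]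
    have hle : ((Finset.univ : Finset (Fin m)).sigma C).card ≤
        ((Finset.univ : Finset (Fin m)).powersetCard 2).card := by
      apply Finset.card_le_card_of_injOn (fun p => ({p.1, p.2} : Finset (Fin m)))
      · rintro ⟨j, k⟩ hp
        rw [Finset.mem_coe, Finset.mem_sigma] at hp
        have hk := (hCmem j k).mp hp.2
        rw [Finset.mem_coe, Finset.mem_powersetCard]
        exact ⟨Finset.subset_univ _, Finset.card_pair (Ne.symm hk.1)⟩
      · rintro ⟨j, k⟩ hp ⟨j', k'⟩ hp' he
        simp only [Finset.coe_sigma, Set.mem_sigma_iff, Finset.mem_coe,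
          Finset.mem_univ, true_and] at hp hp'
        have hkj : k ≠ j := ((hCmem j k).mp hp).1
        have hkj' : k' ≠ j' := ((hCmem j' k').mp hp').1
        have he' : ({j, k} : Finset (Fin m)) = {j', k'} := he
        have hj : j = j' ∨ j = k' := by
          have hmem : j ∈ ({j', k'} : Finset (Fin m)) := by rw [← he']; simp
          simpa using hmem
        have hk2 : k = j' ∨ k = k' := by
          have hmem : k ∈ ({j', k'} : Finset (Fin m)) := by rw [← he']; simp
          simpa using hmem
        rcases hj with h1 | h1
        · rcases hk2 with h2 | h2
          · exact absurd (h2.trans h1.symm) hkj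
          · subst h1; subst h2; rfl
        · rcases hk2 with h2 | h2
          · rw [← h1, ← h2] at hp'
            exact (antisym j k (Ne.symm hkj) hp hp').elim
          · exact absurd (h2.trans h1.symm) hkj
    rwa [Finset.card_powersetCard, Finset.card_univ, Fintype.card_fin] at hle
  set t := (m - 1) / 2 with ht
  have hj0 : ∃ j0 : Fin m, (C j0).card ≤ t := by
    by_contra hc
    push_neg at hc
    have h1 : (Finset.univ : Finset (Fin m)).card • (t+1) ≤ ∑ j, (C j).card :=
      Finset.card_nsmul_le_sum _ _ _ fun j _ => hc j
    rw [Finset.card_univ, Fintype.card_fin, smul_eq_mul] at h1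
    have h2 : m * (t+1) ≤ m.choose 2 := le_trans h1 hsum
    obtain ⟨M, rfl⟩ : ∃ M, m = M + 1 := ⟨m - 1, by omega⟩
    have hkey : 2 * ((M+1).choose 2) = (M+1) * M := by
      rw [Nat.choose_two_right]
      have hev : 2 ∣ (M+1) * ((M+1) - 1) := by
        simp only [Nat.add_sub_cancel]
        rw [mul_comm]
        exact (Nat.even_mul_succ_self M).two_dvd
      rw [Nat.mul_div_cancel' hev]
      simp
    have h4 : (M+1) ≤ 2 * (t+1) := by omega
    have h5 : (M+1)*(M+1) ≤ (M+1)*(2*(t+1)) := Nat.mul_le_mul_left _ h4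
    have h6 : (M+1)*(2*(t+1)) = 2*((M+1)*(t+1)) := by ring
    have h7 : (M+1)*(M+1) ≤ (M+1)*M := by omega
    have h8 := Nat.le_of_mul_le_mul_left h7 (Nat.succ_pos M)
    omega
  obtain ⟨j0, hj0⟩ := hj0
  set Zs := D.Z (ifn j0) with hZs
  set Ds : Finset (Fin m) := Finset.univ.filter (fun k => k ≠ j0 ∧ k ∉ C j0) with hDs
  have hn0 : 0 < n := by
    obtain ⟨x, _⟩ := Finsupp.support_nonempty_iff.mpr (hv ⟨0, hm⟩)
    exact x.pos
  have hwit : ∀ k : Fin m, ∃ x : Fin n, k ∈ Ds → (x ∈ (v k).support ∧ x ∉ Zs) := by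
    intro k
    by_cases hk : k ∈ Ds
    · have hk' : ¬ (v k).support ⊆ Zs := by
        rw [hDs, Finset.mem_filter] at hk
        intro hsub
        exact hk.2.2 ((hCmem j0 k).mpr ⟨hk.2.1, hsub⟩)
      obtain ⟨x, hx1, hx2⟩ := Finset.not_subset.mp hk'
      exact ⟨x, fun _ => ⟨hx1, hx2⟩⟩
    · exact ⟨⟨0, hn0⟩, fun h => absurd h hk⟩
  choose g hg using hwit
  have ginj : Set.InjOn g Ds := by
    intro k hk k' hk' he
    by_contra hne
    have h1 := (hg k hk).1
    have h2 := (hg k' hk').1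
    rw [he] at h1
    exact (Finset.disjoint_left.mp (hdisj k' k (Ne.symm hne))) h2 h1
  have hcard : Zs.card + Ds.card ≤ n := by
    have hdisj2 : Disjoint Zs (Ds.image g) := by
      rw [Finset.disjoint_right]
      intro x hx
      obtain ⟨k, hk, rfl⟩ := Finset.mem_image.mp hx
      exact (hg k hk).2
    have hle := Finset.card_le_univ (Zs ∪ Ds.image g)
    rw [Finset.card_union_of_disjoint hdisj2, Finset.card_image_of_injOn ginj] at hle
    simpa [Fintype.card_fin] using hle
  have hj0C : j0 ∉ C j0 := fun h => ((hCmem j0 j0).mp h).1 rfl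
  have hDscard : Ds.card = m - 1 - (C j0).card := by
    have hDeq : Ds = Finset.univ \ insert j0 (C j0) := by
      ext k
      simp only [hDs, Finset.mem_filter, Finset.mem_univ, true_and, Finset.mem_sdiff,
        Finset.mem_insert]
      tauto
    rw [hDeq, Finset.card_sdiff_of_subset (Finset.subset_univ _),
      Finset.card_insert_of_notMem hj0C, Finset.card_univ, Fintype.card_fin]
    omega
  have hCle : (C j0).card ≤ m := by
    calc (C j0).card ≤ (Finset.univ : Finset (Fin m)).card := Finset.card_le_univ _
      _ = m := by rw [Finset.card_univ, Fintype.card_fin]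
  have hfinal : (D.Z (ifn j0)).card ≤ (m+1)/2 + (n - m) := by
    rw [← hZs]; omega
  calc D.sdepth ≤ (D.Z (ifn j0)).card :=
        Finset.inf'_le _ (Finset.mem_univ _)
    _ ≤ _ := hfinal
end

section
/- Let K be a field, S = K[x_1,…,x_n], and let I ⊆ S be a squarefree monomial ideal. If D: I = ⊕_{i=1}^r u_i K[Z_i] is a Stanley decomposition of I, then D': I = ⊕_{i : u_i squarefree} u_i K[Z_i ∪ supp(u_i)] is a squarefree Stanley decomposition of I, and sdepth(D') ≥ sdepth(D). -/
open MvPolynomial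

/-- The squarefree exponent vector of `x_F = ∏_{i ∈ F} x_i`. -/
noncomputable def sfVec {n : ℕ} (F : Finset (Fin n)) : Fin n →₀ ℕ :=
  Finsupp.indicator F fun _ _ => 1

section Aux
variable {K : Type*} [Field K] {n : ℕ}

/-- The set of monomials (with coefficient 1) whose exponents lie in `T`. -/
def monSet (K : Type*) [Field K] {n : ℕ} (T : Set (Fin n →₀ ℕ)) :
    Set (MvPolynomial (Fin n) K) :=
  {p | ∃ a ∈ T, p = monomial a (1 : K)}

lemma monSet_mono {T T' : Set (Fin n →₀ ℕ)} (h : T ⊆ T') : monSet K T ⊆ monSet K T' := by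
  rintro p ⟨a, ha, rfl⟩; exact ⟨a, h ha, rfl⟩

lemma monSet_iUnion {ι : Type*} (T : ι → Set (Fin n →₀ ℕ)) :
    monSet K (⋃ i, T i) = ⋃ i, monSet K (T i) := by
  ext p
  simp only [monSet, Set.mem_iUnion, Set.mem_setOf_eq]
  constructor
  · rintro ⟨a, ha, rfl⟩
    obtain ⟨i, hi⟩ := ha
    exact ⟨i, a, hi, rfl⟩
  · rintro ⟨i, a, ha, rfl⟩
    exact ⟨a, ⟨i, ha⟩, rfl⟩

lemma support_subset_of_mem_span {T : Set (Fin n →₀ ℕ)} {p : MvPolynomial (Fin n) K}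
    (hp : p ∈ Submodule.span K (monSet K T)) : (p.support : Set (Fin n →₀ ℕ)) ⊆ T := by
  induction hp using Submodule.span_induction with
  | mem q hq =>
    obtain ⟨a, ha, rfl⟩ := hq
    intro b hb
    have hb' := MvPolynomial.support_monomial_subset (Finset.mem_coe.1 hb)
    rw [Finset.mem_singleton] at hb'
    subst hb'; exact ha
  | zero => simp
  | add x y _ _ hx hy =>
    intro b hb
    rcases Finset.mem_union.1 (MvPolynomial.support_add (Finset.mem_coe.1 hb)) with h | h
    · exact hx h
    · exact hy h
  | smul c x _ hx =>
    intro b hb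
    exact hx (MvPolynomial.support_smul (Finset.mem_coe.1 hb))

/-- The exponent set of the Stanley space `u K[Z]`. -/
def stT (u : Fin n →₀ ℕ) (Z : Finset (Fin n)) : Set (Fin n →₀ ℕ) :=
  {a | ∃ τ : Fin n →₀ ℕ, (τ.support : Set (Fin n)) ⊆ Z ∧ a = u + τ}

lemma stanley_eq_span (u : Fin n →₀ ℕ) (Z : Finset (Fin n)) :
    StanleySpace K u Z = Submodule.span K (monSet K (stT u Z)) := by
  unfold StanleySpace monSet stT
  congr 1
  ext p
  constructor
  · rintro ⟨τ, hτ, rfl⟩; exact ⟨u + τ, ⟨τ, hτ, rfl⟩, rfl⟩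
  · rintro ⟨a, ⟨τ, hτ, rfl⟩, rfl⟩; exact ⟨τ, hτ, rfl⟩

lemma mem_stanley {u : Fin n →₀ ℕ} {Z : Finset (Fin n)} {a : Fin n →₀ ℕ}
    (h : a ∈ stT u Z) : monomial a (1 : K) ∈ StanleySpace K u Z := by
  rw [stanley_eq_span]; exact Submodule.subset_span ⟨a, h, rfl⟩

lemma sup_le_span {ι : Type*} (u : ι → (Fin n →₀ ℕ)) (Z : ι → Finset (Fin n)) :
    (⨆ i, StanleySpace K (u i) (Z i)) ≤
      Submodule.span K (monSet K (⋃ i, stT (u i) (Z i))) := by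
  refine iSup_le fun i => ?_
  rw [stanley_eq_span]
  exact Submodule.span_mono (monSet_mono (Set.subset_iUnion (fun i => stT (u i) (Z i)) i))

lemma sup_eq_span {ι : Type*} (u : ι → (Fin n →₀ ℕ)) (Z : ι → Finset (Fin n)) :
    (⨆ i, StanleySpace K (u i) (Z i)) =
      Submodule.span K (monSet K (⋃ i, stT (u i) (Z i))) := by
  rw [monSet_iUnion, Submodule.span_iUnion]
  exact iSup_congr fun i => stanley_eq_span _ _

lemma mem_of_monomial_mem_sup {ι : Type*} {u : ι → (Fin n →₀ ℕ)} {Z : ι → Finset (Fin n)}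
    {s : Fin n →₀ ℕ} (h : monomial s (1 : K) ∈ ⨆ i, StanleySpace K (u i) (Z i)) :
    ∃ i, s ∈ stT (u i) (Z i) := by
  have h2 := support_subset_of_mem_span (sup_le_span u Z h)
  have hs : s ∈ (monomial s (1 : K)).support := by
    rw [MvPolynomial.mem_support_iff, MvPolynomial.coeff_monomial, if_pos rfl]
    exact one_ne_zero
  have := h2 (Finset.mem_coe.2 hs)
  rwa [Set.mem_iUnion] at this

lemma sfVec_apply (F : Finset (Fin n)) (j : Fin n) :
    sfVec F j = if j ∈ F then 1 else 0 := by
  simp [sfVec, Finsupp.indicator_apply]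

lemma exists_le_of_mem_monomialIdeal {m : ℕ} {G : Fin m → Finset (Fin n)}
    {p : MvPolynomial (Fin n) K}
    (hp : p ∈ Ideal.span (Set.range fun i => monomial (sfVec (G i)) (1 : K))) :
    ∀ b ∈ p.support, ∃ i, sfVec (G i) ≤ b := by
  induction hp using Submodule.span_induction with
  | mem q hq =>
    obtain ⟨i, rfl⟩ := hq
    intro b hb
    have hb' := MvPolynomial.support_monomial_subset hb
    rw [Finset.mem_singleton] at hb'
    exact ⟨i, le_of_eq hb'.symm⟩
  | zero => simp
  | add x y _ _ hx hy =>
    intro b hb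
    rcases Finset.mem_union.1 (MvPolynomial.support_add hb) with h | h
    exacts [hx b h, hy b h]
  | smul r x _ hx =>
    intro b hb
    rw [smul_eq_mul] at hb
    obtain ⟨c, _, d, hd, rfl⟩ := Finset.mem_add.1 (MvPolynomial.support_mul _ _ hb)
    obtain ⟨i, hi⟩ := hx d hd
    exact ⟨i, hi.trans le_add_self⟩

end Aux

/-- If `I ⊆ K[x₁,…,xₙ]` is a squarefree monomial ideal and `D : I = ⊕ᵢ uᵢ K[Zᵢ]` is a
Stanley decomposition of `I`, then `D' : I = ⊕_{i : uᵢ squarefree} uᵢ K[Zᵢ ∪ supp uᵢ]`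
is a squarefree Stanley decomposition of `I` (the spaces span `I`, are independent and
squarefree) and `sdepth D' ≥ sdepth D`. -/
theorem squarefree_refinement (n : ℕ) (K : Type*) [Field K]
    (I : Ideal (MvPolynomial (Fin n) K))
    (m : ℕ) (G : Fin m → Finset (Fin n))
    (hI : I = Ideal.span (Set.range fun i => monomial (sfVec (G i)) (1 : K)))
    (D : StanleyDecomposition K I) :
    Submodule.restrictScalars K I =
      (⨆ i : {i : Fin D.r // ∀ j, D.u i j ≤ 1},
        StanleySpace K (D.u i) (D.Z i ∪ (D.u i).support)) ∧
    iSupIndep (fun i : {i : Fin D.r // ∀ j, D.u i j ≤ 1} =>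
      StanleySpace K (D.u i) (D.Z i ∪ (D.u i).support)) ∧
    (∀ i : {i : Fin D.r // ∀ j, D.u i j ≤ 1},
      (D.u i).support ⊆ D.Z i ∪ (D.u i).support) ∧
    (∀ i : {i : Fin D.r // ∀ j, D.u i j ≤ 1},
      D.sdepth ≤ (D.Z i ∪ (D.u i).support).card) := by
  classical
  have hgen_mem : ∀ i : Fin m, monomial (sfVec (G i)) (1 : K) ∈ I := fun i => by
    rw [hI]; exact Ideal.subset_span ⟨i, rfl⟩
  -- Step 1: every monomial of `I` lies in one of the refined (squarefree) Stanley spaces.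
  have hstep1 : ∀ a : Fin n →₀ ℕ, monomial a (1 : K) ∈ I →
      ∃ i : Fin D.r, (∀ j, D.u i j ≤ 1) ∧ a ∈ stT (D.u i) (D.Z i ∪ (D.u i).support) := by
    intro a ha
    set s := sfVec a.support with hs_def
    have hs_apply : ∀ x, s x = if a x = 0 then 0 else 1 := by
      intro x
      rw [hs_def, sfVec_apply]
      by_cases h : a x = 0 <;> simp [Finsupp.mem_support_iff, h]
    have hsI : monomial s (1 : K) ∈ I := by
      have ha' : a ∈ (monomial a (1 : K)).support := by
        rw [MvPolynomial.mem_support_iff, MvPolynomial.coeff_monomial, if_pos rfl]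
        exact one_ne_zero
      obtain ⟨i, hi⟩ := exists_le_of_mem_monomialIdeal (hI ▸ ha) a ha'
      have hle : sfVec (G i) ≤ s := by
        rw [Finsupp.le_def]
        intro x
        have h1 : sfVec (G i) x ≤ a x := (Finsupp.le_def.1 hi) x
        have h2 : sfVec (G i) x ≤ 1 := by rw [sfVec_apply]; split <;> omega
        rw [hs_apply]; split <;> omega
      have heq : monomial s (1 : K) =
          monomial (s - sfVec (G i)) (1 : K) * monomial (sfVec (G i)) (1 : K) := by
        rw [monomial_mul, one_mul, tsub_add_cancel_of_le hle]
      rw [heq]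
      exact Ideal.mul_mem_left _ _ (hgen_mem i)
    have hsup : monomial s (1 : K) ∈ ⨆ i, StanleySpace K (D.u i) (D.Z i) := by
      rw [← D.isSup]; exact hsI
    obtain ⟨i, τ, hτ, hsum⟩ := mem_of_monomial_mem_sup hsup
    have hsum_apply : ∀ x, s x = D.u i x + τ x := by
      intro x; rw [hsum]; simp [Finsupp.add_apply]
    have hsle1 : ∀ x, s x ≤ 1 := fun x => by rw [hs_apply]; split <;> omega
    have hsq : ∀ x, D.u i x ≤ 1 := fun x => by
      have := hsum_apply x; have := hsle1 x; omega
    have hua : D.u i ≤ a := by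
      rw [Finsupp.le_def]; intro x
      have h1 := hsum_apply x
      have h2 := hs_apply x
      split at h2 <;> omega
    refine ⟨i, hsq, a - D.u i, ?_, (add_tsub_cancel_of_le hua).symm⟩
    intro x hx
    rw [Finset.mem_coe, Finsupp.mem_support_iff, Finsupp.tsub_apply] at hx
    have hax : a x ≠ 0 := by omega
    have hsx : s x = 1 := by rw [hs_apply, if_neg hax]
    rw [Finset.mem_coe, Finset.mem_union]
    by_cases hux : D.u i x = 0
    · left
      have hτx : τ x ≠ 0 := by have := hsum_apply x; omega
      exact Finset.mem_coe.1 (hτ (Finset.mem_coe.2 (Finsupp.mem_support_iff.2 hτx)))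
    · right; exact Finsupp.mem_support_iff.2 hux
  set N := ⨆ i : {i : Fin D.r // ∀ j, D.u i j ≤ 1},
      StanleySpace K (D.u i) (D.Z i ∪ (D.u i).support) with hN
  have hmono : ∀ a : Fin n →₀ ℕ, monomial a (1 : K) ∈ I → monomial a (1 : K) ∈ N := by
    intro a ha
    obtain ⟨i, hsq, hmem⟩ := hstep1 a ha
    exact Submodule.mem_iSup_of_mem ⟨i, hsq⟩ (mem_stanley hmem)
  have hNle : N ≤ Submodule.restrictScalars K I := by
    rw [hN]
    refine iSup_le fun i => ?_
    rw [stanley_eq_span, Submodule.span_le]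
    rintro p ⟨a, ⟨τ, hτ, rfl⟩, rfl⟩
    rw [SetLike.mem_coe, Submodule.restrictScalars_mem]
    have heq : monomial (D.u i.1 + τ) (1 : K) = monomial τ 1 * monomial (D.u i.1) 1 := by
      rw [monomial_mul, one_mul, add_comm]
    rw [heq]
    exact Ideal.mul_mem_left _ _ (D.mem i.1)
  have hN_eq : N = Submodule.span K (monSet K
      (⋃ i : {i : Fin D.r // ∀ j, D.u i j ≤ 1}, stT (D.u i) (D.Z i ∪ (D.u i).support))) := by
    rw [hN]; exact sup_eq_span _ _
  have hmulN : ∀ (r : MvPolynomial (Fin n) K) (x), x ∈ N → r * x ∈ N := by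
    intro r x hx
    rw [hN_eq] at hx
    induction hx using Submodule.span_induction with
    | mem q hq =>
      obtain ⟨a, ha, rfl⟩ := hq
      have haI : monomial a (1 : K) ∈ I := by
        obtain ⟨i, τ, hτ, rfl⟩ := Set.mem_iUnion.1 ha
        have heq : monomial (D.u i.1 + τ) (1 : K) = monomial τ 1 * monomial (D.u i.1) 1 := by
          rw [monomial_mul, one_mul, add_comm]
        rw [heq]
        exact Ideal.mul_mem_left _ _ (D.mem i.1)
      nth_rewrite 1 [r.as_sum]
      rw [Finset.sum_mul]
      refine Submodule.sum_mem _ fun v hv => ?_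
      have heq : monomial v (coeff v r) * monomial a (1 : K)
          = (coeff v r) • monomial (v + a) (1 : K) := by
        rw [monomial_mul, mul_one, smul_monomial, smul_eq_mul, mul_one]
      rw [heq]
      refine Submodule.smul_mem _ _ (hmono (v + a) ?_)
      have heq2 : monomial (v + a) (1 : K) = monomial v 1 * monomial a 1 := by
        rw [monomial_mul, one_mul]
      rw [heq2]
      exact Ideal.mul_mem_left _ _ haI
    | zero => rw [mul_zero]; exact N.zero_mem
    | add x y _ _ hx hy => rw [mul_add]; exact N.add_mem hx hy
    | smul c x _ hx => rw [mul_smul_comm]; exact N.smul_mem c hx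
  have hIleN : Submodule.restrictScalars K I ≤ N := by
    intro p hp
    rw [Submodule.restrictScalars_mem, hI] at hp
    induction hp using Submodule.span_induction with
    | mem q hq => obtain ⟨i, rfl⟩ := hq; exact hmono _ (hgen_mem i)
    | zero => exact N.zero_mem
    | add x y _ _ hx hy => exact N.add_mem hx hy
    | smul r x _ hx => rw [smul_eq_mul]; exact hmulN r x hx
  -- exponent sets of distinct refined Stanley spaces are disjoint
  have hdisjT : ∀ i j : {i : Fin D.r // ∀ j, D.u i j ≤ 1}, (i : Fin D.r) ≠ (j : Fin D.r) →
      ∀ b, b ∈ stT (D.u i) (D.Z i ∪ (D.u i).support) →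
      b ∈ stT (D.u j) (D.Z j ∪ (D.u j).support) → False := by
    rintro i j hij b ⟨τ, hτ, hbi⟩ ⟨σ, hσ, hbj⟩
    set s := sfVec b.support with hs_def
    have hs_apply : ∀ x, s x = if b x = 0 then 0 else 1 := by
      intro x; rw [hs_def, sfVec_apply]
      by_cases h : b x = 0 <;> simp [Finsupp.mem_support_iff, h]
    have key : ∀ k : Fin D.r, (∀ x, D.u k x ≤ 1) → ∀ ρ : Fin n →₀ ℕ,
        (ρ.support : Set (Fin n)) ⊆ ↑(D.Z k ∪ (D.u k).support) → b = D.u k + ρ →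
        monomial s (1 : K) ∈ StanleySpace K (D.u k) (D.Z k) := by
      intro k hk ρ hρ hb
      apply mem_stanley
      have hb_apply : ∀ x, b x = D.u k x + ρ x := by
        intro x; rw [hb]; simp [Finsupp.add_apply]
      have hule : D.u k ≤ s := by
        rw [Finsupp.le_def]; intro x
        have h1 := hk x
        have h2 := hb_apply x
        rw [hs_apply]; split <;> omega
      refine ⟨s - D.u k, ?_, (add_tsub_cancel_of_le hule).symm⟩
      intro x hx
      rw [Finset.mem_coe, Finsupp.mem_support_iff, Finsupp.tsub_apply] at hx
      have hsx1 : s x ≤ 1 := by rw [hs_apply]; split <;> omega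
      have hux : D.u k x = 0 := by omega
      have hbx : b x ≠ 0 := by
        intro h0
        have h3 := hs_apply x
        rw [if_pos h0] at h3
        omega
      have hρx : ρ x ≠ 0 := by have := hb_apply x; omega
      have hx2 := hρ (Finset.mem_coe.2 (Finsupp.mem_support_iff.2 hρx))
      rw [Finset.mem_coe, Finset.mem_union] at hx2
      rcases hx2 with h | h
      · exact h
      · exact absurd hux (Finsupp.mem_support_iff.1 h)
    have hi' := key i i.2 τ hτ hbi
    have hj' := key j j.2 σ hσ hbj
    have hd : Disjoint (StanleySpace K (D.u i.1) (D.Z i.1))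
        (StanleySpace K (D.u j.1) (D.Z j.1)) := D.indep.pairwiseDisjoint hij
    have h0 := Submodule.disjoint_def.1 hd _ hi' hj'
    rw [MvPolynomial.monomial_eq_zero] at h0
    exact one_ne_zero h0
  refine ⟨le_antisymm hIleN hNle, ?_, fun i => Finset.subset_union_right, fun i => ?_⟩
  · intro i
    rw [Submodule.disjoint_def]
    intro x hxi hxrest
    by_contra hx0
    obtain ⟨b, hb⟩ : x.support.Nonempty :=
      Finset.nonempty_iff_ne_empty.2 fun h => hx0 (MvPolynomial.support_eq_empty.1 h)
    have hbi : b ∈ stT (D.u i) (D.Z i ∪ (D.u i).support) := by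
      have h1 : x ∈ Submodule.span K (monSet K (stT (D.u i) (D.Z i ∪ (D.u i).support))) := by
        rw [← stanley_eq_span]; exact hxi
      exact support_subset_of_mem_span h1 (Finset.mem_coe.2 hb)
    have hxrest' : x ∈ ⨆ j : {j : {i : Fin D.r // ∀ j, D.u i j ≤ 1} // j ≠ i},
        StanleySpace K (D.u j.1.1) (D.Z j.1.1 ∪ (D.u j.1.1).support) := by
      have hle : (⨆ (j) (_ : j ≠ i), StanleySpace K (D.u j) (D.Z j ∪ (D.u j).support)) ≤
          ⨆ j : {j : {i : Fin D.r // ∀ j, D.u i j ≤ 1} // j ≠ i},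
            StanleySpace K (D.u j.1.1) (D.Z j.1.1 ∪ (D.u j.1.1).support) := by
        refine iSup_le fun j => iSup_le fun hj => ?_
        exact le_iSup (fun j : {j : {i : Fin D.r // ∀ j, D.u i j ≤ 1} // j ≠ i} =>
          StanleySpace K (D.u j.1.1) (D.Z j.1.1 ∪ (D.u j.1.1).support)) ⟨j, hj⟩
      exact hle hxrest
    have h2 := support_subset_of_mem_span
      (sup_le_span (fun j : {j : {i : Fin D.r // ∀ j, D.u i j ≤ 1} // j ≠ i} => D.u j.1.1)
        (fun j => D.Z j.1.1 ∪ (D.u j.1.1).support) hxrest') (Finset.mem_coe.2 hb)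
    obtain ⟨⟨j, hji⟩, hbj⟩ := Set.mem_iUnion.1 h2
    exact hdisjT j i (fun h => hji (Subtype.ext h)) b hbj hbi
  · exact le_trans (Finset.inf'_le _ (Finset.mem_univ i.1))
      (Finset.card_le_card Finset.subset_union_left)
end
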